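/- arXiv:1405.2411 — 7 statements merged into one kernel-verified Lean document; each statement's English description precedes it below -/
import Mathlib

section
/- Define f(t) := (1/(2π)) ∫_{D₀} (1−|z|²)/|1−z·e^{it}|² ν₀(dz) for t ∈ [0,2π]. Then f is a nonnegative measurable function with ∫₀^{2π} f(t) dt < ∞, and for every integer n ≥ 0 one has ∫_D z^n ν(dz) = ∫₀^{2π} e^{int} f(t) dt + ∫_Γ w^n ν_Γ(dw). Equivalently, the finite measure F on [0,2π] given by the pushforward of ν_Γ under the parametrization e^{it} ↦ t plus the absolutely continuous part f(t) dt satisfies ∫₀^{2π} e^{int} F(dt) = ∫_D z^n ν(dz) for all integers n ≥ 0. -/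
open MeasureTheory Filter Topology Set

private lemma rl_exp_int (m : ℤ) :
    (∫ t in (0:ℝ)..(2*Real.pi), Complex.exp (Complex.I * m * t)) =
      if m = 0 then (2*Real.pi : ℂ) else 0 := by
  rcases eq_or_ne m 0 with h | h
  · subst h
    simp only [Int.cast_zero, mul_zero, zero_mul, Complex.exp_zero, if_pos rfl]
    rw [intervalIntegral.integral_const, sub_zero, Complex.real_smul]
    push_cast; ring
  · rw [if_neg h]
    have hc : (Complex.I * (m:ℂ)) ≠ 0 :=
      mul_ne_zero Complex.I_ne_zero (by exact_mod_cast h)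
    have h2 : ∀ t : ℝ, Complex.I * (m:ℂ) * (t:ℂ) = (Complex.I * (m:ℂ)) * (t:ℂ) := fun t => rfl
    rw [show (fun t : ℝ => Complex.exp (Complex.I * (m:ℂ) * (t:ℂ))) = fun t : ℝ => Complex.exp ((Complex.I * (m:ℂ)) * (t:ℂ)) from rfl]
    rw [integral_exp_mul_complex hc]
    have he : Complex.exp (Complex.I * (m:ℂ) * ((2*Real.pi : ℝ):ℂ)) = 1 := by
      rw [show (Complex.I * (m:ℂ) * ((2*Real.pi : ℝ):ℂ)) = (m:ℂ) * (2*(Real.pi:ℂ)*Complex.I) by push_cast; ring]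
      exact Complex.exp_int_mul_two_pi_mul_I m
    rw [he]
    simp

private lemma rl_exp_norm (c t : ℝ) : ‖Complex.exp (Complex.I * c * t)‖ = 1 := by
  rw [show Complex.I * (c:ℂ) * (t:ℂ) = ((c*t : ℝ):ℂ) * Complex.I by push_cast; ring]
  exact Complex.norm_exp_ofReal_mul_I _

private lemma rl_ne (z u : ℂ) (hz : ‖z‖ < 1) (hu : ‖u‖ = 1) :
    (1:ℂ) - z * u ≠ 0 := by
  intro h
  rw [sub_eq_zero] at h
  have h2 : ‖z*u‖ = 1 := by rw [← h]; simp
  rw [norm_mul, hu, mul_one] at h2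
  exact absurd h2 (ne_of_lt hz)

private lemma rl_pointwise (z : ℂ) (hz : ‖z‖ < 1) (t : ℝ) :
    (((1 - ‖z‖ ^ 2) / ‖1 - z * Complex.exp (t * Complex.I)‖ ^ 2 : ℝ) : ℂ)
      = (1 - z * Complex.exp (t * Complex.I))⁻¹
        + (1 - (starRingEnd ℂ) z * (Complex.exp (t * Complex.I))⁻¹)⁻¹ - 1 := by
  set w := Complex.exp ((t:ℂ) * Complex.I) with hwdef
  have hwa : ‖w‖ = 1 := Complex.norm_exp_ofReal_mul_I t
  have hw0 : w ≠ 0 := Complex.exp_ne_zero _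
  have hwinv : ‖w⁻¹‖ = 1 := by rw [norm_inv, hwa]; norm_num
  have h1 : (1:ℂ) - z * w ≠ 0 := rl_ne z w hz hwa
  have h2 : (1:ℂ) - (starRingEnd ℂ) z * w⁻¹ ≠ 0 := by
    refine rl_ne _ _ ?_ hwinv
    rwa [Complex.norm_conj]
  have hns : Complex.normSq w = 1 := by rw [← Complex.sq_norm, hwa]; norm_num
  have hconjw : (starRingEnd ℂ) w = w⁻¹ := by
    rw [Complex.inv_def, hns]; simp
  have hnum : ((1 - ‖z‖ ^ 2 : ℝ) : ℂ) = 1 - z * (starRingEnd ℂ) z := by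
    rw [Complex.ofReal_sub, Complex.ofReal_one, Complex.sq_norm, Complex.mul_conj]
  have hden : ((‖1 - z * w‖ ^ 2 : ℝ) : ℂ)
      = (1 - z*w) * (1 - (starRingEnd ℂ) z * w⁻¹) := by
    rw [Complex.sq_norm, ← Complex.mul_conj]
    congr 1
    rw [map_sub, map_one, map_mul, hconjw]
  rw [Complex.ofReal_div, hnum, hden]
  have h3 : w - (starRingEnd ℂ) z ≠ 0 := by
    intro h
    apply h2
    rw [sub_eq_zero] at h
    rw [← h]
    field_simp
    simp
  have hA : z * (starRingEnd ℂ) z * w + (-(z * w ^ 2) - (starRingEnd ℂ) z) + w ≠ 0 := by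
    intro h
    apply mul_ne_zero h1 h3
    linear_combination h
  field_simp [h1, h2, hw0, h3, hA]
  ring

private lemma rl_exp_int' (m : ℤ) :
    (∫ t in Ioc (0:ℝ) (2*Real.pi), Complex.exp (Complex.I * m * t)) =
      if m = 0 then (2*Real.pi : ℂ) else 0 := by
  rw [← intervalIntegral.integral_of_le (by positivity : (0:ℝ) ≤ 2*Real.pi)]
  exact rl_exp_int m

private lemma rl_cont_exp (m : ℤ) : Continuous fun t : ℝ => Complex.exp (Complex.I * m * t) := by
  fun_prop

private lemma rl_int_exp (m : ℤ) (c : ℂ) :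
    Integrable (fun t : ℝ => c * Complex.exp (Complex.I * m * t))
      (volume.restrict (Ioc (0:ℝ) (2*Real.pi))) :=
  (Continuous.integrableOn_Ioc (by fun_prop))

private lemma rl_I1 (z : ℂ) (hz : ‖z‖ < 1) (n : ℕ) :
    (∫ t in Ioc (0:ℝ) (2*Real.pi),
        Complex.exp (Complex.I * n * t) * (1 - z * Complex.exp (t * Complex.I))⁻¹)
      = if n = 0 then (2*Real.pi : ℂ) else 0 := by
  have hfun : ∀ t : ℝ, (fun k : ℕ => Complex.exp (Complex.I * n * t) * (z * Complex.exp ((t:ℂ) * Complex.I))^k)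
      = fun k : ℕ => z ^ k * Complex.exp (Complex.I * ((n + k : ℤ) : ℂ) * t) := by
    intro t
    funext k
    rw [mul_pow, ← Complex.exp_nat_mul]
    rw [show Complex.exp (Complex.I * (n:ℂ) * t) * (z ^ k * Complex.exp ((k:ℂ) * ((t:ℂ) * Complex.I)))
        = z ^ k * (Complex.exp (Complex.I * (n:ℂ) * t) * Complex.exp ((k:ℂ) * ((t:ℂ) * Complex.I))) from by ring]
    rw [← Complex.exp_add]
    congr 2
    push_cast
    ring
  have hterm : ∀ t : ℝ, HasSum (fun k : ℕ => z ^ k * Complex.exp (Complex.I * ((n + k : ℤ) : ℂ) * t))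
      (Complex.exp (Complex.I * n * t) * (1 - z * Complex.exp ((t:ℂ) * Complex.I))⁻¹) := by
    intro t
    have hu : ‖z * Complex.exp ((t:ℂ) * Complex.I)‖ < 1 := by
      rw [norm_mul, Complex.norm_exp_ofReal_mul_I, mul_one]
      exact hz
    have := (hasSum_geometric_of_norm_lt_one hu).mul_left (Complex.exp (Complex.I * n * t))
    rw [hfun t] at this
    exact this
  have hint : ∀ k : ℕ, Integrable (fun t : ℝ => z ^ k * Complex.exp (Complex.I * ((n + k : ℤ) : ℂ) * t))
      (volume.restrict (Ioc (0:ℝ) (2*Real.pi))) := fun k => rl_int_exp _ _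
  have hsum : Summable fun k : ℕ =>
      ∫ t in Ioc (0:ℝ) (2*Real.pi), ‖z ^ k * Complex.exp (Complex.I * ((n + k : ℤ) : ℂ) * t)‖ := by
    have : ∀ k : ℕ, (∫ t in Ioc (0:ℝ) (2*Real.pi), ‖z ^ k * Complex.exp (Complex.I * ((n + k : ℤ) : ℂ) * t)‖)
        = ‖z‖ ^ k * (2*Real.pi) := by
      intro k
      have : ∀ t : ℝ, ‖z ^ k * Complex.exp (Complex.I * ((n + k : ℤ) : ℂ) * t)‖ = ‖z‖ ^ k := by
        intro t
        rw [norm_mul, norm_pow]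
        rw [show (((n + k : ℤ)):ℂ) = (((n + k : ℤ) : ℝ) : ℂ) from by push_cast; ring]
        rw [rl_exp_norm ((n + k : ℤ) : ℝ) t, mul_one]
      simp only [this]
      rw [setIntegral_const]
      rw [Real.volume_real_Ioc_of_le (by nlinarith [Real.pi_pos])]
      rw [smul_eq_mul]
      ring
    simp only [this]
    exact (summable_geometric_of_lt_one (norm_nonneg z) hz).mul_right _
  have hswap := integral_tsum_of_summable_integral_norm hint hsum
  calc (∫ t in Ioc (0:ℝ) (2*Real.pi),
        Complex.exp (Complex.I * n * t) * (1 - z * Complex.exp ((t:ℂ) * Complex.I))⁻¹)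
      = ∫ t in Ioc (0:ℝ) (2*Real.pi), ∑' k : ℕ, z ^ k * Complex.exp (Complex.I * ((n + k : ℤ) : ℂ) * t) := by
        apply integral_congr_ae
        filter_upwards with t
        exact ((hterm t).tsum_eq).symm
    _ = ∑' k : ℕ, ∫ t in Ioc (0:ℝ) (2*Real.pi), z ^ k * Complex.exp (Complex.I * ((n + k : ℤ) : ℂ) * t) :=
        hswap.symm
    _ = ∑' k : ℕ, z ^ k * (if ((n:ℤ) + k) = 0 then (2*Real.pi : ℂ) else 0) := by
        congr 1; funext k
        rw [integral_const_mul, rl_exp_int' ((n:ℤ) + k)]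
    _ = if n = 0 then (2*Real.pi : ℂ) else 0 := by
        rcases Nat.eq_zero_or_pos n with hn | hn
        · subst hn
          rw [if_pos rfl]
          rw [tsum_eq_single 0 ?_]
          · norm_num
          · intro k hk
            rw [if_neg (by omega), mul_zero]
        · rw [if_neg (Nat.pos_iff_ne_zero.mp hn)]
          have : ∀ k : ℕ, z ^ k * (if ((n:ℤ) + k) = 0 then (2*Real.pi : ℂ) else 0) = 0 := by
            intro k
            rw [if_neg (by omega), mul_zero]
          simp only [this, tsum_zero]

private lemma rl_I2 (z : ℂ) (hz : ‖z‖ < 1) (n : ℕ) :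
    (∫ t in Ioc (0:ℝ) (2*Real.pi),
        Complex.exp (Complex.I * n * t) * (1 - (starRingEnd ℂ) z * (Complex.exp ((t:ℂ) * Complex.I))⁻¹)⁻¹)
      = (2*Real.pi : ℂ) * ((starRingEnd ℂ) z) ^ n := by
  set c := (starRingEnd ℂ) z with hc
  have hca : ‖c‖ < 1 := by rw [hc, Complex.norm_conj]; exact hz
  have hfun : ∀ t : ℝ, (fun k : ℕ => Complex.exp (Complex.I * n * t) * (c * (Complex.exp ((t:ℂ) * Complex.I))⁻¹)^k)
      = fun k : ℕ => c ^ k * Complex.exp (Complex.I * ((n - k : ℤ) : ℂ) * t) := by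
    intro t
    funext k
    rw [mul_pow, inv_pow, ← Complex.exp_nat_mul, ← Complex.exp_neg]
    rw [show Complex.exp (Complex.I * (n:ℂ) * t) * (c ^ k * Complex.exp (-((k:ℂ) * ((t:ℂ) * Complex.I))))
        = c ^ k * (Complex.exp (Complex.I * (n:ℂ) * t) * Complex.exp (-((k:ℂ) * ((t:ℂ) * Complex.I)))) from by ring]
    rw [← Complex.exp_add]
    congr 2
    push_cast
    ring
  have hterm : ∀ t : ℝ, HasSum (fun k : ℕ => c ^ k * Complex.exp (Complex.I * ((n - k : ℤ) : ℂ) * t))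
      (Complex.exp (Complex.I * n * t) * (1 - c * (Complex.exp ((t:ℂ) * Complex.I))⁻¹)⁻¹) := by
    intro t
    have hu : ‖c * (Complex.exp ((t:ℂ) * Complex.I))⁻¹‖ < 1 := by
      rw [norm_mul, norm_inv, Complex.norm_exp_ofReal_mul_I]
      simpa using hca
    have := (hasSum_geometric_of_norm_lt_one hu).mul_left (Complex.exp (Complex.I * n * t))
    rw [hfun t] at this
    exact this
  have hint : ∀ k : ℕ, Integrable (fun t : ℝ => c ^ k * Complex.exp (Complex.I * ((n - k : ℤ) : ℂ) * t))
      (volume.restrict (Ioc (0:ℝ) (2*Real.pi))) := fun k => rl_int_exp _ _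
  have hsum : Summable fun k : ℕ =>
      ∫ t in Ioc (0:ℝ) (2*Real.pi), ‖c ^ k * Complex.exp (Complex.I * ((n - k : ℤ) : ℂ) * t)‖ := by
    have heq : ∀ k : ℕ, (∫ t in Ioc (0:ℝ) (2*Real.pi), ‖c ^ k * Complex.exp (Complex.I * ((n - k : ℤ) : ℂ) * t)‖)
        = ‖c‖ ^ k * (2*Real.pi) := by
      intro k
      have : ∀ t : ℝ, ‖c ^ k * Complex.exp (Complex.I * ((n - k : ℤ) : ℂ) * t)‖ = ‖c‖ ^ k := by
        intro t
        rw [norm_mul, norm_pow]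
        rw [show (((n - k : ℤ)):ℂ) = (((n - k : ℤ) : ℝ) : ℂ) from by push_cast; ring]
        rw [rl_exp_norm ((n - k : ℤ) : ℝ) t, mul_one]
      simp only [this]
      rw [setIntegral_const, Real.volume_real_Ioc_of_le (by nlinarith [Real.pi_pos]), smul_eq_mul]
      ring
    simp only [heq]
    exact (summable_geometric_of_lt_one (norm_nonneg c) hca).mul_right _
  have hswap := integral_tsum_of_summable_integral_norm hint hsum
  calc (∫ t in Ioc (0:ℝ) (2*Real.pi),
        Complex.exp (Complex.I * n * t) * (1 - c * (Complex.exp ((t:ℂ) * Complex.I))⁻¹)⁻¹)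
      = ∫ t in Ioc (0:ℝ) (2*Real.pi), ∑' k : ℕ, c ^ k * Complex.exp (Complex.I * ((n - k : ℤ) : ℂ) * t) := by
        apply integral_congr_ae
        filter_upwards with t
        exact ((hterm t).tsum_eq).symm
    _ = ∑' k : ℕ, ∫ t in Ioc (0:ℝ) (2*Real.pi), c ^ k * Complex.exp (Complex.I * ((n - k : ℤ) : ℂ) * t) :=
        hswap.symm
    _ = ∑' k : ℕ, c ^ k * (if ((n:ℤ) - k) = 0 then (2*Real.pi : ℂ) else 0) := by
        congr 1; funext k
        rw [integral_const_mul, rl_exp_int' ((n:ℤ) - k)]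
    _ = (2*Real.pi : ℂ) * c ^ n := by
        rw [tsum_eq_single n ?_]
        · rw [if_pos (by omega)]; ring
        · intro k hk
          rw [if_neg (by omega), mul_zero]

private lemma rl_key (z : ℂ) (hz : ‖z‖ < 1) (n : ℕ) :
    (∫ t in Ioc (0:ℝ) (2*Real.pi),
        Complex.exp (Complex.I * n * t) *
          (((1 - ‖z‖ ^ 2) / ‖1 - z * Complex.exp (t * Complex.I)‖ ^ 2 : ℝ) : ℂ))
      = (2*Real.pi : ℂ) * ((starRingEnd ℂ) z) ^ n := by
  have hca : ‖(starRingEnd ℂ) z‖ < 1 := by rw [Complex.norm_conj]; exact hz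
  have hA : Integrable (fun t : ℝ => Complex.exp (Complex.I * n * t) * (1 - z * Complex.exp ((t:ℂ) * Complex.I))⁻¹)
      (volume.restrict (Ioc (0:ℝ) (2*Real.pi))) := by
    apply Continuous.integrableOn_Ioc
    apply Continuous.mul (by fun_prop)
    apply Continuous.inv₀ (by fun_prop)
    intro t
    exact rl_ne z _ hz (Complex.norm_exp_ofReal_mul_I t)
  have hB : Integrable (fun t : ℝ => Complex.exp (Complex.I * n * t) * (1 - (starRingEnd ℂ) z * (Complex.exp ((t:ℂ) * Complex.I))⁻¹)⁻¹)
      (volume.restrict (Ioc (0:ℝ) (2*Real.pi))) := by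
    apply Continuous.integrableOn_Ioc
    apply Continuous.mul (by fun_prop)
    apply Continuous.inv₀
    · apply Continuous.sub continuous_const
      apply Continuous.mul continuous_const
      apply Continuous.inv₀ (by fun_prop)
      intro t; exact Complex.exp_ne_zero _
    intro t
    apply rl_ne _ _ hca
    rw [norm_inv, Complex.norm_exp_ofReal_mul_I]
    norm_num
  have hC : Integrable (fun t : ℝ => Complex.exp (Complex.I * n * t))
      (volume.restrict (Ioc (0:ℝ) (2*Real.pi))) := Continuous.integrableOn_Ioc (by fun_prop)
  calc (∫ t in Ioc (0:ℝ) (2*Real.pi),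
        Complex.exp (Complex.I * n * t) *
          (((1 - ‖z‖ ^ 2) / ‖1 - z * Complex.exp (t * Complex.I)‖ ^ 2 : ℝ) : ℂ))
      = ∫ t in Ioc (0:ℝ) (2*Real.pi),
          (Complex.exp (Complex.I * n * t) * (1 - z * Complex.exp ((t:ℂ) * Complex.I))⁻¹
           + Complex.exp (Complex.I * n * t) * (1 - (starRingEnd ℂ) z * (Complex.exp ((t:ℂ) * Complex.I))⁻¹)⁻¹
           - Complex.exp (Complex.I * n * t)) := by
        apply integral_congr_ae
        filter_upwards with t
        rw [rl_pointwise z hz t]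
        ring
    _ = (∫ t in Ioc (0:ℝ) (2*Real.pi), Complex.exp (Complex.I * n * t) * (1 - z * Complex.exp ((t:ℂ) * Complex.I))⁻¹)
        + (∫ t in Ioc (0:ℝ) (2*Real.pi), Complex.exp (Complex.I * n * t) * (1 - (starRingEnd ℂ) z * (Complex.exp ((t:ℂ) * Complex.I))⁻¹)⁻¹)
        - ∫ t in Ioc (0:ℝ) (2*Real.pi), Complex.exp (Complex.I * n * t) := by
        have hAB : Integrable (fun t : ℝ => Complex.exp (Complex.I * n * t) * (1 - z * Complex.exp ((t:ℂ) * Complex.I))⁻¹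
            + Complex.exp (Complex.I * n * t) * (1 - (starRingEnd ℂ) z * (Complex.exp ((t:ℂ) * Complex.I))⁻¹)⁻¹)
            (volume.restrict (Ioc (0:ℝ) (2*Real.pi))) := hA.add hB
        rw [integral_sub hAB hC, integral_add hA hB]
    _ = (2*Real.pi : ℂ) * ((starRingEnd ℂ) z) ^ n := by
        rw [rl_I1 z hz n, rl_I2 z hz n]
        have hcast : ((n:ℕ):ℂ) = (((n:ℤ)):ℂ) := by push_cast; ring
        rw [show (∫ t in Ioc (0:ℝ) (2*Real.pi), Complex.exp (Complex.I * (n:ℂ) * t))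
            = ∫ t in Ioc (0:ℝ) (2*Real.pi), Complex.exp (Complex.I * (((n:ℤ)):ℂ) * t) from by rw [hcast]]
        rw [rl_exp_int' (n : ℤ)]
        rcases Nat.eq_zero_or_pos n with hn | hn
        · subst hn
          norm_num
        · rw [if_neg (show ¬ n = 0 by omega), if_neg (show ¬ ((n:ℤ)) = 0 by omega)]
          ring

private lemma rl_key_real (z : ℂ) (hz : ‖z‖ < 1) :
    (∫ t in Ioc (0:ℝ) (2*Real.pi),
        (1 - ‖z‖ ^ 2) / ‖1 - z * Complex.exp (t * Complex.I)‖ ^ 2)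
      = 2*Real.pi := by
  have h := rl_key z hz 0
  simp only [pow_zero, mul_one, Nat.cast_zero, mul_zero, zero_mul, Complex.exp_zero, one_mul] at h
  apply Complex.ofReal_injective
  rw [show ((∫ t in Ioc (0:ℝ) (2*Real.pi),
        (1 - ‖z‖ ^ 2) / ‖1 - z * Complex.exp (t * Complex.I)‖ ^ 2 : ℝ) : ℂ)
      = ∫ t in Ioc (0:ℝ) (2*Real.pi),
        (((1 - ‖z‖ ^ 2) / ‖1 - z * Complex.exp (t * Complex.I)‖ ^ 2 : ℝ) : ℂ)
      from (integral_ofReal).symm]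
  rw [h]
  push_cast
  ring

/-- **Representation Lemma (Lemma 2.1), analytic core.**
`ν` is a finite positive Borel measure on the closed unit disk
`D = {z : ℂ | |z| ≤ 1}`, invariant under complex conjugation.  With
`ν₀` its restriction to the open disk `D₀` and `ν_Γ` its restriction to the
unit circle `Γ`, the function
`f t = (1/(2π)) ∫_{D₀} (1-|z|²)/|1-z e^{it}|² ν₀(dz)`
is nonnegative, measurable and integrable on `[0,2π]`, and for every `n ≥ 0`
`∫_D zⁿ ν(dz) = ∫₀^{2π} e^{int} f(t) dt + ∫_Γ wⁿ ν_Γ(dw)`. -/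
theorem representation_lemma_normal_spectral_density
    (ν : Measure ℂ) [IsFiniteMeasure ν]
    (hsupp : ν {z : ℂ | ¬ ‖z‖ ≤ 1} = 0)
    (hconj : ∀ A : Set ℂ, MeasurableSet A → ν ((starRingEnd ℂ) ⁻¹' A) = ν A)
    (f : ℝ → ℝ)
    (hf : ∀ t : ℝ, f t = (1 / (2 * Real.pi)) *
      ∫ z in {z : ℂ | ‖z‖ < 1},
        (1 - ‖z‖ ^ 2) / ‖1 - z * Complex.exp (t * Complex.I)‖ ^ 2 ∂ν) :
    Measurable f ∧ (∀ t : ℝ, 0 ≤ f t) ∧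
    IntegrableOn f (Set.Ioc 0 (2 * Real.pi)) ∧
    ∀ n : ℕ,
      (∫ z in {z : ℂ | ‖z‖ ≤ 1}, z ^ n ∂ν) =
        (∫ t in (0:ℝ)..(2 * Real.pi), Complex.exp (Complex.I * n * t) * (f t : ℂ)) +
          ∫ w in {w : ℂ | ‖w‖ = 1}, w ^ n ∂ν := by
  have hD₀m : MeasurableSet {z : ℂ | ‖z‖ < 1} :=
    (isOpen_lt continuous_norm continuous_const).measurableSet
  have hΓm : MeasurableSet {w : ℂ | ‖w‖ = 1} :=
    (isClosed_eq continuous_norm continuous_const).measurableSet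
  have hKm : Measurable fun p : ℝ × ℂ =>
      (1 - ‖p.2‖ ^ 2) / ‖1 - p.2 * Complex.exp (p.1 * Complex.I)‖ ^ 2 := by
    apply Measurable.div
    · exact (continuous_const.sub ((continuous_norm.comp continuous_snd).pow 2)).measurable
    · exact ((continuous_norm.comp (continuous_const.sub (continuous_snd.mul
        (Complex.continuous_exp.comp ((Complex.continuous_ofReal.comp continuous_fst).mul
          continuous_const))))).pow 2).measurable
  have hKz : ∀ z : ℂ, ‖z‖ < 1 → Continuous fun t : ℝ =>
      (1 - ‖z‖ ^ 2) / ‖1 - z * Complex.exp (t * Complex.I)‖ ^ 2 := by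
    intro z hz
    apply Continuous.div continuous_const
    · exact (continuous_norm.comp (continuous_const.sub (continuous_const.mul
        (Complex.continuous_exp.comp (Complex.continuous_ofReal.mul continuous_const))))).pow 2
    · intro t
      exact pow_ne_zero 2 (norm_ne_zero_iff.mpr (rl_ne z _ hz (Complex.norm_exp_ofReal_mul_I t)))
  have hKnn : ∀ z : ℂ, ‖z‖ < 1 → ∀ t : ℝ,
      0 ≤ (1 - ‖z‖ ^ 2) / ‖1 - z * Complex.exp (t*Complex.I)‖ ^ 2 := by
    intro z hz t
    apply div_nonneg _ (by positivity)
    nlinarith [norm_nonneg z]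
  have hKprod : Integrable (fun p : ℝ × ℂ =>
      (1 - ‖p.2‖ ^ 2) / ‖1 - p.2 * Complex.exp (p.1 * Complex.I)‖ ^ 2)
      ((volume.restrict (Ioc (0:ℝ) (2*Real.pi))).prod (ν.restrict {z : ℂ | ‖z‖ < 1})) := by
    rw [integrable_prod_iff' hKm.aestronglyMeasurable]
    constructor
    · filter_upwards [ae_restrict_mem hD₀m] with z hz
      exact (hKz z hz).integrableOn_Ioc
    · apply Integrable.congr (integrable_const (2*Real.pi))
      filter_upwards [ae_restrict_mem hD₀m] with z hz
      have h1 : (∫ t, ‖(1 - ‖z‖ ^ 2) / ‖1 - z * Complex.exp (t*Complex.I)‖ ^ 2‖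
            ∂(volume.restrict (Ioc (0:ℝ) (2*Real.pi))))
          = ∫ t in Ioc (0:ℝ) (2*Real.pi),
            (1 - ‖z‖ ^ 2) / ‖1 - z * Complex.exp (t*Complex.I)‖ ^ 2 := by
        apply integral_congr_ae
        filter_upwards with t
        exact Real.norm_of_nonneg (hKnn z hz t)
      rw [h1, rl_key_real z hz]
  have hfeq : f = fun t : ℝ => (1/(2*Real.pi)) * ∫ z in {z : ℂ | ‖z‖ < 1},
      (1 - ‖z‖ ^ 2) / ‖1 - z * Complex.exp (t * Complex.I)‖ ^ 2 ∂ν :=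
    funext hf
  have hfm : Measurable f := by
    have h1 : StronglyMeasurable fun t : ℝ => ∫ z in {z : ℂ | ‖z‖ < 1},
        (1 - ‖z‖ ^ 2) / ‖1 - z * Complex.exp (t * Complex.I)‖ ^ 2 ∂ν :=
      (hKm.stronglyMeasurable).integral_prod_right'
    rw [hfeq]
    exact h1.measurable.const_mul _
  have hfnn : ∀ t : ℝ, 0 ≤ f t := by
    intro t
    rw [hf t]
    apply mul_nonneg (by positivity)
    apply setIntegral_nonneg hD₀m
    intro z hz
    exact hKnn z hz t
  have hfint : IntegrableOn f (Set.Ioc 0 (2 * Real.pi)) := by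
    have h1 := hKprod.integral_prod_left
    rw [hfeq]
    exact h1.const_mul _
  refine ⟨hfm, hfnn, hfint, ?_⟩
  intro n
  -- complex kernel integrability
  have hFm : AEStronglyMeasurable (fun p : ℝ × ℂ => Complex.exp (Complex.I * n * p.1) *
      (((1 - ‖p.2‖ ^ 2) / ‖1 - p.2 * Complex.exp (p.1 * Complex.I)‖ ^ 2 : ℝ) : ℂ))
      ((volume.restrict (Ioc (0:ℝ) (2*Real.pi))).prod (ν.restrict {z : ℂ | ‖z‖ < 1})) := by
    apply Measurable.aestronglyMeasurable
    apply Measurable.mul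
    · exact (Complex.continuous_exp.comp (continuous_const.mul
        (Complex.continuous_ofReal.comp continuous_fst))).measurable
    · exact Complex.measurable_ofReal.comp hKm
  have hnormF : ∀ (z : ℂ) (t : ℝ), ‖Complex.exp (Complex.I * n * t) *
      (((1 - ‖z‖ ^ 2) / ‖1 - z * Complex.exp (t * Complex.I)‖ ^ 2 : ℝ) : ℂ)‖
      = |(1 - ‖z‖ ^ 2) / ‖1 - z * Complex.exp (t * Complex.I)‖ ^ 2| := by
    intro z t
    rw [norm_mul, Complex.norm_real]
    rw [show (Complex.I * (n:ℂ) * (t:ℂ)) = Complex.I * (((n:ℝ)):ℂ) * (t:ℂ) from by push_cast; ring]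
    rw [show ‖Complex.exp (Complex.I * (((n:ℝ)):ℂ) * (t:ℂ))‖ = 1 from by
      rw [show Complex.I * (((n:ℝ)):ℂ) * (t:ℂ) = (((n:ℝ)*t : ℝ):ℂ) * Complex.I from by push_cast; ring]
      exact Complex.norm_exp_ofReal_mul_I _]
    rw [one_mul, Real.norm_eq_abs]
  have hF : Integrable (fun p : ℝ × ℂ => Complex.exp (Complex.I * n * p.1) *
      (((1 - ‖p.2‖ ^ 2) / ‖1 - p.2 * Complex.exp (p.1 * Complex.I)‖ ^ 2 : ℝ) : ℂ))
      ((volume.restrict (Ioc (0:ℝ) (2*Real.pi))).prod (ν.restrict {z : ℂ | ‖z‖ < 1})) := by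
    rw [integrable_prod_iff' hFm]
    constructor
    · filter_upwards [ae_restrict_mem hD₀m] with z hz
      apply Continuous.integrableOn_Ioc
      exact (Complex.continuous_exp.comp (continuous_const.mul
        (Complex.continuous_ofReal))).mul (Complex.continuous_ofReal.comp (hKz z hz))
    · apply Integrable.congr (integrable_const (2*Real.pi))
      filter_upwards [ae_restrict_mem hD₀m] with z hz
      have h1 : (∫ t, ‖Complex.exp (Complex.I * n * t) *
            (((1 - ‖z‖ ^ 2) / ‖1 - z * Complex.exp (t * Complex.I)‖ ^ 2 : ℝ) : ℂ)‖
            ∂(volume.restrict (Ioc (0:ℝ) (2*Real.pi))))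
          = ∫ t in Ioc (0:ℝ) (2*Real.pi),
            (1 - ‖z‖ ^ 2) / ‖1 - z * Complex.exp (t*Complex.I)‖ ^ 2 := by
        apply integral_congr_ae
        filter_upwards with t
        rw [hnormF z t]
        exact abs_of_nonneg (hKnn z hz t)
      rw [h1, rl_key_real z hz]
  have hswap := integral_integral_swap
    (f := fun (t:ℝ) (z:ℂ) => Complex.exp (Complex.I * n * t) *
      (((1 - ‖z‖ ^ 2) / ‖1 - z * Complex.exp (t * Complex.I)‖ ^ 2 : ℝ) : ℂ)) hF
  beta_reduce at hswap
  have hmain : (∫ t in (0:ℝ)..(2 * Real.pi), Complex.exp (Complex.I * n * t) * (f t : ℂ))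
      = ∫ z in {z : ℂ | ‖z‖ < 1}, ((starRingEnd ℂ) z)^n ∂ν := by
    rw [intervalIntegral.integral_of_le (by positivity : (0:ℝ) ≤ 2*Real.pi)]
    calc (∫ t in Ioc (0:ℝ) (2*Real.pi), Complex.exp (Complex.I * n * t) * (f t : ℂ))
        = ∫ t in Ioc (0:ℝ) (2*Real.pi), ((1/(2*Real.pi) : ℝ) : ℂ) *
            ∫ z in {z : ℂ | ‖z‖ < 1}, Complex.exp (Complex.I * n * t) *
              (((1 - ‖z‖ ^ 2) / ‖1 - z * Complex.exp (t * Complex.I)‖ ^ 2 : ℝ) : ℂ) ∂ν := by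
          apply integral_congr_ae
          filter_upwards with t
          rw [hf t, Complex.ofReal_mul]
          rw [show ((∫ z in {z : ℂ | ‖z‖ < 1},
                (1 - ‖z‖ ^ 2) / ‖1 - z * Complex.exp (t * Complex.I)‖ ^ 2 ∂ν : ℝ) : ℂ)
              = ∫ z in {z : ℂ | ‖z‖ < 1},
                (((1 - ‖z‖ ^ 2) / ‖1 - z * Complex.exp (t * Complex.I)‖ ^ 2 : ℝ) : ℂ) ∂ν
              from (integral_ofReal).symm]
          rw [← mul_assoc, mul_comm (Complex.exp (Complex.I * n * t)) (((1/(2*Real.pi) : ℝ)) : ℂ),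
            mul_assoc, integral_const_mul]
      _ = ((1/(2*Real.pi) : ℝ) : ℂ) * ∫ t in Ioc (0:ℝ) (2*Real.pi),
            ∫ z in {z : ℂ | ‖z‖ < 1}, Complex.exp (Complex.I * n * t) *
              (((1 - ‖z‖ ^ 2) / ‖1 - z * Complex.exp (t * Complex.I)‖ ^ 2 : ℝ) : ℂ) ∂ν :=
          integral_const_mul _ _
      _ = ((1/(2*Real.pi) : ℝ) : ℂ) * ∫ z in {z : ℂ | ‖z‖ < 1},
            (∫ t in Ioc (0:ℝ) (2*Real.pi), Complex.exp (Complex.I * n * t) *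
              (((1 - ‖z‖ ^ 2) / ‖1 - z * Complex.exp (t * Complex.I)‖ ^ 2 : ℝ) : ℂ)) ∂ν := by
          rw [hswap]
      _ = ((1/(2*Real.pi) : ℝ) : ℂ) * ∫ z in {z : ℂ | ‖z‖ < 1},
            (2*Real.pi : ℂ) * ((starRingEnd ℂ) z)^n ∂ν := by
          congr 1
          apply integral_congr_ae
          filter_upwards [ae_restrict_mem hD₀m] with z hz
          exact rl_key z hz n
      _ = ∫ z in {z : ℂ | ‖z‖ < 1}, ((starRingEnd ℂ) z)^n ∂ν := by
          rw [integral_const_mul, ← mul_assoc,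
            show (((1/(2*Real.pi) : ℝ) : ℂ) * (2*Real.pi : ℂ)) = 1 from by
              have hπ : (Real.pi : ℂ) ≠ 0 := by exact_mod_cast Real.pi_ne_zero
              push_cast
              field_simp,
            one_mul]
  have hconjstep : (∫ z in {z : ℂ | ‖z‖ < 1}, ((starRingEnd ℂ) z)^n ∂ν)
      = ∫ z in {z : ℂ | ‖z‖ < 1}, z^n ∂ν := by
    have hcont : Continuous (starRingEnd ℂ) := Complex.continuous_conj
    have hmap : ν.map (starRingEnd ℂ) = ν := by
      apply Measure.ext
      intro A hA
      rw [Measure.map_apply hcont.measurable hA]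
      exact hconj A hA
    have hemb : MeasurableEmbedding (starRingEnd ℂ) :=
      (Homeomorph.mk ⟨(starRingEnd ℂ), (starRingEnd ℂ), fun z => Complex.conj_conj z,
        fun z => Complex.conj_conj z⟩ hcont hcont).measurableEmbedding
    have hpre : (starRingEnd ℂ) ⁻¹' {z : ℂ | ‖z‖ < 1} = {z : ℂ | ‖z‖ < 1} := by
      ext w
      simp [Complex.norm_conj]
    conv_rhs => rw [← hmap]
    rw [hemb.setIntegral_map, hpre]
  have hbddInt : ∀ s : Set ℂ, MeasurableSet s → (∀ z ∈ s, ‖z‖ ≤ 1) →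
      IntegrableOn (fun z : ℂ => z^n) s ν := by
    intro s hsm hs
    refine Integrable.mono' (integrable_const 1)
      ((continuous_pow n).aestronglyMeasurable) ?_
    filter_upwards [ae_restrict_mem hsm] with z hz
    rw [norm_pow]
    exact pow_le_one₀ (norm_nonneg z) (hs z hz)
  have hsplit : {z : ℂ | ‖z‖ ≤ 1} = {z : ℂ | ‖z‖ < 1} ∪ {w : ℂ | ‖w‖ = 1} := by
    ext z
    simp [le_iff_lt_or_eq]
  have hdisj : Disjoint {z : ℂ | ‖z‖ < 1} {w : ℂ | ‖w‖ = 1} := by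
    rw [Set.disjoint_left]
    intro z hz1 hz2
    exact absurd hz2 (ne_of_lt hz1)
  rw [hsplit, setIntegral_union hdisj hΓm
    (hbddInt _ hD₀m (fun z hz => le_of_lt hz)) (hbddInt _ hΓm (fun z hz => le_of_eq hz))]
  rw [hmain, hconjstep]
end

section
/- Define σ² := ∫_{D∖{1}} (1−|z|²)/|1−z|² ν(dz) ∈ [0,∞] and I_n := (1/n) ∫_D |1 + z + ⋯ + z^{n−1}|² ν(dz). Then Var_n/n converges to a finite limit K as n → ∞ if and only if σ² < ∞ and I_n converges to a finite limit L as n → ∞; in that case K = σ² + L. -/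
open MeasureTheory Filter Topology Set

/-- The variance sequence `Var_n = ∫_D (n + 2 ∑_{k=1}^{n-1} (n-k) Re(z^k)) ν(dz)`. -/
noncomputable def VarSeq (ν : Measure ℂ) (n : ℕ) : ℝ :=
  ∫ z, ((n : ℝ) + 2 * ∑ k ∈ Finset.Ico 1 n, ((n : ℝ) - (k : ℝ)) * (z ^ k).re) ∂ν

/-- `σ² = ∫_{D∖{1}} (1-|z|²)/|1-z|² ν(dz) ∈ [0,∞]`. -/
noncomputable def sigmaSq (ν : Measure ℂ) : ENNReal :=
  ∫⁻ z in {z : ℂ | z ≠ 1},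
    ENNReal.ofReal ((1 - ‖z‖ ^ 2) / ‖1 - z‖ ^ 2) ∂ν

/-- `I_n = (1/n) ∫_D |1 + z + ⋯ + z^{n-1}|² ν(dz)`. -/
noncomputable def Iseq (ν : Measure ℂ) (n : ℕ) : ℝ :=
  (1 / (n : ℝ)) * ∫ z, ‖∑ k ∈ Finset.range n, z ^ k‖ ^ 2 ∂ν

namespace VarThmAux

/-- `A n z = |1 + z + ... + z^{n-1}|²`. -/
noncomputable def A (n : ℕ) (z : ℂ) : ℝ :=
  ‖∑ k ∈ Finset.range n, z ^ k‖ ^ 2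

/-- the integrand of `VarSeq`. -/
noncomputable def U (n : ℕ) (z : ℂ) : ℝ :=
  (n : ℝ) + 2 * ∑ k ∈ Finset.Ico 1 n, ((n : ℝ) - (k : ℝ)) * (z ^ k).re

/-- `G z = (1-|z|²)/|1-z|²`. -/
noncomputable def G (z : ℂ) : ℝ :=
  (1 - ‖z‖ ^ 2) / ‖1 - z‖ ^ 2

/-- `f n z = (1-|z|²) · (1/n) ∑_{m<n} A m z`. -/
noncomputable def f (n : ℕ) (z : ℂ) : ℝ :=
  (1 - ‖z‖ ^ 2) * ((n : ℝ)⁻¹ * ∑ m ∈ Finset.range n, A m z)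

lemma A_nonneg (n : ℕ) (z : ℂ) : 0 ≤ A n z := sq_nonneg _

lemma A_succ (z : ℂ) (n : ℕ) :
    A (n + 1) z = 1 + 2 * (∑ k ∈ Finset.range n, (z ^ (k + 1)).re)
      + ‖z‖ ^ 2 * A n z := by
  have h : (∑ k ∈ Finset.range (n + 1), z ^ k)
      = 1 + z * ∑ k ∈ Finset.range n, z ^ k := by
    rw [geom_sum_succ]; ring
  have hre : (z * ∑ k ∈ Finset.range n, z ^ k)
      = ∑ k ∈ Finset.range n, z ^ (k + 1) := by
    rw [Finset.mul_sum]
    exact Finset.sum_congr rfl fun k _ => (pow_succ' z k).symm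
  simp only [A, Complex.sq_norm, h]
  rw [Complex.normSq_add, Complex.normSq_mul, hre, one_mul]
  rw [show ((starRingEnd ℂ) (∑ k ∈ Finset.range n, z ^ (k + 1))).re
      = (∑ k ∈ Finset.range n, z ^ (k + 1)).re from Complex.conj_re _,
    Complex.re_sum]
  simp only [Complex.normSq_one, Complex.sq_norm]
  ring

lemma U_eq_range (n : ℕ) (z : ℂ) :
    U n z = (n : ℝ) + 2 * ∑ k ∈ Finset.range n, ((n : ℝ) - (k + 1)) * (z ^ (k + 1)).re := by
  rw [U, Finset.sum_Ico_eq_sum_range]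
  cases n with
  | zero => simp
  | succ n =>
    rw [Finset.sum_range_succ]
    simp only [Nat.add_sub_cancel]
    push_cast
    rw [sub_self, zero_mul, add_zero]
    congr 1
    congr 1
    apply Finset.sum_congr rfl
    intro k _
    rw [add_comm 1 k]
    push_cast
    ring

lemma U_succ (z : ℂ) (n : ℕ) :
    U (n + 1) z = U n z + (1 + 2 * ∑ k ∈ Finset.range n, (z ^ (k + 1)).re) := by
  rw [U_eq_range, U_eq_range, Finset.sum_range_succ]
  have h : ∀ k ∈ Finset.range n,
      (((n : ℝ) + 1) - ((k : ℝ) + 1)) * (z ^ (k + 1)).re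
        = ((n : ℝ) - ((k : ℝ) + 1)) * (z ^ (k + 1)).re + (z ^ (k + 1)).re := by
    intro k _; ring
  push_cast
  rw [Finset.sum_congr rfl h, Finset.sum_add_distrib]
  ring

lemma U_eq_A (z : ℂ) (n : ℕ) :
    U n z = A n z + (1 - ‖z‖ ^ 2) * ∑ m ∈ Finset.range n, A m z := by
  induction n with
  | zero => simp [U, A]
  | succ n ih =>
    rw [U_succ, ih, Finset.sum_range_succ, A_succ]
    ring


lemma G_nonneg {z : ℂ} (hz : ‖z‖ ≤ 1) : 0 ≤ G z := by
  apply div_nonneg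
  · nlinarith [norm_nonneg z]
  · positivity

lemma sq_abs_le_one {z : ℂ} (hz : ‖z‖ ≤ 1) : ‖z‖ ^ 2 ≤ 1 := by
  nlinarith [norm_nonneg z]

lemma f_nonneg {z : ℂ} (hz : ‖z‖ ≤ 1) (n : ℕ) : 0 ≤ f n z := by
  apply mul_nonneg
  · linarith [sq_abs_le_one hz]
  · exact mul_nonneg (by positivity) (Finset.sum_nonneg fun m _ => A_nonneg m z)

lemma A_le {z : ℂ} (hz : ‖z‖ ≤ 1) (hz1 : z ≠ 1) (m : ℕ) :
    A m z ≤ 4 / ‖1 - z‖ ^ 2 := by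
  have hne : (1 : ℂ) - z ≠ 0 := sub_ne_zero.mpr (Ne.symm hz1)
  have hD : 0 < ‖1 - z‖ := norm_pos_iff.mpr hne
  have hmul : ‖∑ k ∈ Finset.range m, z ^ k‖ * ‖1 - z‖
      = ‖z ^ m - 1‖ := by
    rw [norm_sub_rev 1 z, ← norm_mul, geom_sum_mul]
  have hle : ‖z ^ m - 1‖ ≤ 2 := by
    calc ‖z ^ m - 1‖ ≤ ‖z ^ m‖ + ‖(1 : ℂ)‖ := by
          have := norm_sub_le (z ^ m) (1 : ℂ)
          simpa using this
      _ ≤ 2 := by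
          rw [norm_pow, norm_one]
          have : ‖z‖ ^ m ≤ 1 := by
            calc ‖z‖ ^ m ≤ 1 ^ m := pow_le_pow_left₀ (norm_nonneg z) hz m
              _ = 1 := one_pow m
          linarith
  rw [le_div_iff₀ (by positivity), A]
  calc ‖∑ k ∈ Finset.range m, z ^ k‖ ^ 2 * ‖1 - z‖ ^ 2
      = (‖∑ k ∈ Finset.range m, z ^ k‖ * ‖1 - z‖) ^ 2 := by ring
    _ = ‖z ^ m - 1‖ ^ 2 := by rw [hmul]
    _ ≤ 4 := by nlinarith [norm_nonneg (z ^ m - 1)]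

lemma f_le {z : ℂ} (hz : ‖z‖ ≤ 1) (n : ℕ) : f n z ≤ 4 * G z := by
  by_cases hz1 : z = 1
  · subst hz1
    simp [f, G]
  · have hq : 0 ≤ 1 - ‖z‖ ^ 2 := by linarith [sq_abs_le_one hz]
    have hC : (0:ℝ) ≤ 4 / ‖1 - z‖ ^ 2 := by positivity
    have hsum : ∑ m ∈ Finset.range n, A m z ≤ (n : ℝ) * (4 / ‖1 - z‖ ^ 2) := by
      calc ∑ m ∈ Finset.range n, A m z
          ≤ (Finset.range n).card • (4 / ‖1 - z‖ ^ 2) :=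
            Finset.sum_le_card_nsmul _ _ _ fun m _ => A_le hz hz1 m
        _ = (n : ℝ) * (4 / ‖1 - z‖ ^ 2) := by
            rw [Finset.card_range, nsmul_eq_mul]
    have h2 : (n : ℝ)⁻¹ * ∑ m ∈ Finset.range n, A m z ≤ 4 / ‖1 - z‖ ^ 2 := by
      rcases Nat.eq_zero_or_pos n with h | h
      · subst h; simpa using hC
      · have hn : (0:ℝ) < n := Nat.cast_pos.mpr h
        calc (n : ℝ)⁻¹ * ∑ m ∈ Finset.range n, A m z
            ≤ (n : ℝ)⁻¹ * ((n : ℝ) * (4 / ‖1 - z‖ ^ 2)) := by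
              apply mul_le_mul_of_nonneg_left hsum (by positivity)
          _ = 4 / ‖1 - z‖ ^ 2 := by field_simp
    calc f n z ≤ (1 - ‖z‖ ^ 2) * (4 / ‖1 - z‖ ^ 2) :=
          mul_le_mul_of_nonneg_left h2 hq
      _ = 4 * G z := by rw [G]; ring

lemma f_tendsto {z : ℂ} (hz : ‖z‖ ≤ 1) :
    Tendsto (fun n => f n z) atTop (𝓝 (G z)) := by
  rcases lt_or_eq_of_le hz with h | h
  · -- |z| < 1
    have hz1 : z ≠ 1 := by
      intro h1; rw [h1] at h; simp at h
    have hS : Tendsto (fun n => ∑ k ∈ Finset.range n, z ^ k) atTop (𝓝 ((1 - z)⁻¹)) :=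
      (hasSum_geometric_of_norm_lt_one (by assumption)).tendsto_sum_nat
    have hA : Tendsto (fun m => A m z) atTop (𝓝 (‖(1 - z)⁻¹‖ ^ 2)) :=
      ((continuous_norm.tendsto _).comp hS).pow 2
    have hces := hA.cesaro
    have := hces.const_mul (1 - ‖z‖ ^ 2)
    have hG : (1 - ‖z‖ ^ 2) * (‖(1 - z)⁻¹‖ ^ 2) = G z := by
      rw [norm_inv, inv_pow, G, div_eq_mul_inv]
    rw [hG] at this
    exact this.congr fun n => rfl
  · -- |z| = 1
    have h1 : (1 : ℝ) - ‖z‖ ^ 2 = 0 := by rw [h]; norm_num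
    have hf : ∀ n, f n z = 0 := fun n => by rw [f, h1, zero_mul]
    have hG : G z = 0 := by rw [G, h1, zero_div]
    simp only [hf, hG]
    exact tendsto_const_nhds

lemma f_eq (n : ℕ) (z : ℂ) : f n z = (n : ℝ)⁻¹ * (U n z - A n z) := by
  rw [U_eq_A, f]; ring

lemma U_cont (n : ℕ) : Continuous (U n) := by
  unfold U
  continuity

lemma A_cont (n : ℕ) : Continuous (A n) := by
  unfold A
  continuity

lemma f_cont (n : ℕ) : Continuous (f n) := by
  simp only [funext (f_eq n)]
  exact continuous_const.mul ((U_cont n).sub (A_cont n))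

lemma G_meas : Measurable G := by
  unfold G
  apply Measurable.div
  · exact (continuous_const.sub (continuous_norm.pow 2)).measurable
  · exact ((continuous_norm.comp (continuous_const.sub continuous_id)).pow 2).measurable

lemma U_bound {z : ℂ} (hz : ‖z‖ ≤ 1) (n : ℕ) :
    ‖U n z‖ ≤ (n : ℝ) + 2 * ((n : ℝ) * (n : ℝ)) := by
  have hterm : ∀ k ∈ Finset.Ico 1 n, |((n : ℝ) - (k : ℝ)) * (z ^ k).re| ≤ (n : ℝ) := by
    intro k hk
    rw [Finset.mem_Ico] at hk
    have hk1 : (1 : ℝ) ≤ (k : ℝ) := by exact_mod_cast hk.1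
    have hk2 : (k : ℝ) < (n : ℝ) := by exact_mod_cast hk.2
    have hre : |(z ^ k).re| ≤ 1 := by
      calc |(z ^ k).re| ≤ ‖z ^ k‖ := Complex.abs_re_le_norm _
        _ = ‖z‖ ^ k := norm_pow _ _
        _ ≤ 1 := by
            calc ‖z‖ ^ k ≤ 1 ^ k := pow_le_pow_left₀ (norm_nonneg z) hz k
              _ = 1 := one_pow k
    rw [abs_mul]
    calc |(n : ℝ) - (k : ℝ)| * |(z ^ k).re| ≤ (n : ℝ) * 1 := by
          apply mul_le_mul
          · rw [abs_le]; constructor <;> linarith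
          · exact hre
          · exact abs_nonneg _
          · positivity
      _ = (n : ℝ) := mul_one _
  have hsum : |∑ k ∈ Finset.Ico 1 n, ((n : ℝ) - (k : ℝ)) * (z ^ k).re|
      ≤ (n : ℝ) * (n : ℝ) := by
    calc |∑ k ∈ Finset.Ico 1 n, ((n : ℝ) - (k : ℝ)) * (z ^ k).re|
        ≤ ∑ k ∈ Finset.Ico 1 n, |((n : ℝ) - (k : ℝ)) * (z ^ k).re| :=
          Finset.abs_sum_le_sum_abs _ _
      _ ≤ ∑ _k ∈ Finset.Ico 1 n, (n : ℝ) := Finset.sum_le_sum hterm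
      _ = ((Finset.Ico 1 n).card : ℝ) * (n : ℝ) := by rw [Finset.sum_const, nsmul_eq_mul]
      _ ≤ (n : ℝ) * (n : ℝ) := by
          apply mul_le_mul_of_nonneg_right _ (Nat.cast_nonneg n)
          rw [Nat.card_Ico]
          exact_mod_cast Nat.sub_le n 1
  rw [Real.norm_eq_abs, U]
  calc |(n : ℝ) + 2 * ∑ k ∈ Finset.Ico 1 n, ((n : ℝ) - (k : ℝ)) * (z ^ k).re|
      ≤ |(n : ℝ)| + |2 * ∑ k ∈ Finset.Ico 1 n, ((n : ℝ) - (k : ℝ)) * (z ^ k).re| :=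
        abs_add_le _ _
    _ ≤ (n : ℝ) + 2 * ((n : ℝ) * (n : ℝ)) := by
        rw [abs_mul, abs_of_nonneg (Nat.cast_nonneg n : (0:ℝ) ≤ n)]
        have : |(2 : ℝ)| = 2 := by norm_num
        rw [this]
        linarith

lemma A_bound {z : ℂ} (hz : ‖z‖ ≤ 1) (n : ℕ) :
    ‖A n z‖ ≤ (n : ℝ) * (n : ℝ) := by
  have habs : ‖∑ k ∈ Finset.range n, z ^ k‖ ≤ (n : ℝ) := by
    calc ‖∑ k ∈ Finset.range n, z ^ k‖
        ≤ ∑ k ∈ Finset.range n, ‖z ^ k‖ := norm_sum_le _ _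
      _ ≤ ∑ _k ∈ Finset.range n, (1 : ℝ) := by
          apply Finset.sum_le_sum
          intro k _
          rw [norm_pow]
          calc ‖z‖ ^ k ≤ 1 ^ k := pow_le_pow_left₀ (norm_nonneg z) hz k
            _ = 1 := one_pow k
      _ = (n : ℝ) := by simp
  rw [Real.norm_eq_abs, abs_of_nonneg (A_nonneg n z), A]
  nlinarith [norm_nonneg (∑ k ∈ Finset.range n, z ^ k)]

end VarThmAux


open VarThmAux in
/-- **Theorem 2.5(a).**  For a finite conjugation-invariant measure `ν` on the
closed unit disk (the transition spectral measure of a normal Markov chain),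
`Var_n/n` converges to a finite limit `K` iff `σ² < ∞` and `I_n` converges to
a finite limit `L`; in that case `K = σ² + L`. -/
theorem linear_variance_iff_sigma_finite_and_In_converges
    (ν : Measure ℂ) [IsFiniteMeasure ν]
    (hsupp : ν {z : ℂ | ¬ ‖z‖ ≤ 1} = 0)
    (hconj : ∀ A : Set ℂ, MeasurableSet A → ν ((starRingEnd ℂ) ⁻¹' A) = ν A) :
    ((∃ K : ℝ, Tendsto (fun n : ℕ => VarSeq ν n / (n : ℝ)) atTop (𝓝 K)) ↔
      (sigmaSq ν < ⊤ ∧ ∃ L : ℝ, Tendsto (Iseq ν) atTop (𝓝 L))) ∧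
    ∀ K L : ℝ, Tendsto (fun n : ℕ => VarSeq ν n / (n : ℝ)) atTop (𝓝 K) →
      Tendsto (Iseq ν) atTop (𝓝 L) → K = (sigmaSq ν).toReal + L := by
  have hae : ∀ᵐ z ∂ν, ‖z‖ ≤ 1 := ae_iff.mpr hsupp
  have hUint : ∀ n, Integrable (U n) ν := fun n =>
    Integrable.mono' (integrable_const ((n : ℝ) + 2 * ((n : ℝ) * (n : ℝ))))
      (U_cont n).aestronglyMeasurable
      (by filter_upwards [hae] with z hz; exact U_bound hz n)
  have hAint : ∀ n, Integrable (A n) ν := fun n =>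
    Integrable.mono' (integrable_const ((n : ℝ) * (n : ℝ)))
      (A_cont n).aestronglyMeasurable
      (by filter_upwards [hae] with z hz; exact A_bound hz n)
  have hfint : ∀ n, Integrable (f n) ν := by
    intro n
    have hfe : f n = fun z => (n : ℝ)⁻¹ * (U n z - A n z) := funext fun z => f_eq n z
    rw [hfe]
    exact ((hUint n).sub (hAint n)).const_mul _
  have hVar : ∀ n, VarSeq ν n = ∫ z, U n z ∂ν := fun n => rfl
  have hIseqd : ∀ n, Iseq ν n = (1 / (n : ℝ)) * ∫ z, A n z ∂ν := fun n => rfl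
  have hkey : ∀ n : ℕ, VarSeq ν n / (n : ℝ) = (∫ z, f n z ∂ν) + Iseq ν n := by
    intro n
    have h1 : ∫ z, f n z ∂ν
        = (n : ℝ)⁻¹ * ((∫ z, U n z ∂ν) - ∫ z, A n z ∂ν) := by
      simp_rw [f_eq]
      rw [MeasureTheory.integral_const_mul, integral_sub (hUint n) (hAint n)]
    rw [h1, hVar n, hIseqd n, div_eq_mul_inv, one_div]
    ring
  have hGnn : ∀ᵐ z ∂ν, 0 ≤ G z := by
    filter_upwards [hae] with z hz; exact G_nonneg hz
  have hsig : sigmaSq ν = ∫⁻ z, ENNReal.ofReal (G z) ∂ν := by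
    have hms : MeasurableSet {z : ℂ | z ≠ 1} := isOpen_ne.measurableSet
    rw [sigmaSq, ← lintegral_indicator hms]
    refine lintegral_congr fun z => ?_
    by_cases h : z = 1
    · subst h
      simp [Set.indicator, G]
    · simp [Set.indicator, h, G]
  have hIk : ∀ n, 0 ≤ Iseq ν n := by
    intro n
    rw [hIseqd n]
    exact mul_nonneg (by positivity) (integral_nonneg fun z => A_nonneg n z)
  have hGint : sigmaSq ν < ⊤ → Integrable G ν := by
    intro hσ
    refine ⟨G_meas.aestronglyMeasurable, ?_⟩
    rw [hasFiniteIntegral_iff_ofReal hGnn, ← hsig]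
    exact hσ
  have htoReal : ∫ z, G z ∂ν = (sigmaSq ν).toReal := by
    rw [integral_eq_lintegral_of_nonneg_ae hGnn G_meas.aestronglyMeasurable, ← hsig]
  have hDCT : sigmaSq ν < ⊤ →
      Tendsto (fun n => ∫ z, f n z ∂ν) atTop (𝓝 ((sigmaSq ν).toReal)) := by
    intro hσ
    have hd := tendsto_integral_of_dominated_convergence (μ := ν)
      (F := fun n z => f n z) (f := G) (fun z => 4 * G z)
      (fun n => (f_cont n).aestronglyMeasurable)
      ((hGint hσ).const_mul 4)
      (fun n => by
        filter_upwards [hae] with z hz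
        rw [Real.norm_of_nonneg (f_nonneg hz n)]
        exact f_le hz n)
      (by filter_upwards [hae] with z hz; exact f_tendsto hz)
    rwa [htoReal] at hd
  have hfwd : ∀ K : ℝ, Tendsto (fun n : ℕ => VarSeq ν n / (n : ℝ)) atTop (𝓝 K) →
      sigmaSq ν < ⊤ := by
    intro K hV
    obtain ⟨M, hM⟩ : ∃ M : ℝ, ∀ n : ℕ, VarSeq ν n / (n : ℝ) ≤ M := by
      obtain ⟨M, hM⟩ := hV.bddAbove_range
      exact ⟨M, fun n => hM ⟨n, rfl⟩⟩
    have hfn_nn : ∀ n, 0 ≤ᵐ[ν] f n := fun n => by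
      filter_upwards [hae] with z hz; exact f_nonneg hz n
    have hbound : ∀ n : ℕ, ∫⁻ z, ENNReal.ofReal (f n z) ∂ν ≤ ENNReal.ofReal M := by
      intro n
      rw [← ofReal_integral_eq_lintegral_ofReal (hfint n) (hfn_nn n)]
      apply ENNReal.ofReal_le_ofReal
      have h := hkey n
      linarith [hIk n, hM n]
    calc sigmaSq ν = ∫⁻ z, ENNReal.ofReal (G z) ∂ν := hsig
      _ = ∫⁻ z, Filter.liminf (fun n => ENNReal.ofReal (f n z)) atTop ∂ν := by
          apply lintegral_congr_ae
          filter_upwards [hae] with z hz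
          exact ((ENNReal.tendsto_ofReal (f_tendsto hz)).liminf_eq).symm
      _ ≤ Filter.liminf (fun n => ∫⁻ z, ENNReal.ofReal (f n z) ∂ν) atTop :=
          lintegral_liminf_le fun n =>
            ENNReal.measurable_ofReal.comp (f_cont n).measurable
      _ ≤ ENNReal.ofReal M := by
          calc Filter.liminf (fun n => ∫⁻ z, ENNReal.ofReal (f n z) ∂ν) atTop
              ≤ Filter.liminf (fun _ : ℕ => ENNReal.ofReal M) atTop :=
                Filter.liminf_le_liminf (Filter.Eventually.of_forall hbound)
            _ = ENNReal.ofReal M := Filter.liminf_const _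
      _ < ⊤ := ENNReal.ofReal_lt_top
  have hforward : ∀ K : ℝ, Tendsto (fun n : ℕ => VarSeq ν n / (n : ℝ)) atTop (𝓝 K) →
      sigmaSq ν < ⊤ ∧ Tendsto (Iseq ν) atTop (𝓝 (K - (sigmaSq ν).toReal)) := by
    intro K hV
    have hσ := hfwd K hV
    refine ⟨hσ, ?_⟩
    have hsub := hV.sub (hDCT hσ)
    refine hsub.congr fun n => ?_
    have h := hkey n
    linarith
  have hbackward : ∀ L : ℝ, sigmaSq ν < ⊤ → Tendsto (Iseq ν) atTop (𝓝 L) →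
      Tendsto (fun n : ℕ => VarSeq ν n / (n : ℝ)) atTop
        (𝓝 ((sigmaSq ν).toReal + L)) := by
    intro L hσ hI
    exact ((hDCT hσ).add hI).congr fun n => (hkey n).symm
  constructor
  · constructor
    · rintro ⟨K, hV⟩
      obtain ⟨hσ, hI⟩ := hforward K hV
      exact ⟨hσ, K - (sigmaSq ν).toReal, hI⟩
    · rintro ⟨hσ, L, hI⟩
      exact ⟨(sigmaSq ν).toReal + L, hbackward L hσ hI⟩
  · intro K L hV hI
    obtain ⟨hσ, hI'⟩ := hforward K hV
    have hu := tendsto_nhds_unique hI hI'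
    linarith
end

section
/- Define σ² := ∫_{D∖{1}} (1−|z|²)/|1−z|² ν(dz), and for x > 0 set U_x := {z ∈ D : z ≠ 0 and 1−|z| ≤ |arg z| ≤ x} with arg z ∈ (−π,π], and for n ≥ 1 set D_n := {z = r·e^{iu} : 1−1/n ≤ r ≤ 1, |u| ≤ 1/n}. Assume σ² < ∞. Then for any constant C ≥ 0, ν(U_x)/x → C as x → 0⁺ if and only if n·ν(D_n) → C as n → ∞. -/
open MeasureTheory Filter Topology Set

/-- `U_x = {z ∈ D : z ≠ 0, 1-|z| ≤ |arg z| ≤ x}`, with `arg z ∈ (-π,π]`. -/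
def Uset (x : ℝ) : Set ℂ :=
  {z : ℂ | ‖z‖ ≤ 1 ∧ z ≠ 0 ∧
    1 - ‖z‖ ≤ |Complex.arg z| ∧ |Complex.arg z| ≤ x}

/-- `D_n = {z = r e^{iu} : 1-1/n ≤ r ≤ 1, |u| ≤ 1/n}`. -/
def Dset (n : ℕ) : Set ℂ :=
  {z : ℂ | ∃ r u : ℝ, 1 - 1 / (n : ℝ) ≤ r ∧ r ≤ 1 ∧ |u| ≤ 1 / (n : ℝ) ∧
    z = (r : ℂ) * Complex.exp (u * Complex.I)}

namespace NuAux

/-- The density appearing in `sigmaSq`. -/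
noncomputable def fE : ℂ → ENNReal := fun z =>
  ENNReal.ofReal ((1 - ‖z‖ ^ 2) / ‖1 - z‖ ^ 2)

lemma measurable_fE : Measurable fE := by
  apply ENNReal.measurable_ofReal.comp
  have h1 : Measurable fun z : ℂ => ‖z‖ := continuous_norm.measurable
  have h2 : Measurable fun z : ℂ => ‖1 - z‖ :=
    (continuous_norm.comp (continuous_const.sub continuous_id)).measurable
  exact (measurable_const.sub (h1.pow_const 2)).div (h2.pow_const 2)

lemma measurableSet_Uset (x : ℝ) : MeasurableSet (Uset x) := by
  have habs : Measurable fun z : ℂ => ‖z‖ := continuous_norm.measurable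
  have harg : Measurable fun z : ℂ => |Complex.arg z| := Complex.measurable_arg.abs
  have h2 : MeasurableSet {z : ℂ | z ≠ 0} := by
    have : {z : ℂ | z ≠ 0} = ({(0 : ℂ)} : Set ℂ)ᶜ := by ext z; simp
    rw [this]; exact (measurableSet_singleton 0).compl
  simp only [Uset, setOf_and]
  exact ((measurableSet_le habs measurable_const).inter
    (h2.inter ((measurableSet_le (measurable_const.sub habs) harg).inter
      (measurableSet_le harg measurable_const))))

lemma Uset_mono {x y : ℝ} (h : x ≤ y) : Uset x ⊆ Uset y :=
  fun _ hz => ⟨hz.1, hz.2.1, hz.2.2.1, hz.2.2.2.trans h⟩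

lemma arg_rexp {r u : ℝ} (hr : 0 < r) (h1 : -Real.pi < u) (h2 : u ≤ Real.pi) :
    Complex.arg ((r : ℂ) * Complex.exp (u * Complex.I)) = u := by
  rw [Complex.exp_mul_I]
  exact Complex.arg_mul_cos_add_sin_mul_I hr ⟨h1, h2⟩

lemma abs_rexp (r u : ℝ) (hr : 0 ≤ r) :
    ‖(r : ℂ) * Complex.exp (u * Complex.I)‖ = r := by
  rw [norm_mul, Complex.norm_real, Complex.norm_exp_ofReal_mul_I, mul_one, Real.norm_eq_abs, abs_of_nonneg hr]

lemma Dset_eq {n : ℕ} (hn : 2 ≤ n) :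
    Dset n = {z : ℂ | 1 - 1 / (n : ℝ) ≤ ‖z‖ ∧ ‖z‖ ≤ 1 ∧
      |Complex.arg z| ≤ 1 / (n : ℝ)} := by
  have hn2 : (2 : ℝ) ≤ (n : ℝ) := by exact_mod_cast hn
  have hn0 : (0 : ℝ) < (n : ℝ) := by linarith
  have hinv : 1 / (n : ℝ) ≤ 1 / 2 := by
    rw [div_le_div_iff₀ hn0 (by norm_num)]; linarith
  ext z
  constructor
  · rintro ⟨r, u, hr1, hr2, hu, rfl⟩
    have hr0 : 0 < r := by
      have : 1 - 1 / (n : ℝ) ≥ 1 / 2 := by linarith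
      linarith
    have hupi : -Real.pi < u ∧ u ≤ Real.pi := by
      have hpi := Real.pi_gt_three
      have := abs_le.mp hu
      constructor <;> nlinarith
    rw [mem_setOf_eq, abs_rexp r u hr0.le, arg_rexp hr0 hupi.1 hupi.2]
    exact ⟨hr1, hr2, hu⟩
  · rintro ⟨h1, h2, h3⟩
    exact ⟨‖z‖, Complex.arg z, h1, h2, h3,
      (Complex.norm_mul_exp_arg_mul_I z).symm⟩

lemma measurableSet_Dset {n : ℕ} (hn : 2 ≤ n) : MeasurableSet (Dset n) := by
  rw [Dset_eq hn]
  have habs : Measurable fun z : ℂ => ‖z‖ := continuous_norm.measurable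
  have harg : Measurable fun z : ℂ => |Complex.arg z| := Complex.measurable_arg.abs
  simp only [setOf_and]
  exact ((measurableSet_le measurable_const habs).inter
    ((measurableSet_le habs measurable_const).inter
      (measurableSet_le harg measurable_const)))

lemma Uset_subset_Dset (n : ℕ) : Uset (1 / (n : ℝ)) ⊆ Dset n := by
  rintro z ⟨h1, h2, h3, h4⟩
  exact ⟨‖z‖, Complex.arg z, by linarith, h1, h4,
    (Complex.norm_mul_exp_arg_mul_I z).symm⟩

/-- Auxiliary shrinking sets on which the density is large. -/
def Sprime (m : ℕ) : Set ℂ :=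
  {z : ℂ | ‖z‖ ≤ 1 ∧ |Complex.arg z| < 1 - ‖z‖ ∧
    1 - ‖z‖ ≤ 1 / (m : ℝ)}

lemma measurableSet_Sprime (m : ℕ) : MeasurableSet (Sprime m) := by
  have habs : Measurable fun z : ℂ => ‖z‖ := continuous_norm.measurable
  have harg : Measurable fun z : ℂ => |Complex.arg z| := Complex.measurable_arg.abs
  simp only [Sprime, setOf_and]
  exact ((measurableSet_le habs measurable_const).inter
    ((measurableSet_lt harg (measurable_const.sub habs)).inter
      (measurableSet_le (measurable_const.sub habs) measurable_const)))

lemma W_subset_Sprime {n : ℕ} (hn : 2 ≤ n) :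
    Dset n \ Uset (1 / (n : ℝ)) ⊆ Sprime n := by
  rintro z ⟨hD, hU⟩
  rw [Dset_eq hn, mem_setOf_eq] at hD
  obtain ⟨h1, h2, h3⟩ := hD
  have hn2 : (2 : ℝ) ≤ (n : ℝ) := by exact_mod_cast hn
  have hz0 : z ≠ 0 := by
    intro h
    rw [h] at h1
    simp only [norm_zero] at h1
    have : 1 / (n : ℝ) ≤ 1 / 2 := by
      rw [div_le_div_iff₀ (by linarith) (by norm_num)]; linarith
    linarith
  have harg : |Complex.arg z| < 1 - ‖z‖ := by
    by_contra hc
    push_neg at hc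
    exact hU ⟨h2, hz0, hc, h3⟩
  exact ⟨h2, harg, by linarith⟩

lemma Sprime_subset_ne_one (m : ℕ) : Sprime m ⊆ {z : ℂ | z ≠ 1} := by
  rintro z ⟨h1, h2, _⟩
  intro h
  rw [h] at h2
  simp only [norm_one, sub_self, Complex.arg_one, abs_zero] at h2
  exact lt_irrefl 0 h2

lemma fE_lower {m : ℕ} (hm : 1 ≤ m) {z : ℂ} (hz : z ∈ Sprime m) :
    ENNReal.ofReal ((m : ℝ) / 2) ≤ fE z := by
  obtain ⟨habs, hlt, hle⟩ := hz
  set r := ‖z‖ with hr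
  set u := Complex.arg z with hu
  have hr0 : 0 ≤ r := norm_nonneg z
  have hr1 : r < 1 := by
    have := abs_nonneg u
    linarith
  have hm0 : (0 : ℝ) < (m : ℝ) := by exact_mod_cast hm
  have hre : z.re = r * Real.cos u := (Complex.norm_mul_cos_arg z).symm
  have him : z.im = r * Real.sin u := (Complex.norm_mul_sin_arg z).symm
  have hsq : ‖1 - z‖ ^ 2 = 1 - 2 * r * Real.cos u + r ^ 2 := by
    rw [Complex.sq_norm, Complex.normSq_apply, Complex.sub_re, Complex.sub_im,
      Complex.one_re, Complex.one_im, hre, him]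
    have h1 : Real.sin u ^ 2 + Real.cos u ^ 2 = 1 := Real.sin_sq_add_cos_sq u
    nlinarith [h1]
  have hu2 : u ^ 2 ≤ (1 - r) ^ 2 := by
    have h := abs_le.mp hlt.le
    nlinarith [h.1, h.2]
  have hcos : 1 - u ^ 2 / 2 ≤ Real.cos u := Real.one_sub_sq_div_two_le_cos
  have hub : ‖1 - z‖ ^ 2 ≤ 2 * (1 - r) ^ 2 := by
    nlinarith [mul_nonneg hr0 (by linarith : (0 : ℝ) ≤ Real.cos u - (1 - u ^ 2 / 2)),
      mul_nonneg (by linarith : (0 : ℝ) ≤ 1 - r) (sq_nonneg u)]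
  have hlb : (1 - r) ^ 2 ≤ ‖1 - z‖ ^ 2 := by
    nlinarith [mul_nonneg hr0 (by linarith [Real.cos_le_one u] : (0 : ℝ) ≤ 1 - Real.cos u)]
  have hd : 0 < ‖1 - z‖ ^ 2 := lt_of_lt_of_le (pow_pos (by linarith : (0:ℝ) < 1 - r) 2) hlb
  apply ENNReal.ofReal_le_ofReal
  rw [le_div_iff₀ hd]
  have hmr : (1 - r) * (m : ℝ) ≤ 1 := by
    rw [← le_div_iff₀ hm0]
    linarith [hle]
  nlinarith [mul_le_mul_of_nonneg_left hub (by positivity : (0 : ℝ) ≤ (m : ℝ) / 2),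
    mul_le_mul_of_nonneg_right hmr (by linarith : (0 : ℝ) ≤ 1 - r),
    mul_nonneg hr0 (by linarith : (0 : ℝ) ≤ 1 - r)]

lemma antitone_Sprime : Antitone fun m : ℕ => Sprime (m + 1) := by
  intro m n hmn z hz
  obtain ⟨h1, h2, h3⟩ := hz
  refine ⟨h1, h2, h3.trans ?_⟩
  apply one_div_le_one_div_of_le
  · positivity
  · exact_mod_cast Nat.succ_le_succ hmn

lemma iInter_Sprime : (⋂ m : ℕ, Sprime (m + 1)) = ∅ := by
  rw [eq_empty_iff_forall_notMem]
  intro z hz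
  have h0 := mem_iInter.mp hz 0
  obtain ⟨_, h2, _⟩ := h0
  set t := 1 - ‖z‖ with ht
  have ht0 : 0 < t := lt_of_le_of_lt (abs_nonneg _) h2
  obtain ⟨m, hm⟩ := exists_nat_gt (1 / t)
  have hmem := mem_iInter.mp hz m
  obtain ⟨_, _, h3⟩ := hmem
  have : 1 / ((m : ℝ) + 1) < t := by
    rw [div_lt_iff₀ (by positivity)]
    have : 1 / t < (m : ℝ) + 1 := by linarith
    rw [div_lt_iff₀ ht0] at this
    linarith [this]
  have : t < t := lt_of_le_of_lt (by exact_mod_cast h3) this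
  exact lt_irrefl t this

lemma tendsto_G (ν : Measure ℂ) [IsFiniteMeasure ν] (hσ : sigmaSq ν < ⊤) :
    Tendsto (fun m : ℕ => ∫⁻ z in Sprime m, fE z ∂ν) atTop (𝓝 0) := by
  have hbound : ∀ m : ℕ, (∫⁻ z in Sprime m, fE z ∂ν) ≤ sigmaSq ν := by
    intro m
    exact lintegral_mono_set (Sprime_subset_ne_one m)
  set μ := ν.withDensity fE with hμ
  have happ : ∀ m : ℕ, μ (Sprime m) = ∫⁻ z in Sprime m, fE z ∂ν := fun m =>
    withDensity_apply fE (measurableSet_Sprime m)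
  have hfin : μ (Sprime 1) ≠ ⊤ := by
    rw [happ]
    exact ne_top_of_le_ne_top hσ.ne (hbound 1)
  have htend : Tendsto (fun m : ℕ => μ (Sprime (m + 1))) atTop (𝓝 0) := by
    have h := tendsto_measure_iInter_atTop (μ := μ)
      (fun m => (measurableSet_Sprime (m + 1)).nullMeasurableSet) antitone_Sprime
      ⟨0, by rw [zero_add]; exact hfin⟩
    rw [iInter_Sprime, measure_empty] at h
    exact h
  have : Tendsto (fun m : ℕ => μ (Sprime m)) atTop (𝓝 0) :=
    (tendsto_add_atTop_iff_nat 1).mp htend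
  exact this.congr fun m => happ m

lemma tendsto_n_nu_W (ν : Measure ℂ) [IsFiniteMeasure ν] (hσ : sigmaSq ν < ⊤) :
    Tendsto (fun n : ℕ => (n : ℝ) * (ν (Dset n \ Uset (1 / (n : ℝ)))).toReal)
      atTop (𝓝 0) := by
  have hG := tendsto_G ν hσ
  have hGreal : Tendsto (fun m : ℕ => 2 * (∫⁻ z in Sprime m, fE z ∂ν).toReal)
      atTop (𝓝 0) := by
    have h1 : Tendsto (fun m : ℕ => (∫⁻ z in Sprime m, fE z ∂ν).toReal) atTop (𝓝 0) := by
      have := (ENNReal.tendsto_toReal (a := 0) (by simp)).comp hG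
      simpa [Function.comp_def] using this
    have := h1.const_mul (2 : ℝ)
    simpa using this
  apply tendsto_of_tendsto_of_tendsto_of_le_of_le' tendsto_const_nhds hGreal
  · filter_upwards with n
    positivity
  · filter_upwards [eventually_ge_atTop 2] with n hn
    have hfinInt : (∫⁻ z in Sprime n, fE z ∂ν) ≠ ⊤ :=
      ne_top_of_le_ne_top hσ.ne (lintegral_mono_set (Sprime_subset_ne_one n))
    have hkey : ENNReal.ofReal ((n : ℝ) / 2) * ν (Sprime n) ≤
        ∫⁻ z in Sprime n, fE z ∂ν := by
      rw [← setLIntegral_const (Sprime n) (ENNReal.ofReal ((n : ℝ) / 2))]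
      exact setLIntegral_mono measurable_fE fun z hz =>
        fE_lower (le_trans (by norm_num) hn) hz
    have hkeyR : (n : ℝ) / 2 * (ν (Sprime n)).toReal ≤
        (∫⁻ z in Sprime n, fE z ∂ν).toReal := by
      have := ENNReal.toReal_mono hfinInt hkey
      rwa [ENNReal.toReal_mul, ENNReal.toReal_ofReal (by positivity)] at this
    have hW : (ν (Dset n \ Uset (1 / (n : ℝ)))).toReal ≤ (ν (Sprime n)).toReal :=
      ENNReal.toReal_mono (measure_ne_top ν _) (measure_mono (W_subset_Sprime hn))
    have hn0 : (0 : ℝ) ≤ (n : ℝ) := Nat.cast_nonneg n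
    nlinarith [hW, hkeyR]

end NuAux

open NuAux

/-- **Theorem 2.5(b), (ii) ⇔ (iii).**  For a finite conjugation-invariant
measure `ν` on the closed unit disk with `σ² < ∞`, and any `C ≥ 0`:
`ν(U_x)/x → C` as `x → 0⁺` iff `n ν(D_n) → C` as `n → ∞`. -/
theorem nu_Ux_regular_iff_n_nu_Dn
    (ν : Measure ℂ) [IsFiniteMeasure ν]
    (hsupp : ν {z : ℂ | ¬ ‖z‖ ≤ 1} = 0)
    (hconj : ∀ A : Set ℂ, MeasurableSet A → ν ((starRingEnd ℂ) ⁻¹' A) = ν A)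
    (hσ : sigmaSq ν < ⊤) (C : ℝ) (hC : 0 ≤ C) :
    Tendsto (fun x : ℝ => (ν (Uset x)).toReal / x) (𝓝[>] (0:ℝ)) (𝓝 C) ↔
      Tendsto (fun n : ℕ => (n : ℝ) * (ν (Dset n)).toReal) atTop (𝓝 C) := by
  set g : ℝ → ℝ := fun x => (ν (Uset x)).toReal / x with hg
  set b : ℕ → ℝ := fun n => (n : ℝ) * (ν (Uset (1 / (n : ℝ)))).toReal with hb
  set e : ℕ → ℝ := fun n => (n : ℝ) * (ν (Dset n \ Uset (1 / (n : ℝ)))).toReal with he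
  have hev : ∀ᶠ n : ℕ in atTop, (n : ℝ) * (ν (Dset n)).toReal = b n + e n := by
    filter_upwards [eventually_ge_atTop 2] with n hn
    have hsplit : ν (Dset n) = ν (Uset (1 / (n : ℝ))) + ν (Dset n \ Uset (1 / (n : ℝ))) := by
      conv_lhs => rw [← union_diff_cancel (Uset_subset_Dset n)]
      exact measure_union disjoint_sdiff_self_right
        ((measurableSet_Dset hn).diff (measurableSet_Uset _))
    rw [hsplit, ENNReal.toReal_add (measure_ne_top ν _) (measure_ne_top ν _)]
    simp only [hb, he]
    ring
  have heW : Tendsto e atTop (𝓝 0) := tendsto_n_nu_W ν hσ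
  -- equivalence of `n ν(D_n) → C` with `b → C`
  have hDb : Tendsto (fun n : ℕ => (n : ℝ) * (ν (Dset n)).toReal) atTop (𝓝 C) ↔
      Tendsto b atTop (𝓝 C) := by
    constructor
    · intro h
      have := h.sub heW
      rw [sub_zero] at this
      apply this.congr'
      filter_upwards [hev] with n hn
      rw [hn]; ring
    · intro h
      have := h.add heW
      rw [add_zero] at this
      apply this.congr'
      filter_upwards [hev] with n hn
      rw [hn]
  rw [hDb]
  constructor
  · -- forward: from g to b
    intro h
    have h1 : Tendsto (fun n : ℕ => 1 / (n : ℝ)) atTop (𝓝[>] (0 : ℝ)) := by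
      apply tendsto_nhdsWithin_of_tendsto_nhds_of_eventually_within _
        tendsto_one_div_atTop_nhds_zero_nat
      filter_upwards [eventually_ge_atTop 1] with n hn
      have : (0 : ℝ) < (n : ℝ) := by exact_mod_cast hn
      exact mem_Ioi.mpr (by positivity)
    have := h.comp h1
    apply this.congr
    intro n
    simp only [Function.comp_apply, hg, hb]
    rw [one_div, div_eq_mul_inv, inv_inv, mul_comm]
  · -- backward: squeeze
    intro h
    have hfloor : Tendsto (fun x : ℝ => ⌊1 / x⌋₊) (𝓝[>] (0 : ℝ)) atTop := by
      apply tendsto_nat_floor_atTop.comp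
      have : Tendsto (fun x : ℝ => x⁻¹) (𝓝[>] (0 : ℝ)) atTop := tendsto_inv_nhdsGT_zero
      exact this.congr fun x => (one_div x).symm
    have hupper : Tendsto (fun n : ℕ => (1 + 1 / (n : ℝ)) * b n) atTop (𝓝 C) := by
      have h1 : Tendsto (fun n : ℕ => 1 + 1 / (n : ℝ)) atTop (𝓝 1) := by
        have := tendsto_one_div_atTop_nhds_zero_nat.const_add (1 : ℝ)
        simpa using this
      have := h1.mul h
      simpa using this
    have hlower : Tendsto (fun n : ℕ => (1 - 1 / ((n : ℝ) + 1)) * b (n + 1)) atTop (𝓝 C) := by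
      have h1 : Tendsto (fun n : ℕ => 1 - 1 / ((n : ℝ) + 1)) atTop (𝓝 1) := by
        have := tendsto_one_div_add_atTop_nhds_zero_nat.const_sub (1 : ℝ)
        simpa using this
      have h2 : Tendsto (fun n : ℕ => b (n + 1)) atTop (𝓝 C) :=
        h.comp (tendsto_add_atTop_nat 1)
      have := h1.mul h2
      simpa using this
    apply tendsto_of_tendsto_of_tendsto_of_le_of_le' (hlower.comp hfloor) (hupper.comp hfloor)
    · -- lower bound
      filter_upwards [Ioc_mem_nhdsGT zero_lt_one, self_mem_nhdsWithin] with x hx hx0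
      have hx0 : (0 : ℝ) < x := hx0
      set n : ℕ := ⌊1 / x⌋₊ with hn
      have hx1 : 1 ≤ 1 / x := by rw [le_div_iff₀ hx0]; linarith [hx.2]
      have hn1 : 1 ≤ n := Nat.le_floor (by exact_mod_cast hx1)
      have hn0 : (0 : ℝ) < (n : ℝ) := by exact_mod_cast hn1
      have hfl : (n : ℝ) ≤ 1 / x := Nat.floor_le (by positivity)
      have hfu : 1 / x < (n : ℝ) + 1 := Nat.lt_floor_add_one (1 / x)
      have hsub : Uset (1 / ((n : ℝ) + 1)) ⊆ Uset x := by
        apply Uset_mono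
        rw [div_le_iff₀ (by positivity)]
        rw [div_lt_iff₀ hx0] at hfu
        nlinarith
      have ht' : (ν (Uset (1 / ((n : ℝ) + 1)))).toReal ≤ (ν (Uset x)).toReal :=
        ENNReal.toReal_mono (measure_ne_top ν _) (measure_mono hsub)
      have htx0 : (0 : ℝ) ≤ (ν (Uset x)).toReal := ENNReal.toReal_nonneg
      have hcast : ((n + 1 : ℕ) : ℝ) = (n : ℝ) + 1 := by push_cast; ring
      show (1 - 1 / ((n : ℝ) + 1)) * b (n + 1) ≤ g x
      have hbval : b (n + 1) = ((n : ℝ) + 1) * (ν (Uset (1 / ((n : ℝ) + 1)))).toReal := by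
        simp only [hb, hcast]
      rw [hbval]
      have hid : (1 - 1 / ((n : ℝ) + 1)) * (((n : ℝ) + 1) *
          (ν (Uset (1 / ((n : ℝ) + 1)))).toReal) =
          (n : ℝ) * (ν (Uset (1 / ((n : ℝ) + 1)))).toReal := by
        field_simp
        ring
      rw [hid]
      have step1 : (n : ℝ) * (ν (Uset (1 / ((n : ℝ) + 1)))).toReal ≤
          (n : ℝ) * (ν (Uset x)).toReal := by
        apply mul_le_mul_of_nonneg_left ht' (by positivity)
      have step2 : (n : ℝ) * (ν (Uset x)).toReal ≤ (1 / x) * (ν (Uset x)).toReal :=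
        mul_le_mul_of_nonneg_right hfl htx0
      calc (n : ℝ) * (ν (Uset (1 / ((n : ℝ) + 1)))).toReal
          ≤ (1 / x) * (ν (Uset x)).toReal := le_trans step1 step2
        _ = g x := by simp only [hg]; rw [one_div, inv_mul_eq_div]
    · -- upper bound
      filter_upwards [Ioc_mem_nhdsGT zero_lt_one, self_mem_nhdsWithin] with x hx hx0
      have hx0 : (0 : ℝ) < x := hx0
      set n : ℕ := ⌊1 / x⌋₊ with hn
      have hx1 : 1 ≤ 1 / x := by rw [le_div_iff₀ hx0]; linarith [hx.2]
      have hn1 : 1 ≤ n := Nat.le_floor (by exact_mod_cast hx1)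
      have hn0 : (0 : ℝ) < (n : ℝ) := by exact_mod_cast hn1
      have hfl : (n : ℝ) ≤ 1 / x := Nat.floor_le (by positivity)
      have hfu : 1 / x < (n : ℝ) + 1 := Nat.lt_floor_add_one (1 / x)
      have hsub : Uset x ⊆ Uset (1 / (n : ℝ)) := by
        apply Uset_mono
        rw [le_div_iff₀ hn0]
        rw [le_div_iff₀ hx0] at hfl
        nlinarith
      have ht' : (ν (Uset x)).toReal ≤ (ν (Uset (1 / (n : ℝ)))).toReal :=
        ENNReal.toReal_mono (measure_ne_top ν _) (measure_mono hsub)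
      have ht0 : (0 : ℝ) ≤ (ν (Uset (1 / (n : ℝ)))).toReal := ENNReal.toReal_nonneg
      show g x ≤ (1 + 1 / (n : ℝ)) * b n
      have hid : (1 + 1 / (n : ℝ)) * b n =
          ((n : ℝ) + 1) * (ν (Uset (1 / (n : ℝ)))).toReal := by
        simp only [hb]
        field_simp
      rw [hid]
      have step1 : g x ≤ (1 / x) * (ν (Uset (1 / (n : ℝ)))).toReal := by
        simp only [hg]
        rw [div_eq_inv_mul, ← one_div]
        exact mul_le_mul_of_nonneg_left ht' (by positivity)
      have step2 : (1 / x) * (ν (Uset (1 / (n : ℝ)))).toReal ≤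
          ((n : ℝ) + 1) * (ν (Uset (1 / (n : ℝ)))).toReal :=
        mul_le_mul_of_nonneg_right hfu.le ht0
      linarith
end

section
/- Assume ∫_D |1−z|^{−1} ν(dz) < ∞ (in particular ν({1}) = 0). Then σ² := ∫_{D∖{1}} (1−|z|²)/|1−z|² ν(dz) < ∞, (1/n) ∫_{D∖{1}} |1−z^n|²/|1−z|² ν(dz) → 0 as n → ∞, and Var_n/n → σ² as n → ∞. -/
set_option maxHeartbeats 1000000

open MeasureTheory Filter Topology Set

lemma poly_id (n : ℕ) (z : ℂ) :
    (1 - z) ^ 2 * ∑ k ∈ Finset.Ico 1 n, ((n : ℂ) - (k : ℂ)) * z ^ k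
      = z * ((n : ℂ) * (1 - z) - (1 - z ^ n)) := by
  induction n with
  | zero => simp
  | succ n ih =>
    rcases Nat.eq_zero_or_pos n with hn | hn
    · subst hn; simp
    rw [Finset.sum_Ico_succ_top (Nat.one_le_iff_ne_zero.mpr (by omega)),
      show ((n+1 : ℕ) : ℂ) - (n : ℂ) = 1 by push_cast; ring]
    have hsplit : ∑ k ∈ Finset.Ico 1 n, (((n+1 : ℕ) : ℂ) - (k : ℂ)) * z ^ k
        = (∑ k ∈ Finset.Ico 1 n, ((n : ℂ) - (k : ℂ)) * z ^ k)
          + ∑ k ∈ Finset.Ico 1 n, z ^ k := by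
      rw [← Finset.sum_add_distrib]
      refine Finset.sum_congr rfl fun k _ => by push_cast; ring
    rw [hsplit]
    have hico : ∑ k ∈ Finset.Ico 1 n, z ^ k = (∑ k ∈ Finset.range n, z ^ k) - 1 := by
      rw [Finset.range_eq_Ico, Finset.sum_eq_sum_Ico_succ_bot hn]
      simp
    have hgeom := geom_sum_mul z n
    rw [hico]
    push_cast
    linear_combination ih + ((z-1)*z - (1-z)^2) * hgeom

lemma main_id (n : ℕ) {z : ℂ} (hz : z ≠ 1) :
    (n : ℝ) + 2 * ∑ k ∈ Finset.Ico 1 n, ((n : ℝ) - (k : ℝ)) * (z ^ k).re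
      = (n : ℝ) * ((1 - ‖z‖ ^ 2) / ‖1 - z‖ ^ 2)
        - 2 * (z * (1 - z ^ n) / (1 - z) ^ 2).re := by
  have h1 : (1 : ℂ) - z ≠ 0 := sub_ne_zero.mpr (Ne.symm hz)
  set w := (starRingEnd ℂ) z with hw
  have h1c : (1 : ℂ) - w ≠ 0 := by
    intro h
    apply h1
    have := congrArg (starRingEnd ℂ) h
    simpa [hw] using this
  have hs1 : ∑ k ∈ Finset.Ico 1 n, ((n : ℂ) - (k : ℂ)) * z ^ k
      = z * ((n : ℂ) * (1 - z) - (1 - z ^ n)) / (1 - z) ^ 2 := by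
    rw [eq_div_iff (pow_ne_zero 2 h1)]
    linear_combination poly_id n z
  have hs2 : ∑ k ∈ Finset.Ico 1 n, ((n : ℂ) - (k : ℂ)) * w ^ k
      = w * ((n : ℂ) * (1 - w) - (1 - w ^ n)) / (1 - w) ^ 2 := by
    rw [eq_div_iff (pow_ne_zero 2 h1c)]
    linear_combination poly_id n w
  have hC : (n : ℂ) + ((∑ k ∈ Finset.Ico 1 n, ((n : ℂ) - (k : ℂ)) * z ^ k)
        + ∑ k ∈ Finset.Ico 1 n, ((n : ℂ) - (k : ℂ)) * w ^ k)
      = (n : ℂ) * (1 - z * w) / ((1 - z) * (1 - w))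
        - (z * (1 - z ^ n) / (1 - z) ^ 2 + w * (1 - w ^ n) / (1 - w) ^ 2) := by
    rw [hs1, hs2]
    field_simp
    ring
  have hre := congrArg Complex.re hC
  have hL : ((n : ℂ) + ((∑ k ∈ Finset.Ico 1 n, ((n : ℂ) - (k : ℂ)) * z ^ k)
        + ∑ k ∈ Finset.Ico 1 n, ((n : ℂ) - (k : ℂ)) * w ^ k)).re
      = (n : ℝ) + 2 * ∑ k ∈ Finset.Ico 1 n, ((n : ℝ) - (k : ℝ)) * (z ^ k).re := by
    have hterm : ∀ k : ℕ, (((n : ℂ) - (k : ℂ)) * z ^ k).re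
        = ((n : ℝ) - (k : ℝ)) * (z ^ k).re := by
      intro k
      rw [show ((n : ℂ) - (k : ℂ)) = (((n : ℝ) - (k : ℝ) : ℝ) : ℂ) by push_cast; ring,
        Complex.re_ofReal_mul]
    have hterm2 : ∀ k : ℕ, (((n : ℂ) - (k : ℂ)) * w ^ k).re
        = ((n : ℝ) - (k : ℝ)) * (z ^ k).re := by
      intro k
      rw [hw, ← map_pow, show ((n : ℂ) - (k : ℂ)) = (((n : ℝ) - (k : ℝ) : ℝ) : ℂ) by push_cast; ring,
        Complex.re_ofReal_mul, Complex.conj_re]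
    simp only [Complex.add_re, Complex.natCast_re, Complex.re_sum, hterm, hterm2]
    ring
  have hconjeq : w * (1 - w ^ n) / (1 - w) ^ 2
      = (starRingEnd ℂ) (z * (1 - z ^ n) / (1 - z) ^ 2) := by
    simp [hw, map_div₀, map_pow, map_sub]
  have hR1 : ((n : ℂ) * (1 - z * w) / ((1 - z) * (1 - w))).re
      = (n : ℝ) * ((1 - ‖z‖ ^ 2) / ‖1 - z‖ ^ 2) := by
    rw [hw, Complex.mul_conj, show (1 - z) * (1 - (starRingEnd ℂ) z)
        = (1 - z) * (starRingEnd ℂ) (1 - z) by simp, Complex.mul_conj]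
    rw [show ((n : ℂ) * (1 - (Complex.normSq z : ℂ)) / ((Complex.normSq (1 - z) : ℝ) : ℂ))
        = ((((n : ℝ) * (1 - Complex.normSq z) / Complex.normSq (1 - z)) : ℝ) : ℂ) by
      push_cast; ring]
    rw [Complex.ofReal_re, Complex.sq_norm, Complex.sq_norm]
    ring
  rw [hL, Complex.sub_re, hR1, Complex.add_re, hconjeq, Complex.conj_re] at hre
  rw [hre]; ring

lemma one_sub_pow_le (n : ℕ) {z : ℂ} (hz : ‖z‖ ≤ 1) :
    ‖1 - z ^ n‖ ≤ n * ‖1 - z‖ := by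
  have h : (1 : ℂ) - z ^ n = (∑ i ∈ Finset.range n, z ^ i) * (1 - z) := by
    linear_combination geom_sum_mul z n
  rw [h, norm_mul]
  have hsum : ‖∑ i ∈ Finset.range n, z ^ i‖ ≤ n := by
    calc ‖∑ i ∈ Finset.range n, z ^ i‖
        ≤ ∑ i ∈ Finset.range n, ‖z ^ i‖ := norm_sum_le _ _
      _ ≤ ∑ _i ∈ Finset.range n, (1 : ℝ) := by
          refine Finset.sum_le_sum fun i _ => ?_
          rw [norm_pow]
          exact pow_le_one₀ (norm_nonneg z) hz
      _ = n := by simp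
  exact mul_le_mul_of_nonneg_right hsum (norm_nonneg _)

lemma one_sub_pow_le_two (n : ℕ) {z : ℂ} (hz : ‖z‖ ≤ 1) :
    ‖1 - z ^ n‖ ≤ 2 := by
  have h1 : ‖1 - z ^ n‖ ≤ ‖(1 : ℂ)‖ + ‖z ^ n‖ := by
    exact norm_sub_le _ _
  have h2 : ‖z ^ n‖ ≤ 1 := by
    rw [norm_pow]
    exact pow_le_one₀ (norm_nonneg z) hz
  simp only [norm_one] at h1
  linarith

lemma g_le_bound (z : ℂ) :
    (1 - ‖z‖ ^ 2) / ‖1 - z‖ ^ 2 ≤ 2 * (1 / ‖1 - z‖) := by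
  rcases eq_or_ne z 1 with rfl | hz
  · simp
  have ha : 0 < ‖1 - z‖ := by
    rw [norm_pos_iff]
    exact sub_ne_zero.mpr (Ne.symm hz)
  rcases le_or_gt (‖z‖) 1 with h | h
  · have h1 : 1 - ‖z‖ ≤ ‖1 - z‖ := by
      have := norm_sub_norm_le (1 : ℂ) z
      simpa using this
    rw [div_le_iff₀ (by positivity)]
    have he : 2 * (1 / ‖1 - z‖) * ‖1 - z‖ ^ 2
        = 2 * ‖1 - z‖ := by
      field_simp
    rw [he]
    nlinarith [norm_nonneg z]
  · have hnum : 1 - ‖z‖ ^ 2 ≤ 0 := by nlinarith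
    have : (1 - ‖z‖ ^ 2) / ‖1 - z‖ ^ 2 ≤ 0 :=
      div_nonpos_iff.mpr (Or.inr ⟨hnum, by positivity⟩)
    have hb : (0 : ℝ) ≤ 2 * (1 / ‖1 - z‖) := by positivity
    linarith

/-- **Gordin–Lifšic condition (remark after Theorem 2.5).**  If
`∫_D |1-z|⁻¹ ν(dz) < ∞` (in particular `ν({1}) = 0`), then `σ² < ∞`,
`(1/n) ∫_D |1-zⁿ|²/|1-z|² ν(dz) → 0`, and `Var_n/n → σ²`. -/
theorem gordin_lifsic_linear_variance
    (ν : Measure ℂ) [IsFiniteMeasure ν]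
    (hsupp : ν {z : ℂ | ¬ ‖z‖ ≤ 1} = 0)
    (hconj : ∀ A : Set ℂ, MeasurableSet A → ν ((starRingEnd ℂ) ⁻¹' A) = ν A)
    (hGL : ∫⁻ z, (ENNReal.ofReal ‖1 - z‖)⁻¹ ∂ν < ⊤) :
    ν {(1 : ℂ)} = 0 ∧
    sigmaSq ν < ⊤ ∧
    Tendsto (fun n : ℕ => (1 / (n : ℝ)) * ∫ z in {z : ℂ | z ≠ 1},
        ‖1 - z ^ n‖ ^ 2 / ‖1 - z‖ ^ 2 ∂ν) atTop (𝓝 0) ∧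
    Tendsto (fun n : ℕ => VarSeq ν n / (n : ℝ)) atTop (𝓝 (sigmaSq ν).toReal) := by
  -- ν {1} = 0
  have hone : ν {(1 : ℂ)} = 0 := by
    by_contra h
    have h0 : ∫⁻ z in {(1 : ℂ)}, (ENNReal.ofReal (‖1 - z‖))⁻¹ ∂ν = ⊤ := by
      rw [lintegral_singleton]
      simp only [sub_self, norm_zero, ENNReal.ofReal_zero, ENNReal.inv_zero]
      exact ENNReal.top_mul h
    have hle := setLIntegral_le_lintegral {(1 : ℂ)}
      (fun z => (ENNReal.ofReal (‖1 - z‖))⁻¹) (μ := ν)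
    rw [h0] at hle
    exact absurd (lt_of_le_of_lt hle hGL) (lt_irrefl _)
  have hne : ∀ᵐ z ∂ν, z ≠ 1 := by
    rw [ae_iff]
    convert hone using 2
    ext z; simp
  have hD : ∀ᵐ z ∂ν, ‖z‖ ≤ 1 := by
    rw [ae_iff]; exact hsupp
  have hres : ν.restrict {z : ℂ | z ≠ 1} = ν := Measure.restrict_eq_self_of_ae_mem hne
  -- measurability of the basic function
  have m1 : Measurable fun z : ℂ => ‖1 - z‖ :=
    (continuous_norm.comp (continuous_const.sub continuous_id)).measurable
  -- integrability of 1 / |1 - z|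
  have hlint : ∫⁻ z, ENNReal.ofReal (1 / ‖1 - z‖) ∂ν < ⊤ := by
    refine lt_of_le_of_lt (lintegral_mono_ae (hne.mono fun z hz => ?_)) hGL
    have ha : 0 < ‖1 - z‖ := by
      rw [norm_pos_iff]; exact sub_ne_zero.mpr (Ne.symm hz)
    rw [one_div, ENNReal.ofReal_inv_of_pos ha]
  have hint1 : Integrable (fun z => 1 / ‖1 - z‖) ν := by
    refine ⟨((measurable_const.div m1).aestronglyMeasurable), ?_⟩
    rw [hasFiniteIntegral_iff_ofReal (Eventually.of_forall fun z => by positivity)]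
    exact hlint
  -- sigmaSq finite and equal to integral of g
  set g : ℂ → ℝ := fun z => (1 - ‖z‖ ^ 2) / ‖1 - z‖ ^ 2 with hgdef
  have hg_meas : Measurable g := by
    apply Measurable.div
    · exact (measurable_const.sub ((continuous_norm.measurable).pow_const 2))
    · exact m1.pow_const 2
  have hsig_eq : sigmaSq ν = ∫⁻ z, ENNReal.ofReal (g z) ∂ν := by
    rw [sigmaSq, hres]
  have hsig_lt : sigmaSq ν < ⊤ := by
    rw [hsig_eq]
    calc ∫⁻ z, ENNReal.ofReal (g z) ∂ν
        ≤ ∫⁻ z, ENNReal.ofReal (2 * (1 / ‖1 - z‖)) ∂ν :=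
          lintegral_mono fun z => ENNReal.ofReal_le_ofReal (g_le_bound z)
      _ = 2 * ∫⁻ z, ENNReal.ofReal (1 / ‖1 - z‖) ∂ν := by
          rw [← lintegral_const_mul 2 (by measurability)]
          · congr 1; ext z
            rw [ENNReal.ofReal_mul (by norm_num)]
            norm_num
      _ < ⊤ := by
          exact ENNReal.mul_lt_top (by norm_num) hlint
  -- toReal of sigmaSq equals Bochner integral of g
  have hg_nonneg : ∀ᵐ z ∂ν, 0 ≤ g z := by
    filter_upwards [hD, hne] with z h1 h2
    have ha : 0 < ‖1 - z‖ := by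
      rw [norm_pos_iff]; exact sub_ne_zero.mpr (Ne.symm h2)
    apply div_nonneg
    · nlinarith [norm_nonneg z]
    · positivity
  have hsig_toReal : (sigmaSq ν).toReal = ∫ z, g z ∂ν := by
    rw [integral_eq_lintegral_of_nonneg_ae hg_nonneg hg_meas.aestronglyMeasurable, hsig_eq]
  -- Part 3
  have part3 : Tendsto (fun n : ℕ => (1 / (n : ℝ)) * ∫ z in {z : ℂ | z ≠ 1},
      ‖1 - z ^ n‖ ^ 2 / ‖1 - z‖ ^ 2 ∂ν) atTop (𝓝 0) := by
    have heq : ∀ n : ℕ, (1 / (n : ℝ)) * ∫ z in {z : ℂ | z ≠ 1},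
        ‖1 - z ^ n‖ ^ 2 / ‖1 - z‖ ^ 2 ∂ν
        = ∫ z, (1 / (n : ℝ)) * (‖1 - z ^ n‖ ^ 2 / ‖1 - z‖ ^ 2) ∂ν := by
      intro n
      rw [hres, integral_const_mul]
    simp only [heq]
    have hdct := tendsto_integral_of_dominated_convergence
      (μ := ν)
      (F := fun n z => (1 / (n : ℝ)) * (‖1 - z ^ n‖ ^ 2 / ‖1 - z‖ ^ 2))
      (f := fun _ => (0 : ℝ))
      (bound := fun z => 2 * (1 / ‖1 - z‖))
      (fun n => by
        apply AEStronglyMeasurable.const_mul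
        apply Measurable.aestronglyMeasurable
        apply Measurable.div
        · exact ((continuous_norm.comp
            (continuous_const.sub (continuous_pow n))).measurable).pow_const 2
        · exact m1.pow_const 2)
      (hint1.const_mul 2)
      (fun n => by
        filter_upwards [hD, hne] with z h1 h2
        have ha : 0 < ‖1 - z‖ := by
          rw [norm_pos_iff]; exact sub_ne_zero.mpr (Ne.symm h2)
        rcases Nat.eq_zero_or_pos n with rfl | hn
        · simp
        have hn' : (0 : ℝ) < n := by exact_mod_cast hn
        have hb2 : ‖1 - z ^ n‖ ≤ 2 := one_sub_pow_le_two n h1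
        have hbn : ‖1 - z ^ n‖ ≤ n * ‖1 - z‖ := one_sub_pow_le n h1
        have hnn : (0 : ℝ) ≤ (1 / (n : ℝ)) * (‖1 - z ^ n‖ ^ 2
            / ‖1 - z‖ ^ 2) := by positivity
        rw [Real.norm_eq_abs, abs_of_nonneg hnn]
        have hkey : ‖1 - z ^ n‖ ^ 2 ≤ 2 * ((n : ℝ) * ‖1 - z‖) := by
          nlinarith [norm_nonneg (1 - z ^ n)]
        calc (1 / (n : ℝ)) * (‖1 - z ^ n‖ ^ 2 / ‖1 - z‖ ^ 2)
            ≤ (1 / (n : ℝ)) * ((2 * ((n : ℝ) * ‖1 - z‖)) / ‖1 - z‖ ^ 2) := by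
              gcongr
          _ = 2 * (1 / ‖1 - z‖) := by field_simp)
      (by
        filter_upwards [hD, hne] with z h1 h2
        have ha : 0 < ‖1 - z‖ := by
          rw [norm_pos_iff]; exact sub_ne_zero.mpr (Ne.symm h2)
        apply squeeze_zero
        · intro n; positivity
        · intro n
          show (1 / (n : ℝ)) * (‖1 - z ^ n‖ ^ 2 / ‖1 - z‖ ^ 2)
            ≤ (4 / ‖1 - z‖ ^ 2) * (1 / (n : ℝ))
          have hb2 : ‖1 - z ^ n‖ ≤ 2 := one_sub_pow_le_two n h1
          have hkey : ‖1 - z ^ n‖ ^ 2 ≤ 4 := by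
            nlinarith [norm_nonneg (1 - z ^ n)]
          have h4 : ‖1 - z ^ n‖ ^ 2 / ‖1 - z‖ ^ 2
              ≤ 4 / ‖1 - z‖ ^ 2 := by gcongr
          rw [mul_comm]
          exact mul_le_mul_of_nonneg_right h4 (by positivity)
        · simpa only [mul_zero] using (tendsto_one_div_atTop_nhds_zero_nat : Tendsto (fun n : ℕ => 1 / (n : ℝ)) atTop (𝓝 0)).const_mul
            (4 / ‖1 - z‖ ^ 2))
    simpa using hdct
  have part4 : Tendsto (fun n : ℕ => VarSeq ν n / (n : ℝ)) atTop (𝓝 ((sigmaSq ν).toReal)) := by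
    have heq : ∀ n : ℕ, VarSeq ν n / (n : ℝ)
        = ∫ z, ((n : ℝ) + 2 * ∑ k ∈ Finset.Ico 1 n, ((n : ℝ) - (k : ℝ)) * (z ^ k).re) / (n : ℝ) ∂ν :=
      fun n => (integral_div _ _).symm
    simp only [heq, hsig_toReal]
    refine tendsto_integral_of_dominated_convergence
      (fun z => 4 * (1 / ‖1 - z‖)) ?_ (hint1.const_mul 4) ?_ ?_
    · intro n
      apply Measurable.aestronglyMeasurable
      apply Measurable.div_const
      apply Measurable.add measurable_const
      apply Measurable.const_mul
      apply Finset.measurable_sum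
      intro k _
      exact (Complex.measurable_re.comp (measurable_id.pow_const k)).const_mul _
    · intro n
      filter_upwards [hD, hne] with z h1 h2
      have ha : 0 < ‖1 - z‖ := by
        rw [norm_pos_iff]; exact sub_ne_zero.mpr (Ne.symm h2)
      rcases Nat.eq_zero_or_pos n with rfl | hn
      · simp only [Nat.cast_zero, div_zero, norm_zero]
        positivity
      have hn' : (0 : ℝ) < n := by exact_mod_cast hn
      rw [main_id n h2]
      have hG0 : 0 ≤ (1 - ‖z‖ ^ 2) / ‖1 - z‖ ^ 2 := by
        apply div_nonneg
        · nlinarith [norm_nonneg z]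
        · positivity
      have hG2 : (1 - ‖z‖ ^ 2) / ‖1 - z‖ ^ 2
          ≤ 2 * (1 / ‖1 - z‖) := g_le_bound z
      set G := (1 - ‖z‖ ^ 2) / ‖1 - z‖ ^ 2 with hGdef
      set r := (z * (1 - z ^ n) / (1 - z) ^ 2).re with hrdef
      have hr : |r| ≤ (n : ℝ) * (1 / ‖1 - z‖) := by
        calc |r| ≤ ‖z * (1 - z ^ n) / (1 - z) ^ 2‖ := Complex.abs_re_le_norm _
          _ = ‖z‖ * ‖1 - z ^ n‖ / ‖1 - z‖ ^ 2 := by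
              rw [norm_div, norm_mul, norm_pow]
          _ ≤ 1 * ((n : ℝ) * ‖1 - z‖) / ‖1 - z‖ ^ 2 := by
              gcongr
              exact one_sub_pow_le n h1
          _ = (n : ℝ) * (1 / ‖1 - z‖) := by field_simp
      have hexp : ((n : ℝ) * G - 2 * r) / (n : ℝ) = G - 2 * r / n := by
        field_simp
      rw [hexp, Real.norm_eq_abs]
      have tri : |G - 2 * r / n| ≤ |G| + |2 * r / n| := by
        have := abs_add_le G (-(2 * r / n))
        simpa [sub_eq_add_neg] using this
      have h2rn : |2 * r / (n : ℝ)| ≤ 2 * (1 / ‖1 - z‖) := by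
        have habs : |2 * r / (n : ℝ)| = 2 * |r| / n := by
          rw [abs_div, abs_mul, abs_two, abs_of_pos hn']
        rw [habs, div_le_iff₀ hn']
        calc 2 * |r| ≤ 2 * ((n : ℝ) * (1 / ‖1 - z‖)) := by linarith [hr]
          _ = 2 * (1 / ‖1 - z‖) * n := by ring
      rw [abs_of_nonneg hG0] at tri
      calc |G - 2 * r / n| ≤ G + |2 * r / n| := tri
        _ ≤ 2 * (1 / ‖1 - z‖) + 2 * (1 / ‖1 - z‖) := by
            exact add_le_add hG2 h2rn
        _ = 4 * (1 / ‖1 - z‖) := by ring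
    · filter_upwards [hD, hne] with z h1 h2
      have ha : 0 < ‖1 - z‖ := by
        rw [norm_pos_iff]; exact sub_ne_zero.mpr (Ne.symm h2)
      have key : Tendsto (fun n : ℕ =>
          ((n : ℝ) + 2 * ∑ k ∈ Finset.Ico 1 n, ((n : ℝ) - (k : ℝ)) * (z ^ k).re) / (n : ℝ)
            - g z) atTop (𝓝 0) := by
        apply squeeze_zero_norm' (a := fun n : ℕ => (4 / ‖1 - z‖ ^ 2) * (1 / (n : ℝ)))
        · filter_upwards [eventually_ge_atTop 1] with n hn
          have hn' : (0 : ℝ) < n := by exact_mod_cast hn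
          rw [main_id n h2]
          have hgz : (1 - ‖z‖ ^ 2) / ‖1 - z‖ ^ 2 = g z := rfl
          rw [hgz]
          have hexp : ((n : ℝ) * g z - 2 * (z * (1 - z ^ n) / (1 - z) ^ 2).re) / (n : ℝ) - g z
              = -(2 * (z * (1 - z ^ n) / (1 - z) ^ 2).re) / n := by
            field_simp
            ring
          rw [hexp]
          set r := (z * (1 - z ^ n) / (1 - z) ^ 2).re with hrdef
          have hr : |r| ≤ 2 / ‖1 - z‖ ^ 2 := by
            calc |r| ≤ ‖z * (1 - z ^ n) / (1 - z) ^ 2‖ := Complex.abs_re_le_norm _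
              _ = ‖z‖ * ‖1 - z ^ n‖ / ‖1 - z‖ ^ 2 := by
                  rw [norm_div, norm_mul, norm_pow]
              _ ≤ 1 * 2 / ‖1 - z‖ ^ 2 := by
                  gcongr
                  exact one_sub_pow_le_two n h1
              _ = 2 / ‖1 - z‖ ^ 2 := by ring
          rw [Real.norm_eq_abs, abs_div, abs_neg, abs_mul, abs_two, abs_of_pos hn',
            div_le_iff₀ hn']
          have : 4 / ‖1 - z‖ ^ 2 * (1 / (n : ℝ)) * (n : ℝ)
              = 2 * (2 / ‖1 - z‖ ^ 2) := by
            field_simp; ring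
          rw [this]
          linarith [hr]
        · simpa only [mul_zero] using (tendsto_one_div_atTop_nhds_zero_nat : Tendsto (fun n : ℕ => 1 / (n : ℝ)) atTop (𝓝 0)).const_mul
            (4 / ‖1 - z‖ ^ 2)
      have := key.add (tendsto_const_nhds (x := g z) (f := atTop))
      simpa using this
  exact ⟨hone, hsig_lt, part3, part4⟩
end

section
/- For every real λ with 0 < λ < 1, the series ∑_{n=1}^∞ Var_n·λ^n converges and equals (λ/(1−λ)²) · ∫_D Re[(1+λz)/(1−λz)] ν(dz). -/
open MeasureTheory Filter Topology Set

-- Lemma A: ∑ (n+1) x^n = 1/(1-x)²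
lemma auxA {x : ℂ} (hx : ‖x‖ < 1) :
    HasSum (fun n : ℕ => ((n : ℂ) + 1) * x ^ n) (1 / (1 - x) ^ 2) := by
  have hx1 : (1 : ℂ) - x ≠ 0 := by
    intro h
    have : x = 1 := by linear_combination -h
    simp [this] at hx
  have h1 := hasSum_coe_mul_geometric_of_norm_lt_one hx
  have h2 := hasSum_geometric_of_norm_lt_one hx
  have h3 := h1.add h2
  have hfun : (fun n : ℕ => ((n : ℂ) + 1) * x ^ n)
      = fun n : ℕ => (n : ℂ) * x ^ n + x ^ n := by
    funext n; ring
  have hval : x / (1 - x) ^ 2 + (1 - x)⁻¹ = 1 / (1 - x) ^ 2 := by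
    field_simp
    ring
  rw [hfun, ← hval]
  exact h3

-- Lemma B: 1 + 2∑_{n≥1} wⁿ = (1+w)/(1-w)
lemma auxB {w : ℂ} (hw : ‖w‖ < 1) :
    HasSum (fun n : ℕ => if n = 0 then (1 : ℂ) else 2 * w ^ n) ((1 + w) / (1 - w)) := by
  have hw1 : (1 : ℂ) - w ≠ 0 := by
    intro h
    have : w = 1 := by linear_combination -h
    simp [this] at hw
  have h2 := (hasSum_geometric_of_norm_lt_one hw).mul_left 2
  have h0 : HasSum (fun n : ℕ => if n = 0 then (1 : ℂ) else 0) 1 := hasSum_ite_eq 0 1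
  have h := h2.sub h0
  have hfun : (fun n : ℕ => if n = 0 then (1 : ℂ) else 2 * w ^ n)
      = fun n : ℕ => 2 * w ^ n - (if n = 0 then (1 : ℂ) else 0) := by
    funext n
    by_cases hn : n = 0 <;> simp [hn] <;> norm_num
  have hval : 2 * (1 - w)⁻¹ - 1 = (1 + w) / (1 - w) := by
    field_simp
    ring
  rw [hfun, ← hval]
  exact h

-- Closed form for the Cauchy-product coefficient
lemma keyEq (z : ℂ) (l : ℝ) (n : ℕ) :
    ((l : ℂ) * ∑ k ∈ Finset.range (n + 1),
        (((k : ℂ) + 1) * (l : ℂ) ^ k) *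
          (if n - k = 0 then (1 : ℂ) else 2 * ((l : ℂ) * z) ^ (n - k))).re
      = (((n + 1 : ℕ) : ℝ)
          + 2 * ∑ k ∈ Finset.Ico 1 (n + 1), (((n + 1 : ℕ) : ℝ) - (k : ℝ)) * (z ^ k).re)
          * l ^ (n + 1) := by
  have hsum : ∑ k ∈ Finset.range (n + 1),
        (((k : ℂ) + 1) * (l : ℂ) ^ k) *
          (if n - k = 0 then (1 : ℂ) else 2 * ((l : ℂ) * z) ^ (n - k))
      = (l : ℂ) ^ n * (((n : ℂ) + 1)
          + 2 * ∑ k ∈ Finset.Ico 1 (n + 1), (((n : ℂ) + 1) - (k : ℂ)) * z ^ k) := by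
    rw [Finset.sum_range_succ]
    simp only [Nat.sub_self, reduceIte, mul_one]
    have hstep : ∀ k ∈ Finset.range n,
        (((k : ℂ) + 1) * (l : ℂ) ^ k) *
            (if n - k = 0 then (1 : ℂ) else 2 * ((l : ℂ) * z) ^ (n - k))
          = 2 * ((k : ℂ) + 1) * (l : ℂ) ^ n * z ^ (n - k) := by
      intro k hk
      rw [Finset.mem_range] at hk
      have hl : (l : ℂ) ^ k * (l : ℂ) ^ (n - k) = (l : ℂ) ^ n := by
        rw [← pow_add, Nat.add_sub_cancel' hk.le]
      rw [if_neg (by omega), mul_pow]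
      calc ((k : ℂ) + 1) * (l : ℂ) ^ k * (2 * ((l : ℂ) ^ (n - k) * z ^ (n - k)))
          = 2 * ((k : ℂ) + 1) * ((l : ℂ) ^ k * (l : ℂ) ^ (n - k)) * z ^ (n - k) := by ring
        _ = 2 * ((k : ℂ) + 1) * (l : ℂ) ^ n * z ^ (n - k) := by rw [hl]
    have hbij : ∑ k ∈ Finset.range n, 2 * ((k : ℂ) + 1) * (l : ℂ) ^ n * z ^ (n - k)
        = ∑ k ∈ Finset.Ico 1 (n + 1),
            2 * (((n : ℂ) + 1) - (k : ℂ)) * (l : ℂ) ^ n * z ^ k := by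
      refine Finset.sum_nbij' (i := fun k => n - k) (j := fun k => n - k)
        (fun k hk => by simp only [Finset.mem_range, Finset.mem_Ico] at hk ⊢; omega)
        (fun k hk => by simp only [Finset.mem_range, Finset.mem_Ico] at hk ⊢; omega)
        (fun k hk => by simp only [Finset.mem_range] at hk; beta_reduce; omega)
        (fun k hk => by simp only [Finset.mem_Ico] at hk; beta_reduce; omega)
        (fun k hk => ?_)
      simp only [Finset.mem_range] at hk
      have hcast : ((n - k : ℕ) : ℂ) = (n : ℂ) - (k : ℂ) := by
        push_cast [Nat.cast_sub hk.le]; ring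
      simp only [hcast]
      ring
    rw [Finset.sum_congr rfl hstep, hbij]
    simp only [mul_add, Finset.mul_sum]
    rw [add_comm]
    congr 1
    · ring
    · exact Finset.sum_congr rfl fun k _ => by ring
  rw [hsum, show (l : ℂ) * ((l : ℂ) ^ n * (((n : ℂ) + 1)
      + 2 * ∑ k ∈ Finset.Ico 1 (n + 1), (((n : ℂ) + 1) - (k : ℂ)) * z ^ k))
    = ((l ^ (n + 1) : ℝ) : ℂ) * (((n : ℂ) + 1)
      + 2 * ∑ k ∈ Finset.Ico 1 (n + 1), (((n : ℂ) + 1) - (k : ℂ)) * z ^ k) by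
      push_cast; ring]
  rw [Complex.re_ofReal_mul, mul_comm]
  congr 1
  have hre : ∀ k ∈ Finset.Ico 1 (n + 1),
      ((((n : ℂ) + 1) - (k : ℂ)) * z ^ k).re = (((n : ℝ) + 1) - (k : ℝ)) * (z ^ k).re := by
    intro k _
    rw [show ((n : ℂ) + 1) - (k : ℂ) = ((((n : ℝ) + 1) - (k : ℝ) : ℝ) : ℂ) by push_cast; ring,
      Complex.re_ofReal_mul]
  have h2re : ((((n : ℂ) + 1)
        + 2 * ∑ k ∈ Finset.Ico 1 (n + 1), (((n : ℂ) + 1) - (k : ℂ)) * z ^ k)).re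
      = ((n : ℝ) + 1)
        + 2 * ∑ k ∈ Finset.Ico 1 (n + 1), (((n : ℝ) + 1) - (k : ℝ)) * (z ^ k).re := by
    rw [Complex.add_re, show (2 : ℂ) = ((2 : ℝ) : ℂ) by norm_num, Complex.re_ofReal_mul,
      Complex.re_sum, Finset.sum_congr rfl hre]
    norm_num
  rw [h2re]
  push_cast
  ring

lemma auxC (l : ℝ) (hl0 : 0 < l) (hl1 : l < 1) (z : ℂ) (hz : ‖z‖ ≤ 1) :
    HasSum (fun n : ℕ => ∑ k ∈ Finset.range (n + 1),
        (((k : ℂ) + 1) * (l : ℂ) ^ k) *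
          (if n - k = 0 then (1 : ℂ) else 2 * ((l : ℂ) * z) ^ (n - k)))
      (1 / (1 - (l : ℂ)) ^ 2 * ((1 + (l : ℂ) * z) / (1 - (l : ℂ) * z))) := by
  have hxl : ‖(l : ℂ)‖ < 1 := by
    rw [Complex.norm_real, Real.norm_of_nonneg hl0.le]; exact hl1
  have hw : ‖(l : ℂ) * z‖ < 1 := by
    rw [norm_mul]
    calc ‖(l : ℂ)‖ * ‖z‖ ≤ ‖(l : ℂ)‖ * 1 := by
          refine mul_le_mul_of_nonneg_left ?_ (norm_nonneg _)
          exact hz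
      _ = ‖(l : ℂ)‖ := mul_one _
      _ < 1 := hxl
  have hf : HasSum (fun n : ℕ => ((n : ℂ) + 1) * (l : ℂ) ^ n) (1 / (1 - (l : ℂ)) ^ 2) :=
    auxA hxl
  have hg : HasSum (fun n : ℕ => if n = 0 then (1 : ℂ) else 2 * ((l : ℂ) * z) ^ n)
      ((1 + (l : ℂ) * z) / (1 - (l : ℂ) * z)) := auxB hw
  have hf' : Summable fun n : ℕ => ‖((n : ℂ) + 1) * (l : ℂ) ^ n‖ := by
    have hs : Summable fun n : ℕ => ((n : ℝ) + 1) * l ^ n := by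
      have := (hasSum_coe_mul_geometric_of_norm_lt_one
        (𝕜 := ℝ) (r := l) (by rw [Real.norm_of_nonneg hl0.le]; exact hl1)).summable
      have hgeo : Summable fun n : ℕ => l ^ n := summable_geometric_of_lt_one hl0.le hl1
      simpa [add_mul] using this.add hgeo
    refine hs.congr fun n => ?_
    rw [norm_mul, norm_pow, show ((n : ℂ) + 1) = (((n : ℝ) + 1 : ℝ) : ℂ) by push_cast; ring,
      Complex.norm_real, Complex.norm_real, Real.norm_of_nonneg (by positivity),
      Real.norm_of_nonneg hl0.le]
  have hg' : Summable fun n : ℕ =>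
      ‖if n = 0 then (1 : ℂ) else 2 * ((l : ℂ) * z) ^ n‖ := by
    have hs : Summable fun n : ℕ => 2 * ‖(l : ℂ) * z‖ ^ n :=
      (summable_geometric_of_lt_one (norm_nonneg _) hw).mul_left 2
    refine Summable.of_nonneg_of_le (fun n => norm_nonneg _) (fun n => ?_) hs
    by_cases hn : n = 0
    · simp [hn]
    · simp only [hn, if_neg hn, norm_mul, norm_pow]
      norm_num
  have hprod := hasSum_sum_range_mul_of_summable_norm hf' hg'
  rwa [hf.tsum_eq, hg.tsum_eq] at hprod

lemma pointwise_hasSum (l : ℝ) (hl0 : 0 < l) (hl1 : l < 1) (z : ℂ)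
    (hz : ‖z‖ ≤ 1) :
    HasSum (fun n : ℕ =>
        (((n + 1 : ℕ) : ℝ)
          + 2 * ∑ k ∈ Finset.Ico 1 (n + 1), (((n + 1 : ℕ) : ℝ) - (k : ℝ)) * (z ^ k).re)
          * l ^ (n + 1))
      (l / (1 - l) ^ 2 * ((1 + (l : ℂ) * z) / (1 - (l : ℂ) * z)).re) := by
  have hC := (auxC l hl0 hl1 z hz).mul_left (l : ℂ)
  have hre := Complex.reCLM.hasSum hC
  simp only [Complex.reCLM_apply] at hre
  have hval : ((l : ℂ) * (1 / (1 - (l : ℂ)) ^ 2 * ((1 + (l : ℂ) * z) / (1 - (l : ℂ) * z)))).re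
      = l / (1 - l) ^ 2 * ((1 + (l : ℂ) * z) / (1 - (l : ℂ) * z)).re := by
    rw [← mul_assoc, show (l : ℂ) * (1 / (1 - (l : ℂ)) ^ 2) = ((l / (1 - l) ^ 2 : ℝ) : ℂ) by
      push_cast; ring, Complex.re_ofReal_mul]
  rw [hval] at hre
  refine hre.congr_fun fun n => ?_
  exact (keyEq z l n).symm


/-- **Generating-function identity (remark (5) after Theorem 2.5).**
For a finite conjugation-invariant measure `ν` on the closed unit disk and
`0 < λ < 1`, the series `∑_{n≥1} Var_n λⁿ` converges with sum
`(λ/(1-λ)²) ∫_D Re[(1+λz)/(1-λz)] ν(dz)`. -/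
theorem variance_generating_function
    (ν : Measure ℂ) [IsFiniteMeasure ν]
    (hsupp : ν {z : ℂ | ¬ ‖z‖ ≤ 1} = 0)
    (hconj : ∀ A : Set ℂ, MeasurableSet A → ν ((starRingEnd ℂ) ⁻¹' A) = ν A)
    (l : ℝ) (hl0 : 0 < l) (hl1 : l < 1) :
    HasSum (fun n : ℕ => VarSeq ν (n + 1) * l ^ (n + 1))
      (l / (1 - l) ^ 2 *
        ∫ z, ((1 + (l : ℂ) * z) / (1 - (l : ℂ) * z)).re ∂ν) := by
  have hae : ∀ᵐ z ∂ν, ‖z‖ ≤ 1 := ae_iff.mpr hsupp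
  set F : ℕ → ℂ → ℝ := fun n z =>
    (((n + 1 : ℕ) : ℝ)
      + 2 * ∑ k ∈ Finset.Ico 1 (n + 1), (((n + 1 : ℕ) : ℝ) - (k : ℝ)) * (z ^ k).re)
      * l ^ (n + 1) with hF
  have hcont : ∀ n, Continuous (F n) := by
    intro n
    apply Continuous.mul _ continuous_const
    apply Continuous.add continuous_const
    apply Continuous.mul continuous_const
    apply continuous_finset_sum
    intro k _
    exact continuous_const.mul (Complex.continuous_re.comp (continuous_pow k))
  have hbound_sum : Summable (fun n : ℕ => 3 * ((n : ℝ) + 1) ^ 2 * l ^ (n + 1)) := by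
    have h0 : Summable (fun n : ℕ => ((n : ℝ)) ^ 2 * l ^ n) :=
      summable_pow_mul_geometric_of_norm_lt_one 2
        (by rw [Real.norm_of_nonneg hl0.le]; exact hl1)
    exact ((h0.comp_injective Nat.succ_injective).mul_left 3).congr fun n => by
      simp only [Function.comp_apply, Nat.succ_eq_add_one]; push_cast; ring
  have key := hasSum_integral_of_dominated_convergence (μ := ν) (F := F)
    (f := fun z => l / (1 - l) ^ 2 * ((1 + (l : ℂ) * z) / (1 - (l : ℂ) * z)).re)
    (bound := fun n _ => 3 * ((n : ℝ) + 1) ^ 2 * l ^ (n + 1))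
    (fun n => (hcont n).aestronglyMeasurable)
    (fun n => by
      filter_upwards [hae] with z hz
      have hterm : ∀ k ∈ Finset.Ico 1 (n + 1),
          |(((n + 1 : ℕ) : ℝ) - (k : ℝ)) * (z ^ k).re| ≤ (n : ℝ) + 1 := by
        intro k hk
        rw [Finset.mem_Ico] at hk
        rw [abs_mul]
        have hk1 : (1 : ℝ) ≤ (k : ℝ) := by exact_mod_cast hk.1
        have hk2 : (k : ℝ) ≤ (n : ℝ) + 1 := by
          have := hk.2
          push_cast
          exact_mod_cast Nat.lt_succ_iff.mp this |>.trans (Nat.le_succ n) |> Nat.cast_le.mpr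
        have h1 : |((n + 1 : ℕ) : ℝ) - (k : ℝ)| ≤ (n : ℝ) + 1 := by
          push_cast
          rw [abs_of_nonneg (by linarith)]
          linarith
        have h2 : |(z ^ k).re| ≤ 1 := by
          calc |(z ^ k).re| ≤ ‖z ^ k‖ := Complex.abs_re_le_norm _
            _ = ‖z‖ ^ k := norm_pow _ _
            _ ≤ 1 := pow_le_one₀ (norm_nonneg z) hz
        calc |((n + 1 : ℕ) : ℝ) - (k : ℝ)| * |(z ^ k).re|
            ≤ ((n : ℝ) + 1) * 1 := mul_le_mul h1 h2 (abs_nonneg _) (by positivity)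
          _ = (n : ℝ) + 1 := mul_one _
      have hphi : |((n + 1 : ℕ) : ℝ)
          + 2 * ∑ k ∈ Finset.Ico 1 (n + 1), (((n + 1 : ℕ) : ℝ) - (k : ℝ)) * (z ^ k).re|
          ≤ 3 * ((n : ℝ) + 1) ^ 2 := by
        have habs : |∑ k ∈ Finset.Ico 1 (n + 1),
            (((n + 1 : ℕ) : ℝ) - (k : ℝ)) * (z ^ k).re| ≤ (n : ℝ) * ((n : ℝ) + 1) := by
          calc |∑ k ∈ Finset.Ico 1 (n + 1), (((n + 1 : ℕ) : ℝ) - (k : ℝ)) * (z ^ k).re|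
              ≤ ∑ k ∈ Finset.Ico 1 (n + 1),
                |(((n + 1 : ℕ) : ℝ) - (k : ℝ)) * (z ^ k).re| :=
                Finset.abs_sum_le_sum_abs _ _
            _ ≤ ∑ _k ∈ Finset.Ico 1 (n + 1), ((n : ℝ) + 1) := Finset.sum_le_sum hterm
            _ = (n : ℝ) * ((n : ℝ) + 1) := by
                rw [Finset.sum_const, Nat.card_Ico]
                simp only [nsmul_eq_mul]
                push_cast
                ring
          -- done
        calc |((n + 1 : ℕ) : ℝ) + 2 * ∑ k ∈ Finset.Ico 1 (n + 1),
              (((n + 1 : ℕ) : ℝ) - (k : ℝ)) * (z ^ k).re|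
            ≤ |((n + 1 : ℕ) : ℝ)| + |2 * ∑ k ∈ Finset.Ico 1 (n + 1),
              (((n + 1 : ℕ) : ℝ) - (k : ℝ)) * (z ^ k).re| := abs_add_le _ _
          _ ≤ ((n : ℝ) + 1) + 2 * ((n : ℝ) * ((n : ℝ) + 1)) := by
              refine add_le_add ?_ ?_
              · push_cast
                rw [abs_of_nonneg (by positivity)]
              · rw [abs_mul, abs_of_nonneg (by norm_num : (0:ℝ) ≤ 2)]
                linarith [habs]
          _ ≤ 3 * ((n : ℝ) + 1) ^ 2 := by nlinarith [Nat.cast_nonneg (α := ℝ) n]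
      rw [hF]
      simp only
      rw [Real.norm_eq_abs, abs_mul, abs_of_nonneg (by positivity : (0:ℝ) ≤ l ^ (n+1))]
      exact mul_le_mul_of_nonneg_right hphi (by positivity)
      )
    (Eventually.of_forall fun z => hbound_sum)
    (integrable_const _)
    (by
      filter_upwards [hae] with z hz
      exact pointwise_hasSum l hl0 hl1 z hz)
  have hint : ∀ n, (∫ z, F n z ∂ν) = VarSeq ν (n + 1) * l ^ (n + 1) := by
    intro n
    rw [VarSeq, hF]
    exact integral_mul_const _ _
  have hint2 : (∫ z, l / (1 - l) ^ 2 * ((1 + (l : ℂ) * z) / (1 - (l : ℂ) * z)).re ∂ν)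
      = l / (1 - l) ^ 2 * ∫ z, ((1 + (l : ℂ) * z) / (1 - (l : ℂ) * z)).re ∂ν :=
    integral_const_mul _ _
  rw [hint2] at key
  exact key.congr_fun fun n => (hint n).symm
end

section
/- For all real numbers a < 0, b ∈ ℝ and t > 0, one has e^{(a+ib)t} = (1/π) ∫_{−∞}^{∞} e^{itx} · (−a)/(a² + (b−x)²) dx, the integral being absolutely convergent. -/
open MeasureTheory Filter Topology Set


open MeasureTheory Filter Topology Set FourierTransform Real

namespace PoissonAux

lemma integrableOn_cexp_Ioi {z : ℂ} (hz : 0 < z.re) :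
    IntegrableOn (fun s : ℝ => Complex.exp (-z * s)) (Ioi 0) := by
  have h := exp_neg_integrableOn_Ioi 0 hz
  apply Integrable.mono' h ?_ ?_
  · exact (Complex.continuous_exp.comp (by fun_prop)).aestronglyMeasurable.restrict
  · filter_upwards with s
    rw [Complex.norm_exp]
    simp

lemma integral_cexp_Ioi {z : ℂ} (hz : 0 < z.re) :
    ∫ s in Ioi (0:ℝ), Complex.exp (-z * s) = 1 / z := by
  have hz0 : z ≠ 0 := fun h => by simp [h] at hz
  have key := integral_Ioi_of_hasDerivAt_of_tendsto
    (f := fun s : ℝ => -z⁻¹ * Complex.exp (-z * s))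
    (f' := fun s : ℝ => Complex.exp (-z * s)) (a := 0) (m := 0)
    ?_ ?_ (integrableOn_cexp_Ioi hz) ?_
  · simpa [one_div] using key
  · exact (by fun_prop : Continuous fun s : ℝ =>
      -z⁻¹ * Complex.exp (-z * s)).continuousWithinAt
  · intro x _
    have : HasDerivAt (fun s : ℝ => Complex.exp (-z * s)) (-z * Complex.exp (-z * x)) x := by
      have := (Complex.hasDerivAt_exp (-z * x)).comp x
        ((hasDerivAt_id x).ofReal_comp.const_mul (-z))
      simpa [mul_comm, Function.comp_def] using this
    have := this.const_mul (-z⁻¹)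
    convert this using 1
    all_goals first | rw [← mul_assoc, neg_mul_neg, inv_mul_cancel₀ hz0, one_mul] | rfl
  · have : Tendsto (fun s : ℝ => Complex.exp (-z * s)) atTop (𝓝 0) := by
      apply tendsto_zero_iff_norm_tendsto_zero.2
      have : ∀ s : ℝ, ‖Complex.exp (-z * s)‖ = Real.exp (-z.re * s) := by
        intro s
        rw [Complex.norm_exp]
        norm_num
      simp_rw [this]
      exact Real.tendsto_exp_atBot.comp (tendsto_id.const_mul_atTop_of_neg (neg_lt_zero.2 hz))
    simpa using this.const_mul (-z⁻¹)

lemma integrableOn_exp_neg_abs_Ioi {c : ℝ} (hc : 0 < c) :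
    IntegrableOn (fun s : ℝ => Real.exp (-(c * |s|))) (Ioi 0) := by
  apply (exp_neg_integrableOn_Ioi 0 hc).congr'
    ((by fun_prop : Continuous fun s : ℝ => Real.exp (-(c * |s|))).aestronglyMeasurable.restrict)
  filter_upwards [ae_restrict_mem measurableSet_Ioi] with s hs
  rw [abs_of_pos hs]
  simp [neg_mul]

lemma integrable_exp_neg_abs {c : ℝ} (hc : 0 < c) :
    Integrable (fun s : ℝ => Real.exp (-(c * |s|))) := by
  set g : ℝ → ℝ := fun s => Real.exp (-(c * |s|)) with hg
  set h : ℝ → ℝ := (Ici (0:ℝ)).indicator g with hh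
  have hIci : IntegrableOn g (Ici 0) :=
    (integrableOn_Ici_iff_integrableOn_Ioi (by simp)).2 (integrableOn_exp_neg_abs_Ioi hc)
  have hInt : Integrable h := hIci.integrable_indicator measurableSet_Ici
  have h2 : Integrable (fun x => h (-x)) := hInt.comp_neg
  apply (hInt.add h2).congr
  filter_upwards [compl_mem_ae_iff.2 (measure_singleton (0:ℝ))] with x hx
  simp only [mem_compl_iff, mem_singleton_iff] at hx
  rcases lt_or_gt_of_ne hx with h0 | h0
  · have : x ∉ Ici (0:ℝ) := by simpa using h0
    simp [hh, indicator_of_notMem this,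
      indicator_of_mem (by simpa using h0.le : -x ∈ Ici (0:ℝ)), hg, abs_neg]
  · have : -x ∉ Ici (0:ℝ) := by simp; linarith
    simp [hh, indicator_of_mem (by simpa using h0.le : x ∈ Ici (0:ℝ)), indicator_of_notMem this]

lemma integrable_cexp_neg_abs {c : ℝ} (hc : 0 < c) :
    Integrable (fun s : ℝ => ((Real.exp (-(c * |s|)) : ℝ) : ℂ)) :=
  (integrable_exp_neg_abs hc).ofReal

lemma fourier_exp_neg_abs {c : ℝ} (hc : 0 < c) (ξ : ℝ) :
    𝓕 (fun s : ℝ => ((Real.exp (-(c * |s|)) : ℝ) : ℂ)) ξ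
      = 1 / ((c:ℂ) + (2*π*ξ)*Complex.I) + 1 / ((c:ℂ) - (2*π*ξ)*Complex.I) := by
  rw [Real.fourier_real_eq_integral_exp_smul]
  have hint : Integrable fun v : ℝ =>
      Complex.exp (↑(-2 * π * v * ξ) * Complex.I) • ((Real.exp (-(c * |v|)) : ℝ) : ℂ) := by
    apply (integrable_cexp_neg_abs hc).bdd_mul (c := 1) ?_ (Eventually.of_forall ?_)
    · exact (Complex.continuous_exp.comp (by continuity)).aestronglyMeasurable
    · intro v
      rw [Complex.norm_exp]
      simp
  rw [← intervalIntegral.integral_Iic_add_Ioi (b := (0:ℝ)) hint.integrableOn hint.integrableOn]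
  have hIoi : ∫ v in Ioi (0:ℝ),
      Complex.exp (↑(-2 * π * v * ξ) * Complex.I) • ((Real.exp (-(c * |v|)) : ℝ) : ℂ)
      = 1 / ((c:ℂ) + (2*π*ξ)*Complex.I) := by
    rw [← integral_cexp_Ioi (z := (c:ℂ) + (2*π*ξ)*Complex.I) (by simpa using hc)]
    apply setIntegral_congr_fun measurableSet_Ioi
    intro v hv
    dsimp only
    rw [abs_of_pos hv, smul_eq_mul, Complex.ofReal_exp, ← Complex.exp_add]
    congr 1
    push_cast
    ring
  have hIic : ∫ v in Iic (0:ℝ),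
      Complex.exp (↑(-2 * π * v * ξ) * Complex.I) • ((Real.exp (-(c * |v|)) : ℝ) : ℂ)
      = 1 / ((c:ℂ) - (2*π*ξ)*Complex.I) := by
    have := integral_comp_neg_Ioi (0:ℝ) (fun v : ℝ =>
      Complex.exp (↑(-2 * π * v * ξ) * Complex.I) • ((Real.exp (-(c * |v|)) : ℝ) : ℂ))
    rw [neg_zero] at this
    rw [← this]
    rw [← integral_cexp_Ioi (z := (c:ℂ) - (2*π*ξ)*Complex.I) (by simpa using hc)]
    apply setIntegral_congr_fun measurableSet_Ioi
    intro v hv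
    dsimp only
    rw [abs_neg, abs_of_pos hv, smul_eq_mul, Complex.ofReal_exp, ← Complex.exp_add]
    congr 1
    push_cast
    ring
  rw [hIic, hIoi, add_comm]

lemma fourier_exp_neg_abs' {c : ℝ} (hc : 0 < c) (ξ : ℝ) :
    𝓕 (fun s : ℝ => ((Real.exp (-(c * |s|)) : ℝ) : ℂ)) ξ
      = ((2*c/(c^2+(2*π*ξ)^2) : ℝ) : ℂ) := by
  rw [fourier_exp_neg_abs hc ξ]
  have h1 : (c:ℂ) + (2*π*ξ)*Complex.I ≠ 0 := by
    intro h
    have := congrArg Complex.re h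
    simp at this
    exact hc.ne' this
  have h2 : (c:ℂ) - (2*π*ξ)*Complex.I ≠ 0 := by
    intro h
    have := congrArg Complex.re h
    simp at this
    exact hc.ne' this
  have hprod : ((c:ℂ) + (2*π*ξ)*Complex.I) * ((c:ℂ) - (2*π*ξ)*Complex.I)
      = ((c^2+(2*π*ξ)^2 : ℝ) : ℂ) := by
    push_cast
    ring_nf
    simp [Complex.I_sq]
  rw [div_add_div _ _ h1 h2, hprod, Complex.ofReal_div]
  congr 1
  push_cast
  ring

lemma integrable_inv_sq_add_sq {c : ℝ} (hc : 0 < c) :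
    Integrable fun x : ℝ => 1 / (c ^ 2 + x ^ 2) := by
  have h := (integrable_inv_one_add_sq.comp_mul_left' (R := c⁻¹)
    (inv_ne_zero hc.ne')).const_mul ((c ^ 2)⁻¹)
  apply h.congr
  filter_upwards with x
  field_simp

lemma integrable_kernel_shift {c b : ℝ} (hc : 0 < c) :
    Integrable fun x : ℝ => c / (c ^ 2 + (b - x) ^ 2) := by
  have h := ((integrable_inv_sq_add_sq hc).const_mul c).comp_sub_left b
  apply h.congr
  filter_upwards with x
  rw [mul_one_div]

lemma integrable_fourier_exp_neg_abs {c : ℝ} (hc : 0 < c) :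
    Integrable (𝓕 fun s : ℝ => ((Real.exp (-(c * |s|)) : ℝ) : ℂ)) := by
  have h : Integrable (fun ξ : ℝ => ((2 * c * (1 / (c ^ 2 + (2 * π * ξ) ^ 2)) : ℝ) : ℂ)) :=
    (((integrable_inv_sq_add_sq hc).const_mul (2*c)).comp_mul_left'
      (R := 2*π) (by positivity)).ofReal
  apply h.congr
  filter_upwards with ξ
  rw [fourier_exp_neg_abs' hc ξ]
  norm_num [mul_one_div]
  ring

lemma integral_cexp_mul_kernel {c t : ℝ} (hc : 0 < c) (ht : 0 < t) :
    ∫ u : ℝ, Complex.exp (Complex.I * t * u) * (((c / (c ^ 2 + u ^ 2)) : ℝ) : ℂ)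
      = (π : ℂ) * Real.exp (-(c * t)) := by
  set g : ℝ → ℂ := fun s => ((Real.exp (-(c * |s|)) : ℝ) : ℂ) with hgdef
  have hg : Integrable g := integrable_cexp_neg_abs hc
  have hFg : Integrable (𝓕 g) := integrable_fourier_exp_neg_abs hc
  have hgc : Continuous g := Complex.continuous_ofReal.comp (by fun_prop)
  have hinv : 𝓕⁻ (𝓕 g) t = g t := hg.fourierInv_fourier_eq hFg hgc.continuousAt
  rw [Real.fourierInv_eq_fourier_neg,
    Real.fourier_real_eq_integral_exp_smul] at hinv
  set h : ℝ → ℂ := fun u => Complex.exp (Complex.I * t * u) * (((2 * c / (c ^ 2 + u ^ 2)) : ℝ) : ℂ)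
    with hhdef
  have step1 : ∫ v : ℝ, h (2 * π * v) = g t := by
    rw [← hinv]
    apply integral_congr_ae
    filter_upwards with v
    rw [hhdef]
    dsimp only
    rw [fourier_exp_neg_abs' hc v, smul_eq_mul]
    congr 1
    · congr 1
      push_cast
      ring
  have step2 : ∫ v : ℝ, h (2 * π * v) = |(2 * π)⁻¹| • ∫ u : ℝ, h u :=
    Measure.integral_comp_mul_left h (2 * π)
  have hpi : (0:ℝ) < 2 * π := by positivity
  have step3 : ∫ u : ℝ, h u = (2 * π : ℝ) • g t := by
    rw [step2, abs_of_pos (inv_pos.2 hpi)] at step1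
    rw [← step1, smul_smul]
    rw [mul_inv_cancel₀ hpi.ne', one_smul]
  have step4 : ∫ u : ℝ, h u
      = 2 * ∫ u : ℝ, Complex.exp (Complex.I * t * u) * (((c / (c ^ 2 + u ^ 2)) : ℝ) : ℂ) := by
    rw [← integral_const_mul]
    apply integral_congr_ae
    filter_upwards with u
    rw [hhdef]
    dsimp only
    push_cast
    ring
  have : (2 : ℂ) * ∫ u : ℝ, Complex.exp (Complex.I * t * u) * (((c / (c ^ 2 + u ^ 2)) : ℝ) : ℂ)
      = (2 * π : ℝ) • g t := by rw [← step4, step3]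
  have hgt : g t = ((Real.exp (-(c * t)) : ℝ) : ℂ) := by
    rw [hgdef]
    dsimp only
    rw [abs_of_pos ht]
  rw [hgt, Complex.real_smul] at this
  push_cast at this ⊢
  linear_combination this / 2

end PoissonAux

open PoissonAux

/-- **Poisson kernel representation of the complex exponential (used in the
proof of Theorem 3.1).**  For `a < 0`, `b ∈ ℝ` and `t > 0`,
`e^{(a+ib)t} = (1/π) ∫_{-∞}^{∞} e^{itx} (-a)/(a²+(b-x)²) dx`,
the integral being absolutely convergent. -/
theorem exp_eq_poisson_kernel_integral (a b t : ℝ) (ha : a < 0) (ht : 0 < t) :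
    Integrable (fun x : ℝ =>
      Complex.exp (Complex.I * (t : ℂ) * (x : ℂ)) *
        (((-a) / (a ^ 2 + (b - x) ^ 2) : ℝ) : ℂ)) ∧
    Complex.exp (((a : ℂ) + (b : ℂ) * Complex.I) * (t : ℂ)) =
      (1 / (Real.pi : ℂ)) *
        ∫ x : ℝ, Complex.exp (Complex.I * (t : ℂ) * (x : ℂ)) *
          (((-a) / (a ^ 2 + (b - x) ^ 2) : ℝ) : ℂ) := by
  set c : ℝ := -a with hcdef
  have hc : 0 < c := by simp [hcdef]; linarith
  have hasq : a ^ 2 = c ^ 2 := by rw [hcdef]; ring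
  have hker : Integrable fun x : ℝ => (-a) / (a ^ 2 + (b - x) ^ 2) := by
    apply (integrable_kernel_shift (b := b) hc).congr
    filter_upwards with x
    rw [hasq, hcdef]
  have hint : Integrable (fun x : ℝ =>
      Complex.exp (Complex.I * (t : ℂ) * (x : ℂ)) *
        (((-a) / (a ^ 2 + (b - x) ^ 2) : ℝ) : ℂ)) := by
    apply (hker.ofReal (𝕜 := ℂ)).bdd_mul (c := 1) ?_ (Eventually.of_forall ?_)
    · exact (Complex.continuous_exp.comp (by continuity)).aestronglyMeasurable
    · intro x
      rw [Complex.norm_exp]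
      simp
  refine ⟨hint, ?_⟩
  have key := integral_cexp_mul_kernel hc ht
  have shift : ∫ x : ℝ, Complex.exp (Complex.I * (t : ℂ) * (x : ℂ)) *
          (((-a) / (a ^ 2 + (b - x) ^ 2) : ℝ) : ℂ)
      = Complex.exp (Complex.I * t * b) *
        ∫ u : ℝ, Complex.exp (Complex.I * t * u) * (((c / (c ^ 2 + u ^ 2)) : ℝ) : ℂ) := by
    rw [← integral_add_right_eq_self (fun x : ℝ => Complex.exp (Complex.I * (t : ℂ) * (x : ℂ)) *
          (((-a) / (a ^ 2 + (b - x) ^ 2) : ℝ) : ℂ)) b, ← integral_const_mul]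
    apply integral_congr_ae
    filter_upwards with u
    have e1 : ((u + b : ℝ) : ℂ) = (u : ℂ) + b := by push_cast; ring
    rw [e1]
    have e2 : (b - (u + b)) ^ 2 = u ^ 2 := by ring
    rw [e2, hasq, ← hcdef]
    rw [← mul_assoc, ← Complex.exp_add]
    congr 2
    ring
  rw [shift, key]
  have hπ : (π : ℂ) ≠ 0 := by exact_mod_cast Real.pi_ne_zero
  rw [show ((a:ℂ) + b * Complex.I) * t = Complex.I * t * b + (a * t : ℝ) by push_cast; ring,
    Complex.exp_add]
  rw [Complex.ofReal_exp]
  field_simp [hcdef]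
  congr 2
  rw [hcdef]
  ring
end

section
/- Define p_n := ∫_{[−1,1]} |x|^{n−1}(1−|x|) υ(dx) for integers n ≥ 1 (the distribution of the first regeneration time τ₁ of the chain, so ∑_{n≥1} p_n = 1), H(u) := ∑_{1 ≤ n ≤ u} n²·p_n for u > 0, and V(x) := (2/θ)·∫_{[0,1−x]} (1−y)^{−2} υ(dy) for x ∈ (0,1). Assume V is slowly varying at 0⁺, i.e. V(sx)/V(x) → 1 as x → 0⁺ for every s > 0, and V(x) → ∞ as x → 0⁺. Then H(1/x)/(2θ·V(x)) → 1 as x → 0⁺. In particular u ↦ H(u) is slowly varying at infinity. -/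
open MeasureTheory Filter Topology Set
open scoped ENNReal NNReal

lemma sumsq_identity (s : ℝ) : ∀ N : ℕ,
    s^3 * ∑ n ∈ Finset.Icc 1 N, (n:ℝ)^2 * (1-s)^(n-1)
      = 2 - s - (1-s)^N * ((N:ℝ)^2*s^2 + 2*N*s - s + 2) := by
  intro N
  induction N with
  | zero => simp; ring
  | succ N ih =>
    rw [Finset.sum_Icc_succ_top (Nat.succ_le_succ (Nat.zero_le N)), mul_add, ih]
    have h1 : (N + 1) - 1 = N := rfl
    rw [h1]
    push_cast
    ring

lemma sumsq_le_cube {t : ℝ} (ht0 : 0 ≤ t) (ht1 : t ≤ 1) : ∀ N : ℕ,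
    (∑ n ∈ Finset.Icc 1 N, (n:ℝ)^2 * t^(n-1)) ≤ (N:ℝ)^3 := by
  intro N
  induction N with
  | zero => simp
  | succ N ih =>
    rw [Finset.sum_Icc_succ_top (Nat.succ_le_succ (Nat.zero_le N))]
    have h1 : (N + 1) - 1 = N := rfl
    rw [h1]
    have h2 : t ^ N ≤ 1 := pow_le_one₀ ht0 ht1
    have h3 : ((N:ℝ)+1)^2 * t^N ≤ ((N:ℝ)+1)^2 := by nlinarith [sq_nonneg ((N:ℝ)+1)]
    push_cast
    nlinarith [ih, Nat.cast_nonneg (α := ℝ) N]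

lemma sumsq_nonneg {t : ℝ} (ht0 : 0 ≤ t) (N : ℕ) :
    0 ≤ ∑ n ∈ Finset.Icc 1 N, (n:ℝ)^2 * t^(n-1) :=
  Finset.sum_nonneg fun _ _ => mul_nonneg (sq_nonneg _) (pow_nonneg ht0 _)

lemma decay_bound {s : ℝ} (hs0 : 0 ≤ s) (hs1 : s ≤ 1) {N : ℕ} (hN : 7 ≤ N) :
    (1-s)^N * ((N:ℝ)*s)^4 ≤ 2401 := by
  set m := N / 4 with hm
  have h4m : 4 * m ≤ N := by omega
  have hN7m : (N : ℝ) ≤ 7 * m := by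
    have : N ≤ 7 * m := by omega
    exact_mod_cast this
  have hs1' : 0 ≤ 1 - s := by linarith
  have hms : (m:ℝ) * s ≤ (1+s)^m := by
    have := one_add_mul_le_pow (a := s) (by linarith) m
    have hm0 : (0:ℝ) ≤ 1 := zero_le_one
    nlinarith [this]
  have hms0 : 0 ≤ (m:ℝ) * s := mul_nonneg (Nat.cast_nonneg m) hs0
  have key : (1-s)^(4*m) * ((m:ℝ)*s)^4 ≤ 1 := by
    have h1 : ((m:ℝ)*s)^4 ≤ ((1+s)^m)^4 := by
      exact pow_le_pow_left₀ hms0 hms 4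
    have h2 : (1-s)^(4*m) * ((1+s)^m)^4 = ((1-s)*(1+s))^(4*m) := by
      rw [← pow_mul, mul_comm m 4, mul_pow]
    have h3 : ((1-s)*(1+s))^(4*m) ≤ 1 := by
      apply pow_le_one₀ (by nlinarith) (by nlinarith)
    calc (1-s)^(4*m) * ((m:ℝ)*s)^4 ≤ (1-s)^(4*m) * ((1+s)^m)^4 :=
          mul_le_mul_of_nonneg_left h1 (pow_nonneg hs1' _)
      _ ≤ 1 := by rw [h2]; exact h3
  have hpowle : (1-s)^N ≤ (1-s)^(4*m) := pow_le_pow_of_le_one hs1' (by linarith) h4m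
  have hNs4 : ((N:ℝ)*s)^4 ≤ 2401 * ((m:ℝ)*s)^4 := by
    have : (N:ℝ)*s ≤ 7*((m:ℝ)*s) := by nlinarith
    have h := pow_le_pow_left₀ (mul_nonneg (Nat.cast_nonneg N) hs0) this 4
    calc ((N:ℝ)*s)^4 ≤ (7*((m:ℝ)*s))^4 := h
      _ = 2401 * ((m:ℝ)*s)^4 := by ring
  calc (1-s)^N * ((N:ℝ)*s)^4 ≤ (1-s)^(4*m) * (2401 * ((m:ℝ)*s)^4) := by
        apply mul_le_mul hpowle hNs4 (pow_nonneg (mul_nonneg (Nat.cast_nonneg N) hs0) 4)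
          (pow_nonneg hs1' _)
    _ = 2401 * ((1-s)^(4*m) * ((m:ℝ)*s)^4) := by ring
    _ ≤ 2401 * 1 := by nlinarith [key, pow_nonneg hs1' (4*m), pow_nonneg hms0 4]
    _ = 2401 := by ring

noncomputable def Psum (N : ℕ) (t : ℝ) : ℝ := ∑ n ∈ Finset.Icc 1 N, (n:ℝ)^2 * t^(n-1)

lemma rho_nonneg {s : ℝ} (h0 : 0 ≤ s) (h1 : s ≤ 1) (N : ℕ) :
    0 ≤ (N:ℝ)^2*s^2 + 2*N*s - s + 2 := by
  nlinarith [sq_nonneg ((N:ℝ)*s), mul_nonneg (Nat.cast_nonneg (α := ℝ) N) h0]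

lemma fN_upper {s : ℝ} (h0 : 0 < s) (h1 : s ≤ 1) (N : ℕ) :
    s * Psum N (1-s) ≤ 2/s^2 := by
  have hid := sumsq_identity s N
  have hρ := rho_nonneg h0.le h1 N
  have hpow : (0:ℝ) ≤ (1-s)^N := pow_nonneg (by linarith) N
  have key : s^3 * Psum N (1-s) ≤ 2 := by
    rw [Psum, hid]
    nlinarith [mul_nonneg hpow hρ]
  rw [le_div_iff₀ (by positivity : (0:ℝ) < s^2)]
  nlinarith [key]

lemma fN_lower_far {s : ℝ} (h0 : 0 < s) (h1 : s ≤ 1) {N : ℕ} (hN : 7 ≤ N)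
    {K : ℝ} (hK : 2 ≤ K) (hNs : K ≤ 2*((N:ℝ)*s)) :
    2/s^2 - 1/s - 48020/(K^2*s^2) ≤ s * Psum N (1-s) := by
  have hid := sumsq_identity s N
  have hpow : (0:ℝ) ≤ (1-s)^N := pow_nonneg (by linarith) N
  have hu1 : (1:ℝ) ≤ (N:ℝ)*s := by linarith
  have hu0 : (0:ℝ) < (N:ℝ)*s := by linarith
  have hρle : (N:ℝ)^2*s^2 + 2*N*s - s + 2 ≤ 5*((N:ℝ)*s)^2 := by nlinarith
  have hdec := decay_bound h0.le h1 hN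
  -- r ≤ 48020/K^2
  have hr : (1-s)^N * ((N:ℝ)^2*s^2 + 2*N*s - s + 2) ≤ 48020/K^2 := by
    have h5 : (1-s)^N * ((N:ℝ)^2*s^2 + 2*N*s - s + 2) ≤ 5 * ((1-s)^N * ((N:ℝ)*s)^2) := by
      nlinarith [mul_le_mul_of_nonneg_left hρle hpow]
    have h6 : (1-s)^N * ((N:ℝ)*s)^2 ≤ 2401/((N:ℝ)*s)^2 := by
      rw [le_div_iff₀ (by positivity)]
      calc (1-s)^N * ((N:ℝ)*s)^2 * ((N:ℝ)*s)^2 = (1-s)^N * ((N:ℝ)*s)^4 := by ring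
        _ ≤ 2401 := hdec
    have h7 : 2401/((N:ℝ)*s)^2 ≤ 9604/K^2 := by
      rw [div_le_div_iff₀ (by positivity) (by positivity)]
      nlinarith
    calc (1-s)^N * ((N:ℝ)^2*s^2 + 2*N*s - s + 2)
        ≤ 5 * ((1-s)^N * ((N:ℝ)*s)^2) := h5
      _ ≤ 5 * (2401/((N:ℝ)*s)^2) := by linarith
      _ ≤ 5 * (9604/K^2) := by linarith
      _ = 48020/K^2 := by rw [mul_div_assoc']; norm_num
  have key : 2 - s - 48020/K^2 ≤ s^3 * Psum N (1-s) := by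
    rw [Psum, hid]; nlinarith
  have hs2 : (0:ℝ) < s^2 := by positivity
  have target : (2 - s - 48020/K^2)/s^2 ≤ s * Psum N (1-s) := by
    rw [div_le_iff₀ hs2]
    nlinarith [key]
  calc 2/s^2 - 1/s - 48020/(K^2*s^2) = (2 - s - 48020/K^2)/s^2 := by
        field_simp
    _ ≤ s * Psum N (1-s) := target

lemma fN_nonneg {s : ℝ} (h0 : 0 ≤ s) (h1 : s ≤ 1) (N : ℕ) : 0 ≤ s * Psum N (1-s) :=
  mul_nonneg h0 (sumsq_nonneg (by linarith) N)

lemma fN_le_cube {s : ℝ} (h0 : 0 ≤ s) (h1 : s ≤ 1) (N : ℕ) :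
    s * Psum N (1-s) ≤ (N:ℝ)^3 * s := by
  have := sumsq_le_cube (t := 1-s) (by linarith) (by linarith) N
  rw [Psum]
  nlinarith [sumsq_nonneg (t := 1-s) (by linarith : (0:ℝ) ≤ 1-s) N]


noncomputable def Jl (υ : Measure ℝ) (x : ℝ) : ℝ≥0∞ :=
  ∫⁻ y in {y : ℝ | x ≤ 1 - |y|}, ENNReal.ofReal (((1 - |y|)^2)⁻¹) ∂υ

noncomputable def JJ (υ : Measure ℝ) (x : ℝ) : ℝ := (Jl υ x).toReal

lemma cont_s : Continuous fun y : ℝ => 1 - |y| := by continuity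

lemma measSet1 (x : ℝ) : MeasurableSet {y : ℝ | x ≤ 1 - |y|} :=
  measurableSet_le measurable_const cont_s.measurable

lemma measSet2 (x : ℝ) : MeasurableSet {y : ℝ | 1 - |y| < x} :=
  measurableSet_lt cont_s.measurable measurable_const

lemma ae_facts (υ : Measure ℝ) [IsProbabilityMeasure υ]
    (hsupp : υ (Set.Icc (-1 : ℝ) 1)ᶜ = 0)
    (hθfin : ∫⁻ x, (ENNReal.ofReal (1 - |x|))⁻¹ ∂υ < ⊤) :
    ∀ᵐ y ∂υ, 0 < 1 - |y| ∧ |y| ≤ 1 := by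
  have h1 : ∀ᵐ y ∂υ, y ∈ Set.Icc (-1:ℝ) 1 := by
    rw [ae_iff]
    convert hsupp using 2
    rfl
  have hmeas : Measurable fun y : ℝ => (ENNReal.ofReal (1 - |y|))⁻¹ :=
    (cont_s.measurable.ennreal_ofReal).inv
  have h2 : ∀ᵐ y ∂υ, (ENNReal.ofReal (1 - |y|))⁻¹ < ⊤ :=
    ae_lt_top hmeas hθfin.ne
  filter_upwards [h1, h2] with y hy1 hy2
  refine ⟨?_, abs_le.mpr hy1⟩
  by_contra h
  push_neg at h
  have : ENNReal.ofReal (1 - |y|) = 0 := by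
    simp [ENNReal.ofReal_eq_zero]; linarith
  rw [this] at hy2
  simp at hy2

lemma Jl_anti (υ : Measure ℝ) : Antitone (Jl υ) := by
  intro x1 x2 h
  apply lintegral_mono_set
  intro y hy
  simp only [Set.mem_setOf_eq] at *
  linarith

lemma Jl_fin (υ : Measure ℝ) [IsProbabilityMeasure υ] {x : ℝ} (hx : 0 < x) :
    Jl υ x < ⊤ := by
  have hb : ∀ y ∈ {y : ℝ | x ≤ 1 - |y|}, ENNReal.ofReal (((1 - |y|)^2)⁻¹)
      ≤ ENNReal.ofReal ((x^2)⁻¹) := by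
    intro y hy
    simp only [Set.mem_setOf_eq] at hy
    apply ENNReal.ofReal_le_ofReal
    have h1 : 0 < x^2 := by positivity
    have h2 : x^2 ≤ (1-|y|)^2 := by nlinarith [abs_nonneg y]
    exact inv_anti₀ h1 h2
  calc Jl υ x ≤ ∫⁻ _ in {y : ℝ | x ≤ 1 - |y|}, ENNReal.ofReal ((x^2)⁻¹) ∂υ :=
        setLIntegral_mono (by measurability) hb
    _ = ENNReal.ofReal ((x^2)⁻¹) * υ {y : ℝ | x ≤ 1 - |y|} := by
        rw [setLIntegral_const]
    _ < ⊤ := by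
        apply ENNReal.mul_lt_top ENNReal.ofReal_lt_top (measure_lt_top υ _)

lemma JJ_meas (υ : Measure ℝ) : Measurable (JJ υ) :=
  ENNReal.measurable_toReal.comp (Jl_anti υ).measurable

lemma JJ_nonneg (υ : Measure ℝ) (x : ℝ) : 0 ≤ JJ υ x := ENNReal.toReal_nonneg

lemma JJ_anti (υ : Measure ℝ) [IsProbabilityMeasure υ] {x1 x2 : ℝ}
    (h1 : 0 < x1) (h : x1 ≤ x2) : JJ υ x2 ≤ JJ υ x1 :=
  ENNReal.toReal_mono (Jl_fin υ h1).ne (Jl_anti υ h)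

lemma inv_sq_meas : Measurable fun y : ℝ => ((1 - |y|)^2)⁻¹ :=
  ((cont_s.measurable).pow_const 2).inv

lemma JJ_integrableOn (υ : Measure ℝ) [IsProbabilityMeasure υ] {x : ℝ} (hx : 0 < x) :
    IntegrableOn (fun y : ℝ => ((1 - |y|)^2)⁻¹) {y : ℝ | x ≤ 1 - |y|} υ := by
  apply Integrable.mono' (integrable_const ((x^2)⁻¹))
    inv_sq_meas.aestronglyMeasurable
  filter_upwards [ae_restrict_mem (measSet1 x)] with y hy
  rw [Real.norm_eq_abs, abs_of_nonneg (by positivity)]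
  have h1 : 0 < x^2 := by positivity
  have h2 : x^2 ≤ (1-|y|)^2 := by nlinarith [abs_nonneg y]
  exact inv_anti₀ h1 h2

lemma JJ_eq_integral (υ : Measure ℝ) (x : ℝ) :
    JJ υ x = ∫ y in {y : ℝ | x ≤ 1 - |y|}, ((1 - |y|)^2)⁻¹ ∂υ := by
  rw [integral_eq_lintegral_of_nonneg_ae
    (Filter.Eventually.of_forall fun y => by positivity)
    inv_sq_meas.aestronglyMeasurable]
  rfl

lemma theta_lintegral (υ : Measure ℝ) [IsProbabilityMeasure υ]
    (hsupp : υ (Set.Icc (-1 : ℝ) 1)ᶜ = 0)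
    (hθfin : ∫⁻ x, (ENNReal.ofReal (1 - |x|))⁻¹ ∂υ < ⊤) (θ : ℝ)
    (hθ : θ = ∫ x, (1 - |x|)⁻¹ ∂υ) :
    Integrable (fun y : ℝ => (1 - |y|)⁻¹) υ ∧ 1 ≤ θ ∧
    (∫⁻ y, ENNReal.ofReal ((1 - |y|)⁻¹) ∂υ) = ENNReal.ofReal θ := by
  have hae := ae_facts υ hsupp hθfin
  have hmeas : Measurable fun y : ℝ => (1 - |y|)⁻¹ := cont_s.measurable.inv
  have haeeq : (fun y : ℝ => ENNReal.ofReal ((1 - |y|)⁻¹)) =ᵐ[υ]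
      (fun y : ℝ => (ENNReal.ofReal (1 - |y|))⁻¹) := by
    filter_upwards [hae] with y hy
    exact ENNReal.ofReal_inv_of_pos hy.1
  have htl : (∫⁻ y, ENNReal.ofReal ((1 - |y|)⁻¹) ∂υ) < ⊤ := by
    rw [lintegral_congr_ae haeeq]; exact hθfin
  have haenn : 0 ≤ᵐ[υ] fun y : ℝ => (1 - |y|)⁻¹ := by
    filter_upwards [hae] with y hy
    simp only [Pi.zero_apply]
    exact inv_nonneg.mpr hy.1.le
  have hint : Integrable (fun y : ℝ => (1 - |y|)⁻¹) υ := by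
    refine ⟨hmeas.aestronglyMeasurable, ?_⟩
    rw [hasFiniteIntegral_iff_ofReal haenn]
    exact htl
  have hrepr : θ = ((∫⁻ y, ENNReal.ofReal ((1 - |y|)⁻¹) ∂υ)).toReal := by
    rw [hθ, integral_eq_lintegral_of_nonneg_ae haenn hmeas.aestronglyMeasurable]
  refine ⟨hint, ?_, ?_⟩
  · rw [hθ]
    have h2 : ∫ _, (1:ℝ) ∂υ ≤ ∫ y, (1 - |y|)⁻¹ ∂υ := by
      apply integral_mono_ae (integrable_const 1) hint
      filter_upwards [hae] with y hy
      have h3 := inv_anti₀ hy.1 (show 1 - |y| ≤ 1 by linarith [abs_nonneg y])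
      simpa using h3
    simpa using h2
  · rw [hrepr, ENNReal.ofReal_toReal htl.ne]

lemma Jl_crude (υ : Measure ℝ) [IsProbabilityMeasure υ] {x : ℝ} (hx : 0 < x) :
    Jl υ x ≤ ENNReal.ofReal x⁻¹ * ∫⁻ y, ENNReal.ofReal ((1 - |y|)⁻¹) ∂υ := by
  have hb : ∀ y ∈ {y : ℝ | x ≤ 1 - |y|}, ENNReal.ofReal (((1 - |y|)^2)⁻¹)
      ≤ ENNReal.ofReal x⁻¹ * ENNReal.ofReal ((1 - |y|)⁻¹) := by
    intro y hy
    simp only [Set.mem_setOf_eq] at hy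
    rw [← ENNReal.ofReal_mul (by positivity)]
    apply ENNReal.ofReal_le_ofReal
    have h1 : 0 < 1 - |y| := lt_of_lt_of_le hx hy
    rw [show ((1-|y|)^2)⁻¹ = (1-|y|)⁻¹ * (1-|y|)⁻¹ by rw [← mul_inv]; ring_nf]
    have h1 : 0 < 1 - |y| := lt_of_lt_of_le hx hy
    apply mul_le_mul_of_nonneg_right (inv_anti₀ hx hy) (inv_nonneg.mpr h1.le)
  calc Jl υ x ≤ ∫⁻ y in {y : ℝ | x ≤ 1 - |y|},
        ENNReal.ofReal x⁻¹ * ENNReal.ofReal ((1 - |y|)⁻¹) ∂υ :=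
        setLIntegral_mono (by measurability) hb
    _ = ENNReal.ofReal x⁻¹ * ∫⁻ y in {y : ℝ | x ≤ 1 - |y|},
          ENNReal.ofReal ((1 - |y|)⁻¹) ∂υ := by
        rw [lintegral_const_mul _ (f := fun y => ENNReal.ofReal ((1 - |y|)⁻¹)) (cont_s.measurable.inv.ennreal_ofReal)]
    _ ≤ ENNReal.ofReal x⁻¹ * ∫⁻ y, ENNReal.ofReal ((1 - |y|)⁻¹) ∂υ := by
        gcongr
        exact Measure.restrict_le_self

lemma J_symm (υ : Measure ℝ) [IsProbabilityMeasure υ]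
    (hsym : ∀ A : Set ℝ, MeasurableSet A → υ ((fun x => -x) ⁻¹' A) = υ A)
    {x : ℝ} (hx : 0 < x) (hx1 : x < 1) :
    ∫ y in {y : ℝ | x ≤ 1 - |y|}, ((1 - |y|)^2)⁻¹ ∂υ
      = 2 * (∫ y in Set.Icc (0:ℝ) (1-x), ((1 - y)^2)⁻¹ ∂υ) - (υ {0}).toReal := by
  set f : ℝ → ℝ := fun y => ((1 - |y|)^2)⁻¹ with hf
  have hmap : Measure.map (fun y : ℝ => -y) υ = υ := by
    apply Measure.ext
    intro A hA
    rw [Measure.map_apply measurable_neg hA]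
    exact hsym A hA
  have hsetEq : {y : ℝ | x ≤ 1 - |y|} = Set.Ico (x-1) 0 ∪ Set.Icc 0 (1-x) := by
    ext y
    simp only [Set.mem_setOf_eq, Set.mem_union, Set.mem_Ico, Set.mem_Icc]
    rw [show (x ≤ 1 - |y|) ↔ (x - 1 ≤ y ∧ y ≤ 1 - x) by
      rw [show x ≤ 1 - |y| ↔ |y| ≤ 1 - x by constructor <;> intro <;> linarith, abs_le]
      constructor <;> intro h <;> exact ⟨by linarith [h.1], by linarith [h.2]⟩]
    rcases le_or_gt 0 y with h0 | h0
    · constructor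
      · intro h; exact Or.inr ⟨h0, h.2⟩
      · rintro (⟨_, h2⟩ | ⟨_, h2⟩) <;> constructor <;> linarith
    · constructor
      · intro h; exact Or.inl ⟨h.1, h0⟩
      · rintro (⟨h1, _⟩ | ⟨h1, _⟩) <;> constructor <;> linarith
  have hIntS := JJ_integrableOn υ hx
  have hInt1 : IntegrableOn f (Set.Ico (x-1) 0) υ :=
    hIntS.mono_set (by rw [hsetEq]; exact Set.subset_union_left)
  have hInt2 : IntegrableOn f (Set.Icc 0 (1-x)) υ :=
    hIntS.mono_set (by rw [hsetEq]; exact Set.subset_union_right)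
  have hdisj : Disjoint (Set.Ico (x-1) 0) (Set.Icc (0:ℝ) (1-x)) := by
    apply Set.disjoint_left.mpr
    rintro y ⟨_, hy2⟩ ⟨hy3, _⟩
    linarith
  have hsplit : ∫ y in {y : ℝ | x ≤ 1 - |y|}, f y ∂υ
      = (∫ y in Set.Ico (x-1) 0, f y ∂υ) + ∫ y in Set.Icc 0 (1-x), f y ∂υ := by
    rw [hsetEq]
    exact setIntegral_union hdisj measurableSet_Icc hInt1 hInt2
  -- negation change of variables
  have hpre : (fun y : ℝ => -y) ⁻¹' (Set.Ico (x-1) 0) = Set.Ioc 0 (1-x) := by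
    ext y
    simp only [Set.mem_preimage, Set.mem_Ico, Set.mem_Ioc]
    constructor <;> intro h <;> exact ⟨by linarith [h.1, h.2], by linarith [h.1, h.2]⟩
  have hneg : ∫ y in Set.Ico (x-1) 0, f y ∂υ = ∫ y in Set.Ioc 0 (1-x), f y ∂υ := by
    have hmeasf : AEStronglyMeasurable f (Measure.map (fun y : ℝ => -y) υ) :=
      inv_sq_meas.aestronglyMeasurable
    calc ∫ y in Set.Ico (x-1) 0, f y ∂υ
        = ∫ y in Set.Ico (x-1) 0, f y ∂(Measure.map (fun y : ℝ => -y) υ) := by rw [hmap]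
      _ = ∫ y in (fun y : ℝ => -y) ⁻¹' (Set.Ico (x-1) 0), f (-y) ∂υ :=
          setIntegral_map measurableSet_Ico hmeasf measurable_neg.aemeasurable
      _ = ∫ y in Set.Ioc 0 (1-x), f y ∂υ := by
          rw [hpre]
          apply setIntegral_congr_fun measurableSet_Ioc
          intro y _
          simp [hf, abs_neg]
  -- singleton split
  have hsing : ∫ y in Set.Icc (0:ℝ) (1-x), f y ∂υ
      = (υ {0}).toReal + ∫ y in Set.Ioc 0 (1-x), f y ∂υ := by
    have h0le : (0:ℝ) ≤ 1 - x := by linarith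
    have hins : Set.Icc (0:ℝ) (1-x) = {0} ∪ Set.Ioc 0 (1-x) := by
      rw [← Set.Ioc_insert_left h0le, Set.insert_eq]
    have hdisj2 : Disjoint ({(0:ℝ)} : Set ℝ) (Set.Ioc 0 (1-x)) := by
      apply Set.disjoint_left.mpr
      rintro y hy1 hy2
      simp only [Set.mem_singleton_iff] at hy1
      rw [hy1] at hy2
      exact lt_irrefl 0 hy2.1
    have hi1 : IntegrableOn f ({(0:ℝ)} : Set ℝ) υ :=
      hInt2.mono_set (by rw [hins]; exact Set.subset_union_left)
    have hi2 : IntegrableOn f (Set.Ioc 0 (1-x)) υ :=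
      hInt2.mono_set (by rw [hins]; exact Set.subset_union_right)
    rw [hins, setIntegral_union hdisj2 measurableSet_Ioc hi1 hi2]
    congr 1
    have : ∫ y in ({(0:ℝ)} : Set ℝ), f y ∂υ = ∫ _ in ({(0:ℝ)} : Set ℝ), (1:ℝ) ∂υ := by
      apply setIntegral_congr_fun (measurableSet_singleton 0)
      intro y hy
      simp only [Set.mem_singleton_iff] at hy
      simp [hf, hy]
    rw [this, setIntegral_const]
    simp
    rfl
  -- congr on Icc with the (1-y) form
  have hcongr : ∫ y in Set.Icc (0:ℝ) (1-x), f y ∂υ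
      = ∫ y in Set.Icc (0:ℝ) (1-x), ((1 - y)^2)⁻¹ ∂υ := by
    apply setIntegral_congr_fun measurableSet_Icc
    intro y hy
    simp only [Set.mem_Icc] at hy
    simp [hf, abs_of_nonneg hy.1]
  rw [hsplit, hneg, ← hcongr]
  linarith [hsing]

lemma cube_integral {s : ℝ} (hs : 0 ≤ s) : ∫ u in Set.Ioo (0:ℝ) s, 3*u^2 = s^3 := by
  rw [← MeasureTheory.integral_Ioc_eq_integral_Ioo, ← intervalIntegral.integral_of_le hs,
    intervalIntegral.integral_const_mul, integral_pow]
  norm_num; ring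

lemma cube_lintegral {s : ℝ} (hs : 0 ≤ s) :
    ∫⁻ u in Set.Ioo (0:ℝ) s, ENNReal.ofReal (3*u^2) = ENNReal.ofReal (s^3) := by
  rw [← ofReal_integral_eq_lintegral_ofReal, cube_integral hs]
  · exact ((continuous_const.mul (continuous_pow 2)).integrableOn_Icc).mono_set
      Set.Ioo_subset_Icc_self
  · exact Filter.Eventually.of_forall fun u => by positivity

lemma indicator_meas : Measurable fun u : ℝ => ENNReal.ofReal (3*u^2) :=
  (continuous_const.mul (continuous_pow 2)).measurable.ennreal_ofReal

lemma karamata_fubini (υ : Measure ℝ) [IsProbabilityMeasure υ]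
    (hae : ∀ᵐ y ∂υ, 0 < 1 - |y| ∧ |y| ≤ 1) {x : ℝ} (hx : 0 < x) :
    (∫⁻ y in {y : ℝ | 1 - |y| < x}, ENNReal.ofReal (1 - |y|) ∂υ)
      + ENNReal.ofReal (x^3) * Jl υ x
    ≤ ∫⁻ u in Set.Ioc (0:ℝ) x, ENNReal.ofReal (3*u^2) * Jl υ u := by
  classical
  set Cx : Set ℝ := {y : ℝ | 1 - |y| < x} with hCx
  set F : ℝ → ℝ → ℝ≥0∞ := fun y u =>
    ENNReal.ofReal (((1 - |y|)^2)⁻¹) *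
      (Set.Ioo (0:ℝ) (1 - |y|)).indicator (fun u => ENNReal.ofReal (3*u^2)) u with hF
  -- Step A : pointwise identity
  have stepA : ∀ y : ℝ, 0 < 1 - |y| → 1 - |y| < x →
      ENNReal.ofReal (1 - |y|) = ∫⁻ u in Set.Ioc (0:ℝ) x, F y u := by
    intro y hy hyx
    have hsub : Set.Ioo (0:ℝ) (1 - |y|) ⊆ Set.Ioc (0:ℝ) x := fun u hu =>
      ⟨hu.1, le_of_lt (lt_of_lt_of_le hu.2 hyx.le)⟩
    have h1 : ∫⁻ u in Set.Ioc (0:ℝ) x, F y u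
        = ENNReal.ofReal (((1 - |y|)^2)⁻¹) * ∫⁻ u in Set.Ioc (0:ℝ) x,
            (Set.Ioo (0:ℝ) (1 - |y|)).indicator (fun u => ENNReal.ofReal (3*u^2)) u := by
      exact lintegral_const_mul _ (indicator_meas.indicator measurableSet_Ioo)
    have h2 : ∫⁻ u in Set.Ioc (0:ℝ) x,
        (Set.Ioo (0:ℝ) (1 - |y|)).indicator (fun u => ENNReal.ofReal (3*u^2)) u
        = ∫⁻ u in Set.Ioo (0:ℝ) (1 - |y|), ENNReal.ofReal (3*u^2) := by
      rw [lintegral_indicator measurableSet_Ioo, Measure.restrict_restrict measurableSet_Ioo,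
        Set.inter_eq_self_of_subset_left hsub]
    rw [h1, h2, cube_lintegral hy.le, ← ENNReal.ofReal_mul (by positivity)]
    congr 1
    field_simp
  have glEq : (∫⁻ y in Cx, ENNReal.ofReal (1 - |y|) ∂υ)
      = ∫⁻ y in Cx, (∫⁻ u in Set.Ioc (0:ℝ) x, F y u) ∂υ := by
    apply lintegral_congr_ae
    filter_upwards [ae_restrict_of_ae hae, ae_restrict_mem (measSet2 x)] with y hy1 hy2
    exact stepA y hy1.1 hy2
  -- swap
  have hGmeas : Measurable (Function.uncurry F) := by
    have h1 : Function.uncurry F = fun p : ℝ × ℝ =>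
        ENNReal.ofReal (((1 - |p.1|)^2)⁻¹) *
          (if 0 < p.2 ∧ p.2 < 1 - |p.1| then ENNReal.ofReal (3*p.2^2) else 0) := by
      funext p
      simp only [Function.uncurry, hF, Set.indicator_apply, Set.mem_Ioo]
    rw [h1]
    apply Measurable.mul
    · exact (inv_sq_meas.comp measurable_fst).ennreal_ofReal
    · apply Measurable.ite
      · exact MeasurableSet.inter
          (measurableSet_lt measurable_const measurable_snd)
          (measurableSet_lt measurable_snd ((cont_s.measurable).comp measurable_fst))
      · exact indicator_meas.comp measurable_snd
      · exact measurable_const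
  have hswap : ∫⁻ y in Cx, (∫⁻ u in Set.Ioc (0:ℝ) x, F y u) ∂υ
      = ∫⁻ u in Set.Ioc (0:ℝ) x, (∫⁻ y in Cx, F y u ∂υ) := by
    exact lintegral_lintegral_swap hGmeas.aemeasurable
  -- per-u bound
  have stepCD : ∀ u ∈ Set.Ioc (0:ℝ) x,
      (∫⁻ y in Cx, F y u ∂υ) + ENNReal.ofReal (3*u^2) * Jl υ x
        ≤ ENNReal.ofReal (3*u^2) * Jl υ u := by
    rintro u ⟨hu0, hux⟩
    have hmeasU : MeasurableSet {y : ℝ | u < 1 - |y|} :=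
      measurableSet_lt measurable_const cont_s.measurable
    have hptwise : ∀ y : ℝ, F y u =
        ({y : ℝ | u < 1 - |y|}).indicator
          (fun y => ENNReal.ofReal (((1 - |y|)^2)⁻¹) * ENNReal.ofReal (3*u^2)) y := by
      intro y
      simp only [hF, Set.indicator_apply, Set.mem_Ioo, Set.mem_setOf_eq]
      by_cases h : u < 1 - |y|
      · simp [h, hu0]
      · have h2 : ¬ (0 < u ∧ u < 1 - |y|) := fun hc => h hc.2
        simp [h, h2]
    have h3 : ∫⁻ y in Cx, F y u ∂υ
        = (∫⁻ y in {y : ℝ | u < 1 - |y|} ∩ Cx,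
            ENNReal.ofReal (((1 - |y|)^2)⁻¹) ∂υ) * ENNReal.ofReal (3*u^2) := by
      calc ∫⁻ y in Cx, F y u ∂υ
          = ∫⁻ y in Cx, ({y : ℝ | u < 1 - |y|}).indicator
              (fun y => ENNReal.ofReal (((1 - |y|)^2)⁻¹) * ENNReal.ofReal (3*u^2)) y ∂υ := by
            apply lintegral_congr fun y => hptwise y
        _ = ∫⁻ y in {y : ℝ | u < 1 - |y|} ∩ Cx,
              ENNReal.ofReal (((1 - |y|)^2)⁻¹) * ENNReal.ofReal (3*u^2) ∂υ := by
            rw [lintegral_indicator hmeasU, Measure.restrict_restrict hmeasU]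
        _ = (∫⁻ y in {y : ℝ | u < 1 - |y|} ∩ Cx,
              ENNReal.ofReal (((1 - |y|)^2)⁻¹) ∂υ) * ENNReal.ofReal (3*u^2) := by
            rw [lintegral_mul_const _ inv_sq_meas.ennreal_ofReal]
    have hdisj : Disjoint ({y : ℝ | u < 1 - |y|} ∩ Cx) {y : ℝ | x ≤ 1 - |y|} := by
      apply Set.disjoint_left.mpr
      rintro y ⟨_, hy2⟩ hy3
      simp only [hCx, Set.mem_setOf_eq] at hy2 hy3
      linarith
    have key : (∫⁻ y in {y : ℝ | u < 1 - |y|} ∩ Cx,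
        ENNReal.ofReal (((1 - |y|)^2)⁻¹) ∂υ) + Jl υ x ≤ Jl υ u := by
      rw [Jl, ← lintegral_union (measSet1 x) hdisj]
      apply lintegral_mono_set
      rintro y (⟨hy1, _⟩ | hy2)
      · simp only [Set.mem_setOf_eq] at hy1 ⊢
        exact le_of_lt hy1
      · simp only [Set.mem_setOf_eq] at hy2 ⊢
        linarith
    calc (∫⁻ y in Cx, F y u ∂υ) + ENNReal.ofReal (3*u^2) * Jl υ x
        = ENNReal.ofReal (3*u^2) * ((∫⁻ y in {y : ℝ | u < 1 - |y|} ∩ Cx,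
            ENNReal.ofReal (((1 - |y|)^2)⁻¹) ∂υ) + Jl υ x) := by
          rw [h3, mul_add, mul_comm]
      _ ≤ ENNReal.ofReal (3*u^2) * Jl υ u := mul_le_mul_right key _
  -- assemble
  have hconst : ∫⁻ u in Set.Ioc (0:ℝ) x, ENNReal.ofReal (3*u^2) * Jl υ x
      = ENNReal.ofReal (x^3) * Jl υ x := by
    rw [lintegral_mul_const _ indicator_meas]
    congr 1
    rw [← cube_lintegral hx.le]
    congr 1
    exact (Measure.restrict_congr_set Ioo_ae_eq_Ioc).symm
  calc (∫⁻ y in Cx, ENNReal.ofReal (1 - |y|) ∂υ) + ENNReal.ofReal (x^3) * Jl υ x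
      = (∫⁻ u in Set.Ioc (0:ℝ) x, (∫⁻ y in Cx, F y u ∂υ))
          + ∫⁻ u in Set.Ioc (0:ℝ) x, ENNReal.ofReal (3*u^2) * Jl υ x := by
        rw [glEq, hswap, hconst]
    _ = ∫⁻ u in Set.Ioc (0:ℝ) x,
          ((∫⁻ y in Cx, F y u ∂υ) + ENNReal.ofReal (3*u^2) * Jl υ x) := by
        rw [lintegral_add_right _ (indicator_meas.mul_const _)]
    _ ≤ ∫⁻ u in Set.Ioc (0:ℝ) x, ENNReal.ofReal (3*u^2) * Jl υ u :=
        setLIntegral_mono (indicator_meas.mul (Jl_anti υ).measurable) stepCD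

lemma shell_union {x : ℝ} (hx : 0 < x) :
    (⋃ k : ℕ, Set.Ioc (x/2^(k+1)) (x/2^k)) = Set.Ioc (0:ℝ) x := by
  ext u
  simp only [Set.mem_iUnion, Set.mem_Ioc]
  constructor
  · rintro ⟨k, h1, h2⟩
    refine ⟨lt_of_le_of_lt (by positivity) h1, le_trans h2 ?_⟩
    apply div_le_self hx.le
    exact one_le_pow₀ one_le_two
  · rintro ⟨h1, h2⟩
    have hex : ∃ k : ℕ, x / 2^(k+1) < u := by
      obtain ⟨k, hk⟩ := pow_unbounded_of_one_lt (x/u) one_lt_two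
      refine ⟨k, ?_⟩
      rw [div_lt_iff₀ (by positivity)] at hk ⊢
      calc x < u * 2^k := by linarith
        _ ≤ u * 2^(k+1) := by
          apply mul_le_mul_of_nonneg_left _ h1.le
          apply pow_le_pow_right₀ one_le_two (Nat.le_succ k)
    classical
    refine ⟨Nat.find hex, Nat.find_spec hex, ?_⟩
    rcases Nat.eq_zero_or_pos (Nat.find hex) with h0 | h0
    · rw [h0]; simpa using h2
    · have hne := Nat.find_min hex (Nat.sub_lt h0 Nat.one_pos)
      push_neg at hne
      have : Nat.find hex - 1 + 1 = Nat.find hex := by omega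
      rwa [this] at hne

lemma shell_disjoint {x : ℝ} (hx : 0 < x) :
    Pairwise (Function.onFun Disjoint fun k : ℕ => Set.Ioc (x/2^(k+1)) (x/2^k)) := by
  have aux : ∀ k l : ℕ, k < l →
      Disjoint (Set.Ioc (x/2^(k+1)) (x/2^k)) (Set.Ioc (x/2^(l+1)) (x/2^l)) := by
    intro k l h
    apply Set.disjoint_left.mpr
    rintro u ⟨h1, h2⟩ ⟨h3, h4⟩
    have h5 : x/2^l ≤ x/2^(k+1) := by
      apply div_le_div_of_nonneg_left hx.le (by positivity)
      apply pow_le_pow_right₀ one_le_two (by omega)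
    linarith
  intro k l hkl
  rcases lt_or_gt_of_ne hkl with h | h
  · exact aux k l h
  · exact (aux l k h).symm

lemma cube_Ioc_integral {a b : ℝ} (hab : a ≤ b) :
    ∫ u in Set.Ioc a b, 3*u^2 = b^3 - a^3 := by
  rw [← intervalIntegral.integral_of_le hab, intervalIntegral.integral_const_mul, integral_pow]
  norm_num; ring

lemma shells_bound (υ : Measure ℝ) [IsProbabilityMeasure υ] {θ : ℝ} (hθ0 : 0 ≤ θ)
    (htl : (∫⁻ y, ENNReal.ofReal ((1 - |y|)⁻¹) ∂υ) = ENNReal.ofReal θ)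
    {ε' δ x : ℝ} (hε0 : 0 < ε') (hε1 : ε' ≤ 1/2)
    (hδ : ∀ y : ℝ, 0 < y → y < δ → JJ υ (y/2) ≤ (1+ε') * JJ υ y)
    (hx0 : 0 < x) (hxδ : x < δ) :
    ∫⁻ u in Set.Ioc (0:ℝ) x, ENNReal.ofReal (3*u^2) * Jl υ u
      ≤ ENNReal.ofReal ((7*(1+ε')/(7-ε')) * (x^3 * JJ υ x)) := by
  -- crude bound
  have hcrude : ∀ u : ℝ, 0 < u → JJ υ u ≤ u⁻¹ * θ := by
    intro u hu
    have h1 := Jl_crude υ hu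
    rw [htl, ← ENNReal.ofReal_mul (by positivity)] at h1
    exact le_trans (ENNReal.toReal_mono ENNReal.ofReal_ne_top h1)
      (le_of_eq (ENNReal.toReal_ofReal (by positivity)))
  -- integrability of the real integrand
  have hmeasf : Measurable fun u : ℝ => 3*u^2 * JJ υ u :=
    ((measurable_const.mul ((measurable_id.pow_const 2))).mul (JJ_meas υ))
  have hnonneg : ∀ u : ℝ, 0 ≤ 3*u^2 * JJ υ u := fun u =>
    mul_nonneg (by positivity) (JJ_nonneg υ u)
  have hIntOn : IntegrableOn (fun u : ℝ => 3*u^2 * JJ υ u) (Set.Ioc 0 x) := by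
    apply Integrable.mono' (g := fun _ => 3*x*θ)
      ((integrableOn_const_iff).mpr (Or.inr (by simp [hx0])))
      hmeasf.aestronglyMeasurable
    filter_upwards [ae_restrict_mem measurableSet_Ioc] with u hu
    rw [Real.norm_eq_abs, abs_of_nonneg (hnonneg u)]
    have h2 := hcrude u hu.1
    have h3 : 3*u^2 * JJ υ u ≤ 3*u^2 * (u⁻¹*θ) :=
      mul_le_mul_of_nonneg_left h2 (by positivity)
    have hu0 : u ≠ 0 := ne_of_gt hu.1
    have h4 : 3*u^2 * (u⁻¹*θ) = 3*u*θ := by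
      field_simp
    have h5 : 3*u*θ ≤ 3*x*θ := by nlinarith [hu.1, hu.2]
    linarith
  -- convert lintegral to ofReal of real integral
  have hconv : ∫⁻ u in Set.Ioc (0:ℝ) x, ENNReal.ofReal (3*u^2) * Jl υ u
      = ENNReal.ofReal (∫ u in Set.Ioc (0:ℝ) x, 3*u^2 * JJ υ u) := by
    rw [ofReal_integral_eq_lintegral_ofReal hIntOn
      (Filter.Eventually.of_forall hnonneg)]
    apply setLIntegral_congr_fun measurableSet_Ioc
    intro u hu
    calc ENNReal.ofReal (3*u^2) * Jl υ u
        = ENNReal.ofReal (3*u^2) * ENNReal.ofReal (JJ υ u) := by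
          rw [JJ, ENNReal.ofReal_toReal (Jl_fin υ hu.1).ne]
      _ = ENNReal.ofReal (3*u^2 * JJ υ u) := (ENNReal.ofReal_mul (by positivity)).symm
  rw [hconv]
  apply ENNReal.ofReal_le_ofReal
  -- iterated ratio bound
  have hJJiter : ∀ k : ℕ, JJ υ (x/2^(k+1)) ≤ (1+ε')^(k+1) * JJ υ x := by
    intro k
    induction k with
    | zero => simpa using hδ x hx0 hxδ
    | succ k ih =>
      have hy0 : 0 < x/2^(k+1) := by positivity
      have hyδ : x/2^(k+1) < δ := by
        apply lt_of_le_of_lt _ hxδ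
        apply div_le_self hx0.le (one_le_pow₀ one_le_two)
      have h1 := hδ _ hy0 hyδ
      have h2 : x/2^(k+1)/2 = x/2^(k+2) := by ring
      rw [h2] at h1
      calc JJ υ (x/2^(k+2)) ≤ (1+ε')*JJ υ (x/2^(k+1)) := h1
        _ ≤ (1+ε')*((1+ε')^(k+1) * JJ υ x) :=
            mul_le_mul_of_nonneg_left ih (by linarith)
        _ = (1+ε')^(k+2) * JJ υ x := by ring
  -- per shell bound
  set S : ℕ → Set ℝ := fun k => Set.Ioc (x/2^(k+1)) (x/2^k) with hS
  have hSm : ∀ k, MeasurableSet (S k) := fun k => measurableSet_Ioc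
  have hIntS : ∀ k, IntegrableOn (fun u : ℝ => 3*u^2 * JJ υ u) (S k) := by
    intro k
    apply hIntOn.mono_set
    rw [← shell_union hx0]
    exact Set.subset_iUnion _ k
  have hshell : ∀ k : ℕ, (∫ u in S k, 3*u^2 * JJ υ u)
      ≤ ((7:ℝ)/8 * (x^3*JJ υ x) * (1+ε')) * ((1+ε')/8)^k := by
    intro k
    have ha0 : (0:ℝ) < x/2^(k+1) := by positivity
    have hab : x/2^(k+1) ≤ x/2^k := by
      apply div_le_div_of_nonneg_left hx0.le (by positivity)
      apply pow_le_pow_right₀ one_le_two (Nat.le_succ k)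
    have hIc : IntegrableOn (fun u : ℝ => 3*u^2 * JJ υ (x/2^(k+1))) (S k) := by
      apply Integrable.mono' (g := fun _ => 3*(x/2^k)^2 * JJ υ (x/2^(k+1)))
        ((integrableOn_const_iff).mpr (Or.inr (by simp only [hS]; exact measure_Ioc_lt_top)))
        (((continuous_const.mul (continuous_pow 2)).mul continuous_const).aestronglyMeasurable)
      filter_upwards [ae_restrict_mem measurableSet_Ioc] with u hu
      simp only [hS, Set.mem_Ioc] at hu
      simp only [Pi.mul_apply]
      rw [Real.norm_eq_abs, abs_of_nonneg (mul_nonneg (by positivity) (JJ_nonneg _ _))]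
      apply mul_le_mul_of_nonneg_right _ (JJ_nonneg _ _)
      have hu1 : 0 < u := lt_trans ha0 hu.1
      nlinarith [hu.2, hu1]
    have h1 : (∫ u in S k, 3*u^2 * JJ υ u)
        ≤ ∫ u in S k, 3*u^2 * JJ υ (x/2^(k+1)) := by
      apply setIntegral_mono_on (hIntS k) hIc (hSm k)
      intro u hu
      exact mul_le_mul_of_nonneg_left (JJ_anti υ ha0 hu.1.le) (by positivity)
    have h2 : ∫ u in S k, 3*u^2 * JJ υ (x/2^(k+1))
        = JJ υ (x/2^(k+1)) * ((x/2^k)^3 - (x/2^(k+1))^3) := by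
      have : (fun u : ℝ => 3*u^2 * JJ υ (x/2^(k+1)))
          = fun u : ℝ => JJ υ (x/2^(k+1)) * (3*u^2) := by funext u; ring
      rw [this, integral_const_mul, cube_Ioc_integral hab]
    have h8 : ((2:ℝ)^k)^3 = 8^k := by
      rw [← pow_mul, mul_comm, pow_mul]; norm_num
    have h8' : ((2:ℝ)^(k+1))^3 = 8 * 8^k := by
      rw [← pow_mul, show (k+1)*3 = 3*k+3 by ring, pow_add, mul_comm 3 k, pow_mul, h8]
      ring
    have h3 : (x/2^k)^3 - (x/2^(k+1))^3 = x^3 * (7/8) * (1/8)^k := by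
      rw [div_pow, div_pow, h8, h8', div_pow, one_pow]
      have h80 : (8:ℝ)^k ≠ 0 := by positivity
      field_simp
      ring
    have h4 : JJ υ (x/2^(k+1)) * ((x/2^k)^3 - (x/2^(k+1))^3)
        ≤ ((1+ε')^(k+1) * JJ υ x) * (x^3 * (7/8) * (1/8)^k) := by
      rw [h3]
      apply mul_le_mul (hJJiter k) le_rfl (by positivity)
      exact mul_nonneg (by positivity) (JJ_nonneg υ x)
    calc (∫ u in S k, 3*u^2 * JJ υ u) ≤ JJ υ (x/2^(k+1)) * ((x/2^k)^3 - (x/2^(k+1))^3) := by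
          rw [← h2]; exact h1
      _ ≤ ((1+ε')^(k+1) * JJ υ x) * (x^3 * (7/8) * (1/8)^k) := h4
      _ = ((7:ℝ)/8 * (x^3*JJ υ x) * (1+ε')) * ((1+ε')/8)^k := by
          simp only [div_pow, one_pow, pow_succ]
          have h80 : (8:ℝ)^k ≠ 0 := by positivity
          field_simp
  -- sum up
  have hr0 : (0:ℝ) ≤ (1+ε')/8 := by linarith
  have hr1 : (1+ε')/8 < 1 := by linarith
  have hbsum : Summable (fun k : ℕ => ((7:ℝ)/8 * (x^3*JJ υ x) * (1+ε')) * ((1+ε')/8)^k) := by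
    exact (summable_geometric_of_lt_one hr0 hr1).mul_left _
  have hIsum : Summable (fun k : ℕ => ∫ u in S k, 3*u^2 * JJ υ u) := by
    apply Summable.of_nonneg_of_le _ hshell hbsum
    intro k
    apply setIntegral_nonneg (hSm k)
    intro u _
    exact hnonneg u
  have hdecomp : (∫ u in Set.Ioc (0:ℝ) x, 3*u^2 * JJ υ u)
      = ∑' k : ℕ, ∫ u in S k, 3*u^2 * JJ υ u := by
    rw [← shell_union hx0]
    apply integral_iUnion hSm (shell_disjoint hx0)
    rw [shell_union hx0]
    exact hIntOn
  rw [hdecomp]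
  calc (∑' k : ℕ, ∫ u in S k, 3*u^2 * JJ υ u)
      ≤ ∑' k : ℕ, ((7:ℝ)/8 * (x^3*JJ υ x) * (1+ε')) * ((1+ε')/8)^k :=
        Summable.tsum_le_tsum hshell hIsum hbsum
    _ = ((7:ℝ)/8 * (x^3*JJ υ x) * (1+ε')) * ∑' k : ℕ, ((1+ε')/8)^k := tsum_mul_left
    _ = ((7:ℝ)/8 * (x^3*JJ υ x) * (1+ε')) * (1 - (1+ε')/8)⁻¹ := by
        rw [tsum_geometric_of_lt_one hr0 hr1]
    _ = (7*(1+ε')/(7-ε')) * (x^3 * JJ υ x) := by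
        have h7 : (7:ℝ) - ε' > 0 := by linarith
        have h7' : (7:ℝ) - ε' ≠ 0 := ne_of_gt h7
        rw [show (1 - (1+ε')/8) = (7-ε')/8 by ring]
        rw [show ((7-ε')/8 : ℝ)⁻¹ = 8/(7-ε') by rw [inv_div]]
        field_simp

lemma karamata_small (υ : Measure ℝ) [IsProbabilityMeasure υ] {θ : ℝ} (hθ0 : 0 ≤ θ)
    (hae : ∀ᵐ y ∂υ, 0 < 1 - |y| ∧ |y| ≤ 1)
    (htl : (∫⁻ y, ENNReal.ofReal ((1 - |y|)⁻¹) ∂υ) = ENNReal.ofReal θ)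
    {ε₁ δ x : ℝ} (hε₁ : 0 < ε₁) (hε₁' : ε₁ ≤ 1)
    (hδ : ∀ y : ℝ, 0 < y → y < δ → JJ υ (y/2) ≤ (1+ε₁/2) * JJ υ y)
    (hx0 : 0 < x) (hxδ : x < δ) :
    (∫ y in {y : ℝ | 1 - |y| < x}, (1 - |y|) ∂υ) ≤ ε₁ * (x^3 * JJ υ x) := by
  set ε' := ε₁/2 with hε'
  have hε'0 : 0 < ε' := by positivity
  have hε'1 : ε' ≤ 1/2 := by rw [hε']; linarith
  set glx := ∫⁻ y in {y : ℝ | 1 - |y| < x}, ENNReal.ofReal (1 - |y|) ∂υ with hglx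
  have hgr : (∫ y in {y : ℝ | 1 - |y| < x}, (1 - |y|) ∂υ) = glx.toReal := by
    rw [integral_eq_lintegral_of_nonneg_ae _ cont_s.aestronglyMeasurable.restrict]
    filter_upwards [ae_restrict_of_ae hae] with y hy
    exact hy.1.le
  set B := (7*(1+ε')/(7-ε')) * (x^3 * JJ υ x) with hB
  have hchain : glx + ENNReal.ofReal (x^3) * Jl υ x ≤ ENNReal.ofReal B :=
    le_trans (karamata_fubini υ hae hx0) (shells_bound υ hθ0 htl hε'0 hε'1 hδ hx0 hxδ)
  have hglfin : glx ≠ ⊤ := by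
    apply ne_top_of_le_ne_top ENNReal.ofReal_ne_top
    exact le_trans le_self_add hchain
  have hprodfin : ENNReal.ofReal (x^3) * Jl υ x ≠ ⊤ :=
    ENNReal.mul_ne_top ENNReal.ofReal_ne_top (Jl_fin υ hx0).ne
  have hBnn : 0 ≤ B := by
    apply mul_nonneg _ (mul_nonneg (by positivity) (JJ_nonneg υ x))
    have : (0:ℝ) < 7 - ε' := by linarith
    positivity
  have h2 : glx.toReal + x^3 * JJ υ x ≤ B := by
    have h3 := ENNReal.toReal_mono ENNReal.ofReal_ne_top hchain
    rw [ENNReal.toReal_add hglfin hprodfin, ENNReal.toReal_mul,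
      ENNReal.toReal_ofReal (by positivity : (0:ℝ) ≤ x^3),
      ENNReal.toReal_ofReal hBnn] at h3
    exact h3
  rw [hgr]
  have hA : 0 ≤ x^3 * JJ υ x := mul_nonneg (by positivity) (JJ_nonneg υ x)
  have h7 : (0:ℝ) < 7 - ε' := by linarith
  have hBid : B * (7 - ε') = 7*(1+ε') * (x^3 * JJ υ x) := by
    rw [hB]; field_simp
  have hgr0 : 0 ≤ glx.toReal := ENNReal.toReal_nonneg
  nlinarith [mul_le_mul_of_nonneg_right h2 h7.le]


set_option maxHeartbeats 2000000 in
/-- **Lemma A.3 (auxiliary lemma for Theorem 2.8).**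
Let `υ` be a symmetric Borel probability measure on `[-1,1]` with
`θ = ∫ (1-|x|)⁻¹ υ(dx) < ∞`.  With `p_n = ∫ |x|^{n-1}(1-|x|) υ(dx)` (the
distribution of the first regeneration time), `H(u) = ∑_{1 ≤ n ≤ u} n² p_n`
and `V(x) = (2/θ) ∫_{[0,1-x]} (1-y)⁻² υ(dy)`, if `V` is slowly varying at
`0⁺` and `V(x) → ∞` as `x → 0⁺`, then `H(1/x)/(2θV(x)) → 1` as `x → 0⁺`;
in particular `H` is slowly varying at infinity. -/
theorem regeneration_time_truncated_second_moment_slowly_varying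
    (υ : Measure ℝ) [IsProbabilityMeasure υ]
    (hsupp : υ (Set.Icc (-1 : ℝ) 1)ᶜ = 0)
    (hsym : ∀ A : Set ℝ, MeasurableSet A → υ ((fun x => -x) ⁻¹' A) = υ A)
    (hθfin : ∫⁻ x, (ENNReal.ofReal (1 - |x|))⁻¹ ∂υ < ⊤)
    (θ : ℝ) (hθ : θ = ∫ x, (1 - |x|)⁻¹ ∂υ)
    (p : ℕ → ℝ) (hp : ∀ n : ℕ, 1 ≤ n → p n = ∫ x, |x| ^ (n - 1) * (1 - |x|) ∂υ)
    (H : ℝ → ℝ) (hH : ∀ u : ℝ, H u = ∑ n ∈ Finset.Icc 1 ⌊u⌋₊, (n : ℝ) ^ 2 * p n)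
    (V : ℝ → ℝ)
    (hV : ∀ x : ℝ, V x = (2 / θ) * ∫ y in Set.Icc (0:ℝ) (1 - x), ((1 - y) ^ 2)⁻¹ ∂υ)
    (hVslow : ∀ s > 0, Tendsto (fun x : ℝ => V (s * x) / V x) (𝓝[>] (0:ℝ)) (𝓝 1))
    (hVinf : Tendsto V (𝓝[>] (0:ℝ)) atTop) :
    Tendsto (fun x : ℝ => H (1/x) / (2 * θ * V x)) (𝓝[>] (0:ℝ)) (𝓝 1) ∧
    ∀ s > 0, Tendsto (fun u : ℝ => H (s * u) / H u) atTop (𝓝 1) := by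
  have hae := ae_facts υ hsupp hθfin
  obtain ⟨hθint, hθ1, htl⟩ := theta_lintegral υ hsupp hθfin θ hθ
  have hθpos : 0 < θ := lt_of_lt_of_le one_pos hθ1
  set c₀ := (υ {0}).toReal with hc₀
  have hc₀nn : 0 ≤ c₀ := ENNReal.toReal_nonneg
  -- J–V relation
  have hJV : ∀ x : ℝ, 0 < x → x < 1 → JJ υ x = θ * V x - c₀ := by
    intro x h0 h1
    rw [JJ_eq_integral, J_symm υ hsym h0 h1, hV x, ← hc₀]
    have : θ * (2/θ * ∫ y in Set.Icc (0:ℝ) (1-x), ((1 - y) ^ 2)⁻¹ ∂υ)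
        = 2 * ∫ y in Set.Icc (0:ℝ) (1-x), ((1 - y) ^ 2)⁻¹ ∂υ := by
      field_simp
    rw [this]
  -- eventual membership
  have hmemx : ∀ c : ℝ, 0 < c → ∀ᶠ x in 𝓝[>] (0:ℝ), 0 < x ∧ x < c := by
    intro c hc
    have h1 : Ioo (0:ℝ) c ∈ 𝓝[>] (0:ℝ) := Ioo_mem_nhdsGT_of_mem ⟨le_refl 0, hc⟩
    filter_upwards [h1] with x hx
    exact ⟨hx.1, hx.2⟩
  have hVev : ∀ M : ℝ, ∀ᶠ x in 𝓝[>] (0:ℝ), M ≤ V x := fun M =>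
    hVinf.eventually_ge_atTop M
  have hJVev : ∀ᶠ x in 𝓝[>] (0:ℝ), JJ υ x = θ * V x - c₀ := by
    filter_upwards [hmemx 1 one_pos] with x hx
    exact hJV x hx.1 hx.2
  -- slow variation transfer
  have hslow : ∀ K : ℝ, 0 < K → ∀ η : ℝ, 0 < η →
      ∀ᶠ x in 𝓝[>] (0:ℝ), |V (K*x) - V x| ≤ η * V x := by
    intro K hK η hη
    have h1 := Metric.tendsto_nhds.mp (hVslow K hK) (η/2) (by positivity)
    filter_upwards [h1, hVev 1] with x hx1 hx2
    rw [Real.dist_eq] at hx1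
    have hVx : 0 < V x := lt_of_lt_of_le one_pos hx2
    have h2 : |V (K*x)/V x - 1| ≤ η := le_trans hx1.le (by linarith)
    have h3 : V (K*x) - V x = (V (K*x)/V x - 1) * V x := by
      field_simp
    calc |V (K*x) - V x| = |V (K*x)/V x - 1| * V x := by
          rw [h3, abs_mul, abs_of_pos hVx]
      _ ≤ η * V x := mul_le_mul_of_nonneg_right h2 hVx.le
  -- the halving hypothesis for Karamata
  have hhalf : ∀ ε' : ℝ, 0 < ε' →
      ∀ᶠ y in 𝓝[>] (0:ℝ), JJ υ (y/2) ≤ (1+ε') * JJ υ y := by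
    intro ε' hε'
    filter_upwards [hslow (1/2) one_half_pos (ε'/2) (by positivity),
      hVev (2*c₀/θ + 1), hmemx 1 one_pos, hJVev] with y h1 h2 h3 h4
    have hy2 : 0 < y/2 := by linarith [h3.1]
    have hy21 : y/2 < 1 := by linarith [h3.2]
    have h5 : JJ υ (y/2) = θ * V (y/2) - c₀ := hJV _ hy2 hy21
    have h6 : (1/2) * y = y/2 := by ring
    rw [h6] at h1
    have hθne : θ ≠ 0 := ne_of_gt hθpos
    have hdnn : 0 ≤ 2*c₀/θ := div_nonneg (by linarith) hθpos.le
    have hVy : 1 ≤ V y := le_trans (by linarith) h2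
    have hc : c₀ ≤ (θ/2) * V y := by
      have h8 : 2*c₀/θ ≤ V y := by linarith
      have h9 := mul_le_mul_of_nonneg_left h8
        (le_of_lt (by positivity : (0:ℝ) < θ/2))
      calc c₀ = θ/2 * (2*c₀/θ) := by field_simp
        _ ≤ (θ/2) * V y := h9
    have h7 : θ * (V (y/2) - V y) ≤ (ε'/2) * θ * V y := by
      have h10 := (abs_le.mp h1).2
      nlinarith
    rw [h5, h4]
    nlinarith [mul_le_mul_of_nonneg_left hc hε'.le]
  -- Karamata eventual bound
  have hkar : ∀ ε₁ : ℝ, 0 < ε₁ → ε₁ ≤ 1 → ∀ᶠ x in 𝓝[>] (0:ℝ),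
      (∫ y in {y : ℝ | 1 - |y| < x}, (1 - |y|) ∂υ) ≤ ε₁ * (x^3 * JJ υ x) := by
    intro ε₁ h1 h2
    have hev := hhalf (ε₁/2) (by positivity)
    obtain ⟨u, hu, hsub⟩ := mem_nhdsGT_iff_exists_Ioo_subset.mp hev
    filter_upwards [hmemx u hu] with x hx
    exact karamata_small υ (by linarith : (0:ℝ) ≤ θ) hae htl h1 h2
      (fun y hy0 hyu => hsub ⟨hy0, hyu⟩) hx.1 hx.2
  -- H bounds
  have hHbound : ∀ K : ℝ, 2 ≤ K → ∀ ε₁ : ℝ, 0 < ε₁ → ε₁ ≤ 1 → ∀ᶠ x in 𝓝[>] (0:ℝ),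
      H (1/x) ≤ 2*JJ υ x + ε₁*JJ υ x ∧
      2*JJ υ (K*x) - θ - (48020/K^2)*JJ υ (K*x) ≤ H (1/x) := by
    intro K hK ε₁ hε₁0 hε₁1
    filter_upwards [hmemx (1/8) (by norm_num), hkar ε₁ hε₁0 hε₁1] with x hx hkarx
    obtain ⟨hx0, hx8⟩ := hx
    have hKx0 : 0 < K*x := by positivity
    have hxinv : (8:ℝ) ≤ 1/x := by
      rw [le_div_iff₀ hx0]; linarith
    set N := ⌊(1:ℝ)/x⌋₊ with hNdef
    have hN8 : 8 ≤ N := Nat.le_floor (by exact_mod_cast hxinv)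
    have hN7 : 7 ≤ N := by omega
    have hNle : (N:ℝ) ≤ 1/x := Nat.floor_le (by positivity)
    have hNge : 1/x - 1 ≤ (N:ℝ) := by
      have := Nat.lt_floor_add_one ((1:ℝ)/x)
      linarith
    set FN : ℝ → ℝ := fun y => (1 - |y|) * Psum N |y| with hFN
    have hFNeq : ∀ y : ℝ, FN y = (1-|y|) * Psum N (1-(1-|y|)) := by
      intro y
      rw [hFN]
      congr 2
      ring
    have hPmeas : Measurable fun y : ℝ => Psum N |y| := by
      simp only [Psum]
      apply Finset.measurable_sum
      intro n _
      exact measurable_const.mul (measurable_abs.pow_const _)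
    have hFNmeas : Measurable FN := cont_s.measurable.mul hPmeas
    -- global bounds a.e.
    have hFNbd : ∀ᵐ y ∂υ, 0 ≤ FN y ∧ FN y ≤ (N:ℝ)^3 * (1-|y|) ∧ FN y ≤ (N:ℝ)^3 := by
      filter_upwards [hae] with y hy
      have h1 : (0:ℝ) ≤ 1 - |y| := hy.1.le
      have h2 : 1 - |y| ≤ 1 := by linarith [abs_nonneg y]
      rw [hFNeq y]
      refine ⟨fN_nonneg h1 h2 N, fN_le_cube h1 h2 N, ?_⟩
      calc (1-|y|) * Psum N (1-(1-|y|)) ≤ (N:ℝ)^3 * (1-|y|) := fN_le_cube h1 h2 N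
        _ ≤ (N:ℝ)^3 * 1 := by
            apply mul_le_mul_of_nonneg_left h2 (by positivity)
        _ = (N:ℝ)^3 := mul_one _
    have hFNint : Integrable FN υ := by
      apply Integrable.mono' (integrable_const ((N:ℝ)^3)) hFNmeas.aestronglyMeasurable
      filter_upwards [hFNbd] with y hy
      rw [Real.norm_eq_abs, abs_of_nonneg hy.1]
      exact hy.2.2
    -- representation
    have hHrepr : H (1/x) = ∫ y, FN y ∂υ := by
      rw [hH (1/x)]
      have hint_gn : ∀ n ∈ Finset.Icc 1 N,
          Integrable (fun y : ℝ => (n:ℝ)^2 * (|y|^(n-1) * (1 - |y|))) υ := by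
        intro n _
        apply Integrable.mono' (integrable_const ((n:ℝ)^2))
          ((measurable_const.mul ((measurable_abs.pow_const _).mul
            cont_s.measurable)).aestronglyMeasurable)
        filter_upwards [hae] with y hy
        have h1 : (0:ℝ) ≤ 1 - |y| := hy.1.le
        have h2 : |y| ≤ 1 := hy.2
        have h3 : |y|^(n-1) ≤ 1 := pow_le_one₀ (abs_nonneg y) h2
        have h4 : 0 ≤ |y|^(n-1) := pow_nonneg (abs_nonneg y) _
        simp only [Pi.mul_apply]
        rw [Real.norm_eq_abs, abs_of_nonneg (by positivity)]
        have h5 : |y|^(n-1) * (1 - |y|) ≤ 1 := by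
          nlinarith [mul_le_mul h3 (show 1 - |y| ≤ 1 by linarith [abs_nonneg y]) h1 zero_le_one]
        nlinarith [sq_nonneg (n:ℝ)]
      have h1 : ∀ n ∈ Finset.Icc 1 N, (n:ℝ)^2 * p n
          = ∫ y, (n:ℝ)^2 * (|y|^(n-1) * (1 - |y|)) ∂υ := by
        intro n hn
        rw [hp n (Finset.mem_Icc.mp hn).1, integral_const_mul]
      rw [Finset.sum_congr rfl h1, ← integral_finset_sum _ hint_gn]
      congr 1
      funext y
      rw [hFN]
      simp only [Psum, Finset.mul_sum]
      apply Finset.sum_congr rfl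
      intro n _
      ring
    -- upper bound over Sx
    have hup1 : ∫ y in {y : ℝ | x ≤ 1 - |y|}, FN y ∂υ ≤ 2 * JJ υ x := by
      have hint2 : IntegrableOn (fun y : ℝ => 2 * ((1-|y|)^2)⁻¹)
          {y : ℝ | x ≤ 1 - |y|} υ := (JJ_integrableOn υ hx0).const_mul 2
      have := setIntegral_mono_ae_restrict hFNint.integrableOn hint2 ?_
      · calc ∫ y in {y : ℝ | x ≤ 1 - |y|}, FN y ∂υ
            ≤ ∫ y in {y : ℝ | x ≤ 1 - |y|}, 2 * ((1-|y|)^2)⁻¹ ∂υ := this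
          _ = 2 * JJ υ x := by rw [integral_const_mul, ← JJ_eq_integral]
      · filter_upwards [ae_restrict_of_ae hae] with y hy
        have h2 : 1 - |y| ≤ 1 := by linarith [abs_nonneg y]
        have h3 := fN_upper hy.1 h2 N
        rw [hFNeq y]
        calc (1-|y|) * Psum N (1-(1-|y|)) ≤ 2/(1-|y|)^2 := h3
          _ = 2 * ((1-|y|)^2)⁻¹ := by rw [div_eq_mul_inv]
    -- upper bound over complement
    have hcompl : {y : ℝ | x ≤ 1 - |y|}ᶜ = {y : ℝ | 1 - |y| < x} := by
      ext y
      simp [not_le]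
    have hupC : ∫ y in {y : ℝ | x ≤ 1 - |y|}ᶜ, FN y ∂υ ≤ ε₁ * JJ υ x := by
      rw [hcompl]
      have hintg : IntegrableOn (fun y : ℝ => (N:ℝ)^3 * (1-|y|))
          {y : ℝ | 1 - |y| < x} υ := by
        apply Integrable.mono' (integrable_const ((N:ℝ)^3))
          ((measurable_const.mul cont_s.measurable).aestronglyMeasurable)
        filter_upwards [ae_restrict_of_ae hae] with y hy
        have h2 : 1 - |y| ≤ 1 := by linarith [abs_nonneg y]
        have h3 : (0:ℝ) ≤ (N:ℝ)^3 := by positivity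
        simp only [Pi.mul_apply]
        rw [Real.norm_eq_abs, abs_of_nonneg (mul_nonneg h3 hy.1.le)]
        nlinarith [hy.1.le]
      have h1 : ∫ y in {y : ℝ | 1 - |y| < x}, FN y ∂υ
          ≤ ∫ y in {y : ℝ | 1 - |y| < x}, (N:ℝ)^3 * (1-|y|) ∂υ := by
        apply setIntegral_mono_ae_restrict hFNint.integrableOn hintg
        filter_upwards [ae_restrict_of_ae hFNbd] with y hy
        exact hy.2.1
      have h2 : ∫ y in {y : ℝ | 1 - |y| < x}, (N:ℝ)^3 * (1-|y|) ∂υ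
          = (N:ℝ)^3 * ∫ y in {y : ℝ | 1 - |y| < x}, (1-|y|) ∂υ := integral_const_mul _ _
      have h3 : (N:ℝ)^3 * ∫ y in {y : ℝ | 1 - |y| < x}, (1-|y|) ∂υ
          ≤ (N:ℝ)^3 * (ε₁ * (x^3 * JJ υ x)) :=
        mul_le_mul_of_nonneg_left hkarx (by positivity)
      have h4 : (N:ℝ)^3 * (ε₁ * (x^3 * JJ υ x)) ≤ ε₁ * JJ υ x := by
        have h5 : (N:ℝ)^3 * x^3 ≤ 1 := by
          have h6 : (N:ℝ) * x ≤ 1 := by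
            calc (N:ℝ) * x ≤ (1/x) * x := mul_le_mul_of_nonneg_right hNle hx0.le
              _ = 1 := by field_simp
          calc (N:ℝ)^3 * x^3 = ((N:ℝ)*x)^3 := by ring
            _ ≤ 1^3 := pow_le_pow_left₀ (by positivity) h6 3
            _ = 1 := one_pow 3
        calc (N:ℝ)^3 * (ε₁ * (x^3 * JJ υ x)) = ((N:ℝ)^3 * x^3) * (ε₁ * JJ υ x) := by ring
          _ ≤ 1 * (ε₁ * JJ υ x) := by
              apply mul_le_mul_of_nonneg_right h5
              exact mul_nonneg hε₁0.le (JJ_nonneg υ x)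
          _ = ε₁ * JJ υ x := one_mul _
      linarith
    have hup : H (1/x) ≤ 2*JJ υ x + ε₁*JJ υ x := by
      rw [hHrepr, ← integral_add_compl (measSet1 x) hFNint]
      linarith
    -- lower bound
    refine ⟨hup, ?_⟩
    set A : Set ℝ := {y : ℝ | K*x ≤ 1 - |y|} with hA
    have hint2A : IntegrableOn (fun y : ℝ => ((1-|y|)^2)⁻¹) A υ := JJ_integrableOn υ hKx0
    have hint1A : IntegrableOn (fun y : ℝ => (1-|y|)⁻¹) A υ := by
      apply Integrable.mono' (integrable_const ((K*x)⁻¹))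
        (cont_s.measurable.inv.aestronglyMeasurable)
      filter_upwards [ae_restrict_mem (measSet1 (K*x))] with y hy
      have h1 : K*x ≤ 1 - |y| := hy
      simp only [Pi.inv_apply]
      rw [Real.norm_eq_abs, abs_of_nonneg (inv_nonneg.mpr (by linarith : (0:ℝ) ≤ 1-|y|))]
      exact inv_anti₀ hKx0 h1
    have hi2A : IntegrableOn (fun y : ℝ => 2*((1-|y|)^2)⁻¹) A υ := hint2A.const_mul 2
    have hi3A : IntegrableOn (fun y : ℝ => (48020/K^2)*((1-|y|)^2)⁻¹) A υ :=
      hint2A.const_mul _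
    have hi12A : IntegrableOn (fun y : ℝ => 2*((1-|y|)^2)⁻¹ - (1-|y|)⁻¹) A υ :=
      hi2A.sub hint1A
    have hgA : IntegrableOn (fun y : ℝ =>
        2*((1-|y|)^2)⁻¹ - (1-|y|)⁻¹ - (48020/K^2)*((1-|y|)^2)⁻¹) A υ :=
      hi12A.sub hi3A
    have hlowA : ∫ y in A, (2*((1-|y|)^2)⁻¹ - (1-|y|)⁻¹
        - (48020/K^2)*((1-|y|)^2)⁻¹) ∂υ ≤ ∫ y in A, FN y ∂υ := by
      apply setIntegral_mono_ae_restrict hgA hFNint.integrableOn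
      filter_upwards [ae_restrict_of_ae hae, ae_restrict_mem (measSet1 (K*x))]
        with y hy hyA
      have hs0 : 0 < 1 - |y| := hy.1
      have hs1 : 1 - |y| ≤ 1 := by linarith [abs_nonneg y]
      have hsK : K*x ≤ 1 - |y| := hyA
      have hNs : K ≤ 2*((N:ℝ)*(1-|y|)) := by
        have h1 : (N:ℝ) ≥ 1/(2*x) := by
          rw [ge_iff_le, div_le_iff₀ (by positivity)]
          have : (1/x) * x = 1 := by field_simp
          nlinarith [hNge, hx8]
        have h2 : (N:ℝ)*(1-|y|) ≥ (1/(2*x))*(K*x) := by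
          apply mul_le_mul h1 hsK (by positivity)
          positivity
        have h3 : (1/(2*x))*(K*x) = K/2 := by field_simp
        rw [h3] at h2
        linarith
      have := fN_lower_far hs0 hs1 hN7 hK hNs
      rw [hFNeq y]
      have hKne : K ≠ 0 := by linarith
      have hsne : (1:ℝ) - |y| ≠ 0 := ne_of_gt hs0
      calc 2*((1-|y|)^2)⁻¹ - (1-|y|)⁻¹ - (48020/K^2)*((1-|y|)^2)⁻¹
          = 2/(1-|y|)^2 - 1/(1-|y|) - 48020/(K^2*(1-|y|)^2) := by
            field_simp
        _ ≤ (1-|y|) * Psum N (1-(1-|y|)) := this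
    have hlowval : ∫ y in A, (2*((1-|y|)^2)⁻¹ - (1-|y|)⁻¹
        - (48020/K^2)*((1-|y|)^2)⁻¹) ∂υ
        = 2*JJ υ (K*x) - (∫ y in A, (1-|y|)⁻¹ ∂υ) - (48020/K^2)*JJ υ (K*x) := by
      rw [integral_sub hi12A hi3A, integral_sub hi2A hint1A,
        integral_const_mul, integral_const_mul, hA, ← JJ_eq_integral]
    have hA1 : ∫ y in A, (1-|y|)⁻¹ ∂υ ≤ θ := by
      rw [hθ]
      apply setIntegral_le_integral hθint
      filter_upwards [hae] with y hy
      simp only [Pi.zero_apply]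
      exact inv_nonneg.mpr hy.1.le
    have hlow2 : ∫ y in A, FN y ∂υ ≤ ∫ y, FN y ∂υ := by
      rw [← integral_add_compl (measSet1 (K*x)) hFNint]
      have h1 : 0 ≤ ∫ y in Aᶜ, FN y ∂υ := by
        apply setIntegral_nonneg_ae (measSet1 (K*x)).compl
        filter_upwards [hFNbd] with y hy _
        exact hy.1
      simp only [hA]
      linarith
    rw [hHrepr]
    have hJKnn := JJ_nonneg υ (K*x)
    linarith
  -- main eventual bound
  have hmain : ∀ ε : ℝ, 0 < ε → ∀ᶠ x in 𝓝[>] (0:ℝ),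
      |H (1/x) - 2*θ*V x| ≤ (θ*ε) * V x ∧ 1 ≤ V x := by
    intro ε hε
    set e := θ*ε/5 with he
    have he0 : 0 < e := by positivity
    obtain ⟨K, hK2, hKbig⟩ : ∃ K : ℝ, 2 ≤ K ∧ (48020/K^2)*θ ≤ e := by
      refine ⟨max 2 (Real.sqrt (48020*θ/e)), le_max_left _ _, ?_⟩
      set K := max 2 (Real.sqrt (48020*θ/e)) with hKdef
      have hKpos : (0:ℝ) < K := lt_of_lt_of_le two_pos (le_max_left _ _)
      have hKsq : 48020*θ/e ≤ K^2 := by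
        have h1 : Real.sqrt (48020*θ/e) ≤ K := le_max_right _ _
        have h2 : (0:ℝ) ≤ 48020*θ/e := by positivity
        calc 48020*θ/e = (Real.sqrt (48020*θ/e))^2 := (Real.sq_sqrt h2).symm
          _ ≤ K^2 := by nlinarith [Real.sqrt_nonneg (48020*θ/e)]
      rw [div_le_iff₀ he0] at hKsq
      rw [div_mul_eq_mul_div, div_le_iff₀ (by positivity)]
      nlinarith
    have hKpos : (0:ℝ) < K := by linarith
    set ε₁ := min 1 (e/θ) with hε₁def
    have hε₁0 : 0 < ε₁ := lt_min one_pos (by positivity)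
    have hε₁1 : ε₁ ≤ 1 := min_le_left _ _
    have hεθ : ε₁ * θ ≤ e := by
      have h1 := min_le_right 1 (e/θ)
      calc ε₁*θ ≤ (e/θ)*θ := mul_le_mul_of_nonneg_right h1 hθpos.le
        _ = e := by field_simp
    filter_upwards [hHbound K hK2 ε₁ hε₁0 hε₁1, hJVev, hVev 1,
      hVev ((2*c₀ + θ)/e), hslow K hKpos (e/(2*θ)) (by positivity),
      hmemx (1/K) (by positivity)] with x hHb hJx hV1 hV2 hslowx hxK
    obtain ⟨hup, hlow⟩ := hHb
    have hVx1 : 1 ≤ V x := hV1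
    have hVxpos : 0 < V x := lt_of_lt_of_le one_pos hVx1
    have hKx1 : K*x < 1 := by
      have := hxK.2
      rw [lt_div_iff₀ hKpos] at this
      linarith [mul_comm x K]
    have hJKx : JJ υ (K*x) = θ * V (K*x) - c₀ := hJV _ (mul_pos hKpos hxK.1) hKx1
    have hJxnn : 0 ≤ JJ υ x := JJ_nonneg υ x
    have hJle : JJ υ x ≤ θ * V x := by rw [hJx]; linarith
    have hJKle : JJ υ (K*x) ≤ JJ υ x := by
      apply JJ_anti υ hxK.1
      nlinarith [hxK.1]
    refine ⟨abs_le.mpr ⟨?_, ?_⟩, hVx1⟩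
    · -- lower: -(θε)Vx ≤ H - 2θVx
      have h1 : θ*(V x - V (K*x)) ≤ (e/2)*V x := by
        have h2 := (abs_le.mp hslowx).1
        have h3 : V x - V (K*x) ≤ (e/(2*θ))*V x := by linarith
        calc θ*(V x - V (K*x)) ≤ θ*((e/(2*θ))*V x) :=
              mul_le_mul_of_nonneg_left h3 hθpos.le
          _ = (e/2)*V x := by field_simp
      have h2 : (48020/K^2)*JJ υ (K*x) ≤ e*V x := by
        calc (48020/K^2)*JJ υ (K*x) ≤ (48020/K^2)*(θ*V x) := by
              apply mul_le_mul_of_nonneg_left (le_trans hJKle hJle) (by positivity)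
          _ = ((48020/K^2)*θ)*V x := by ring
          _ ≤ e*V x := mul_le_mul_of_nonneg_right hKbig hVxpos.le
      have h3 : 2*c₀ + θ ≤ e*V x := by
        have h4 : (2*c₀+θ)/e ≤ V x := hV2
        calc 2*c₀ + θ = e*((2*c₀+θ)/e) := by field_simp
          _ ≤ e*V x := mul_le_mul_of_nonneg_left h4 he0.le
      rw [hJKx] at hlow
      have h5 : e*5 = θ*ε := by rw [he]; ring
      nlinarith
    · -- upper
      have h1 : ε₁*JJ υ x ≤ e*V x := by
        calc ε₁*JJ υ x ≤ ε₁*(θ*V x) := mul_le_mul_of_nonneg_left hJle hε₁0.le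
          _ = (ε₁*θ)*V x := by ring
          _ ≤ e*V x := mul_le_mul_of_nonneg_right hεθ hVxpos.le
      rw [hJx] at hup
      have h5 : e*5 = θ*ε := by rw [he]; ring
      nlinarith
  -- part 1
  have part1 : Tendsto (fun x : ℝ => H (1/x) / (2 * θ * V x)) (𝓝[>] (0:ℝ)) (𝓝 1) := by
    rw [Metric.tendsto_nhds]
    intro ε hε
    filter_upwards [hmain (ε/2) (by positivity)] with x hx
    obtain ⟨h1, h2⟩ := hx
    have hVpos : 0 < V x := lt_of_lt_of_le one_pos h2
    have hden : 0 < 2*θ*V x := by positivity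
    rw [Real.dist_eq]
    have h3 : H (1/x)/(2*θ*V x) - 1 = (H (1/x) - 2*θ*V x)/(2*θ*V x) := by
      field_simp
    rw [h3, abs_div, abs_of_pos hden]
    rw [div_lt_iff₀ hden]
    calc |H (1/x) - 2*θ*V x| ≤ (θ*(ε/2))*V x := h1
      _ < ε*(2*θ*V x) := by nlinarith
  refine ⟨part1, ?_⟩
  -- part 2
  intro s hs
  have hHpos : ∀ᶠ x in 𝓝[>] (0:ℝ), 0 < H (1/x) := by
    filter_upwards [hmain 1 one_pos] with x hx
    obtain ⟨h1, h2⟩ := hx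
    have hVpos : 0 < V x := lt_of_lt_of_le one_pos h2
    have := (abs_le.mp h1).1
    nlinarith
  have hxc : Tendsto (fun u : ℝ => 1/u) atTop (𝓝[>] (0:ℝ)) := by
    apply tendsto_nhdsWithin_iff.mpr
    constructor
    · simpa using tendsto_inv_atTop_zero
    · filter_upwards [eventually_gt_atTop 0] with u hu
      simp [hu]
  have hxcs : Tendsto (fun u : ℝ => 1/(s*u)) atTop (𝓝[>] (0:ℝ)) := by
    have h1 : Tendsto (fun u : ℝ => s*u) atTop atTop :=
      Tendsto.const_mul_atTop hs tendsto_id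
    exact hxc.comp h1
  have hratio : Tendsto (fun u : ℝ => V (1/(s*u)) / V (1/u)) atTop (𝓝 1) := by
    have h0 := (hVslow (1/s) (by positivity)).comp hxc
    apply Tendsto.congr _ h0
    intro u
    simp only [Function.comp_apply]
    rw [one_div_mul_one_div]
  have hφs : Tendsto (fun u : ℝ => H (1/(1/(s*u))) / (2*θ*V (1/(s*u)))) atTop (𝓝 1) :=
    part1.comp hxcs
  have hφu : Tendsto (fun u : ℝ => H (1/(1/u)) / (2*θ*V (1/u))) atTop (𝓝 1) :=
    part1.comp hxc
  have hlim : Tendsto (fun u : ℝ =>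
      ((H (1/(1/(s*u))) / (2*θ*V (1/(s*u)))) / (H (1/(1/u)) / (2*θ*V (1/u))))
        * (V (1/(s*u)) / V (1/u))) atTop (𝓝 1) := by
    have := (hφs.div hφu one_ne_zero).mul hratio
    simpa using this
  apply Tendsto.congr' _ hlim
  filter_upwards [eventually_gt_atTop 0, hxc.eventually (hmain 1 one_pos),
    hxcs.eventually (hmain 1 one_pos), hxc.eventually hHpos,
    hxcs.eventually hHpos] with u hu h1u h1su hHu hHsu
  have hsu : 0 < s*u := by positivity
  have e1 : (1:ℝ)/(1/u) = u := one_div_one_div u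
  have e2 : (1:ℝ)/(1/(s*u)) = s*u := one_div_one_div (s*u)
  rw [e1] at h1u hHu
  rw [e2] at h1su hHsu
  rw [e1, e2]
  have hVu : 0 < V (1/u) := lt_of_lt_of_le one_pos h1u.2
  have hVsu : 0 < V (1/(s*u)) := lt_of_lt_of_le one_pos h1su.2
  have hHune : H u ≠ 0 := ne_of_gt hHu
  have hVune : V (1/u) ≠ 0 := ne_of_gt hVu
  have hVsune : V (1/(s*u)) ≠ 0 := ne_of_gt hVsu
  have hθne : θ ≠ 0 := ne_of_gt hθpos
  field_simp
end
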